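/- arXiv:2204.11564 — 8 statements merged into one kernel-verified Lean document; each statement's English description precedes it below -/
import Mathlib

section
/- Exact dual reformulation of the MMD-DRCCP constraint (Proposition 1). Fix a decision x and suppose f(x,·) : Ξ → ℝ is Borel measurable and the set {ξ ∈ Ξ : f(x,ξ) > 0} is open (so that the indicator 𝟙(f(x,·)>0) is lower semicontinuous). Let Ξ be a compact metric space, φ : Ξ → H continuous, and ε > 0. Then sup over all probability measures P on Ξ with MMD(P, P̂_N) ≤ ε of P{ξ : f(x,ξ) > 0} equals the minimum, over all g₀ ∈ ℝ and g ∈ H satisfying 𝟙(f(x,ξ)>0) ≤ g₀ + ⟨g, φ(ξ)⟩_H for every ξ ∈ Ξ, of g₀ + (1/N)∑_{i=1}^N ⟨g, φ(ξ_i)⟩_H + ε‖g‖_H, and this minimum is attained. Consequently, inf_{P∈𝒫} P{ξ : f(x,ξ) ≤ 0} ≥ 1−α holds if and only if there exist g₀ ∈ ℝ and g ∈ H with 𝟙(f(x,ξ)>0) ≤ g₀ + ⟨g, φ(ξ)⟩_H for all ξ ∈ Ξ and g₀ + (1/N)∑_{i=1}^N ⟨g, φ(ξ_i)⟩_H + ε‖g‖_H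 ≤ α. -/
open MeasureTheory RealInnerProductSpace
open scoped ENNReal

section Mix
variable {Ξ : Type*} [MetricSpace Ξ] [CompactSpace Ξ] [MeasurableSpace Ξ] [BorelSpace Ξ]
variable {H : Type*} [NormedAddCommGroup H] [InnerProductSpace ℝ H] [CompleteSpace H]

set_option linter.unusedSectionVars false

/-- mixture of Dirac measures -/
noncomputable def mixM {ι : Type*} (t : Finset ι) (w : ι → ℝ) (z : ι → Ξ) : Measure Ξ :=
  ∑ i ∈ t, ENNReal.ofReal (w i) • Measure.dirac (z i)

lemma mixM_prob {ι : Type*} {t : Finset ι} {w : ι → ℝ} {z : ι → Ξ}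
    (h0 : ∀ i ∈ t, 0 ≤ w i) (h1 : ∑ i ∈ t, w i = 1) :
    IsProbabilityMeasure (mixM t w z) := by
  constructor
  rw [mixM, Measure.finset_sum_apply]
  simp only [Measure.smul_apply, MeasureTheory.measure_univ, smul_eq_mul, mul_one]
  rw [← ENNReal.ofReal_sum_of_nonneg h0, h1, ENNReal.ofReal_one]

lemma mixM_apply {ι : Type*} {t : Finset ι} {w : ι → ℝ} {z : ι → Ξ}
    (h0 : ∀ i ∈ t, 0 ≤ w i) {A : Set Ξ} (hA : MeasurableSet A) :
    ((mixM t w z) A).toReal = ∑ i ∈ t, w i * A.indicator (fun _ => (1:ℝ)) (z i) := by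
  rw [mixM, Measure.finset_sum_apply]
  rw [ENNReal.toReal_sum]
  · refine Finset.sum_congr rfl fun i hi => ?_
    rw [Measure.smul_apply, Measure.dirac_apply' _ hA]
    by_cases h : z i ∈ A
    · simp [Set.indicator_of_mem h, ENNReal.toReal_ofReal (h0 i hi)]
    · simp [Set.indicator_of_notMem h]
  · intro i hi
    rw [Measure.smul_apply, Measure.dirac_apply' _ hA]
    by_cases h : z i ∈ A
    · simp [Set.indicator_of_mem h]
    · simp [Set.indicator_of_notMem h]

lemma mixM_integral {ι : Type*} {t : Finset ι} {w : ι → ℝ} {z : ι → Ξ}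
    (h0 : ∀ i ∈ t, 0 ≤ w i) (φ : Ξ → H) (hφ : Continuous φ) :
    ∫ ξ, φ ξ ∂(mixM t w z) = ∑ i ∈ t, w i • φ (z i) := by
  have hsm : StronglyMeasurable φ := by
    borelize H
    rw [stronglyMeasurable_iff_measurable_separable]
    refine ⟨hφ.measurable, ?_⟩
    rw [← Set.image_univ]
    exact (isCompact_univ.image hφ).isSeparable
  rw [mixM, integral_finset_sum_measure ?_]
  · refine Finset.sum_congr rfl fun i hi => ?_
    rw [integral_smul_measure, integral_dirac' _ _ hsm,
      ENNReal.toReal_ofReal (h0 i hi)]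
  · intro i hi
    refine Integrable.smul_measure ?_ ENNReal.ofReal_ne_top
    refine ⟨hsm.aestronglyMeasurable, ?_⟩
    rw [HasFiniteIntegral, lintegral_dirac' _ (f := fun a => ‖φ a‖ₑ) ((hφ.nnnorm.measurable).coe_nnreal_ennreal)]
    exact ENNReal.coe_lt_top
end Mix


/-- Exact dual reformulation of the MMD-DRCCP constraint (Proposition 1).
`f` plays the role of `f(x, ·)` for a fixed decision `x`; `g ∈ H` is identified
with the function `ξ ↦ ⟪g, φ ξ⟫`; the MMD ambiguity set is the ball of radius `ε`
around the empirical measure of the sample `ξs`, measured via the kernel mean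
embeddings `∫ φ dP` and `(1/N) ∑ i, φ (ξs i)`. -/
theorem exact_dual_reformulation_MMD_DRCCP
    {Ξ : Type*} [MetricSpace Ξ] [CompactSpace Ξ] [MeasurableSpace Ξ] [BorelSpace Ξ]
    {H : Type*} [NormedAddCommGroup H] [InnerProductSpace ℝ H] [CompleteSpace H]
    (φ : Ξ → H) (hφ : Continuous φ)
    (f : Ξ → ℝ) (hfm : Measurable f) (hfopen : IsOpen {ξ : Ξ | 0 < f ξ})
    {N : ℕ} (hN : 0 < N) (ξs : Fin N → Ξ)
    (ε : ℝ) (hε : 0 < ε) (α : ℝ) (hα : α ∈ Set.Ioo (0 : ℝ) 1) :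
    -- (1) the worst-case probability equals the attained minimum of the dual program
    (∃ g₀ : ℝ, ∃ g : H,
      (∀ ξ : Ξ, (if 0 < f ξ then (1 : ℝ) else 0) ≤ g₀ + ⟪g, φ ξ⟫) ∧
      g₀ + (N : ℝ)⁻¹ * ∑ i, ⟪g, φ (ξs i)⟫ + ε * ‖g‖
        = sSup {r : ℝ | ∃ P : Measure Ξ, IsProbabilityMeasure P ∧
            ‖(∫ ξ, φ ξ ∂P) - (N : ℝ)⁻¹ • ∑ i, φ (ξs i)‖ ≤ ε ∧
            r = (P {ξ : Ξ | 0 < f ξ}).toReal} ∧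
      (∀ g₀' : ℝ, ∀ g' : H,
        (∀ ξ : Ξ, (if 0 < f ξ then (1 : ℝ) else 0) ≤ g₀' + ⟪g', φ ξ⟫) →
        g₀ + (N : ℝ)⁻¹ * ∑ i, ⟪g, φ (ξs i)⟫ + ε * ‖g‖
          ≤ g₀' + (N : ℝ)⁻¹ * ∑ i, ⟪g', φ (ξs i)⟫ + ε * ‖g'‖))
    ∧
    -- (2) consequently, the DR chance constraint holds iff the dual program is feasible
    -- with value at most α
    ((∀ P : Measure Ξ, IsProbabilityMeasure P →
        ‖(∫ ξ, φ ξ ∂P) - (N : ℝ)⁻¹ • ∑ i, φ (ξs i)‖ ≤ ε →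
        1 - α ≤ (P {ξ : Ξ | f ξ ≤ 0}).toReal) ↔
      (∃ g₀ : ℝ, ∃ g : H,
        (∀ ξ : Ξ, (if 0 < f ξ then (1 : ℝ) else 0) ≤ g₀ + ⟪g, φ ξ⟫) ∧
        g₀ + (N : ℝ)⁻¹ * ∑ i, ⟪g, φ (ξs i)⟫ + ε * ‖g‖ ≤ α)) := by
  classical
  obtain ⟨hα0, hα1⟩ := hα
  haveI : Nonempty Ξ := ⟨ξs ⟨0, hN⟩⟩
  have hNne : (N : ℝ) ≠ 0 := Nat.cast_ne_zero.2 hN.ne'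
  set A : Set Ξ := {ξ | 0 < f ξ} with hAdef
  have hAmeas : MeasurableSet A := hfopen.measurableSet
  set μhat : H := (N : ℝ)⁻¹ • ∑ i, φ (ξs i) with hμhat
  set ind : Ξ → ℝ := fun ξ => if 0 < f ξ then 1 else 0 with hind
  have hindA : ∀ ξ, ind ξ = A.indicator (fun _ => (1:ℝ)) ξ := fun ξ => by
    simp [hind, Set.indicator_apply, hAdef, Set.mem_setOf_eq]
  set S : Set ℝ := {r | ∃ P : Measure Ξ, IsProbabilityMeasure P ∧
      ‖(∫ ξ, φ ξ ∂P) - μhat‖ ≤ ε ∧ r = (P A).toReal} with hS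
  -- integrability of φ
  have hintφ : ∀ (P : Measure Ξ), IsProbabilityMeasure P → Integrable φ P := by
    intro P hP
    haveI := hP
    rw [← integrableOn_univ]
    exact hφ.continuousOn.integrableOn_compact isCompact_univ
  -- empirical measure
  set Phat : Measure Ξ := mixM (Finset.univ : Finset (Fin N)) (fun _ => (N:ℝ)⁻¹) ξs with hPhat
  have hw0 : ∀ i ∈ (Finset.univ : Finset (Fin N)), (0:ℝ) ≤ (N:ℝ)⁻¹ :=
    fun i _ => by positivity
  have hw1 : ∑ _i ∈ (Finset.univ : Finset (Fin N)), (N:ℝ)⁻¹ = 1 := by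
    simp [Finset.sum_const, hNne]
  have hPhatProb : IsProbabilityMeasure Phat := mixM_prob hw0 hw1
  have hPhatInt : ∫ ξ, φ ξ ∂Phat = μhat := by
    rw [hPhat, mixM_integral hw0 φ hφ, hμhat, Finset.smul_sum]
  have hSne : S.Nonempty := by
    exact ⟨(Phat A).toReal, Phat, hPhatProb, by rw [hPhatInt]; simp [hε.le], rfl⟩
  have hSub1 : ∀ r ∈ S, r ≤ 1 := by
    rintro r ⟨P, hP, -, rfl⟩
    haveI := hP
    have h1 : P A ≤ 1 := prob_le_one
    calc (P A).toReal ≤ (1:ℝ≥0∞).toReal := ENNReal.toReal_mono ENNReal.one_ne_top h1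
      _ = 1 := by simp
  have hbdd : BddAbove S := ⟨1, fun r hr => hSub1 r hr⟩
  have hinner_mu : ∀ g : H, ⟪g, μhat⟫ = (N:ℝ)⁻¹ * ∑ i, ⟪g, φ (ξs i)⟫ := by
    intro g
    rw [hμhat, real_inner_smul_right, inner_sum]
  -- weak duality
  have hweak : ∀ (g₀ : ℝ) (g : H), (∀ ξ, ind ξ ≤ g₀ + ⟪g, φ ξ⟫) →
      ∀ r ∈ S, r ≤ g₀ + (N:ℝ)⁻¹ * ∑ i, ⟪g, φ (ξs i)⟫ + ε * ‖g‖ := by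
    rintro g₀ g hfeas r ⟨P, hP, hPball, rfl⟩
    haveI := hP
    have hint := hintφ P hP
    have hind_int : Integrable ind P := by
      have : Integrable (A.indicator (fun _ => (1:ℝ))) P :=
        (integrable_const (1:ℝ)).indicator hAmeas
      exact this.congr (Filter.Eventually.of_forall fun ξ => (hindA ξ).symm)
    have hg_int : Integrable (fun ξ => g₀ + ⟪g, φ ξ⟫) P :=
      (integrable_const g₀).add (hint.const_inner g)
    have h1 : (P A).toReal = ∫ ξ, ind ξ ∂P := by
      rw [integral_congr_ae (Filter.Eventually.of_forall hindA),
        integral_indicator_const (1:ℝ) hAmeas]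
      simp
      rfl
    have h2 : ∫ ξ, ind ξ ∂P ≤ ∫ ξ, g₀ + ⟪g, φ ξ⟫ ∂P :=
      integral_mono hind_int hg_int hfeas
    have h3 : ∫ ξ, (g₀ + ⟪g, φ ξ⟫) ∂P = g₀ + ⟪g, ∫ ξ, φ ξ ∂P⟫ := by
      rw [integral_add (integrable_const g₀) (hint.const_inner g), integral_const,
        integral_inner hint]
      simp
    have h4 : ⟪g, (∫ ξ, φ ξ ∂P) - μhat⟫ ≤ ε * ‖g‖ := by
      calc ⟪g, (∫ ξ, φ ξ ∂P) - μhat⟫ ≤ ‖g‖ * ‖(∫ ξ, φ ξ ∂P) - μhat‖ := real_inner_le_norm _ _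
        _ ≤ ‖g‖ * ε := mul_le_mul_of_nonneg_left hPball (norm_nonneg g)
        _ = ε * ‖g‖ := mul_comm _ _
    have h5 : ⟪g, (∫ ξ, φ ξ ∂P) - μhat⟫ = ⟪g, ∫ ξ, φ ξ ∂P⟫ - ⟪g, μhat⟫ :=
      inner_sub_right _ _ _
    have h6 := hinner_mu g
    rw [h1]
    calc ∫ ξ, ind ξ ∂P ≤ g₀ + ⟪g, ∫ ξ, φ ξ ∂P⟫ := h3 ▸ h2
      _ ≤ g₀ + ⟪g, μhat⟫ + ε * ‖g‖ := by linarith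
      _ = g₀ + (N:ℝ)⁻¹ * ∑ i, ⟪g, φ (ξs i)⟫ + ε * ‖g‖ := by rw [h6]
  -- separation argument
  set Γ : Set (H × ℝ) := Set.range (fun ξ : Ξ => (φ ξ - μhat, ind ξ)) with hΓ
  set U : Set (H × ℝ) := Metric.ball (0:H) ε ×ˢ Set.Ioi (sSup S) with hUdef
  have hUopen : IsOpen U := (Metric.isOpen_ball).prod isOpen_Ioi
  have hUconv : Convex ℝ U := (convex_ball 0 ε).prod (convex_Ioi _)
  have hmemU : ∀ (v : H) (s : ℝ), ‖v‖ < ε → sSup S < s → (v, s) ∈ U := by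
    intro v s hv hs
    exact ⟨by simpa [Metric.mem_ball, dist_zero_right] using hv, hs⟩
  have hhull : ∀ p ∈ convexHull ℝ Γ, ‖p.1‖ ≤ ε → p.2 ∈ S := by
    intro p hp hpball
    rw [convexHull_eq] at hp
    obtain ⟨ι, t, w, z, hw0', hw1', hzΓ, hcm⟩ := hp
    have hζ : ∀ i ∈ t, ∃ ξ : Ξ, (φ ξ - μhat, ind ξ) = z i := fun i hi => hzΓ i hi
    choose! ζ hζeq using hζ
    have hcm' : p = ∑ i ∈ t, w i • (φ (ζ i) - μhat, ind (ζ i)) := by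
      rw [← hcm, Finset.centerMass_eq_of_sum_1 _ _ hw1']
      exact (Finset.sum_congr rfl fun i hi => by rw [hζeq i hi]).symm
    have hp1 : p.1 = (∑ i ∈ t, w i • φ (ζ i)) - μhat := by
      rw [hcm', Prod.fst_sum]
      simp only [Prod.smul_mk]
      simp only [smul_sub]
      rw [Finset.sum_sub_distrib, ← Finset.sum_smul, hw1', one_smul]
    have hp2 : p.2 = ∑ i ∈ t, w i * ind (ζ i) := by
      rw [hcm', Prod.snd_sum]
      simp [smul_eq_mul]
    refine ⟨mixM t w ζ, mixM_prob hw0' hw1', ?_, ?_⟩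
    · rw [mixM_integral hw0' φ hφ]
      rw [hp1] at hpball
      exact hpball
    · rw [mixM_apply hw0' hAmeas, hp2]
      exact Finset.sum_congr rfl fun i hi => by rw [hindA]
  have hdisj : Disjoint U (convexHull ℝ Γ) := by
    rw [Set.disjoint_left]
    rintro p ⟨hp1, hp2⟩ hpT
    have hm : p.2 ∈ S := by
      refine hhull p hpT (le_of_lt ?_)
      simpa [Metric.mem_ball, dist_zero_right] using hp1
    exact absurd (le_csSup hbdd hm) (not_le.2 hp2)
  obtain ⟨F, u, hFU, hFT⟩ :=
    geometric_hahn_banach_open hUconv hUopen (convex_convexHull ℝ Γ) hdisj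
  set b : ℝ := F (0, 1) with hbdefn
  have hF00 : F ((0:H), (0:ℝ)) = 0 := by
    have : ((0:H), (0:ℝ)) = (0 : H × ℝ) := rfl
    rw [this, map_zero]
  have hFsplit : ∀ (v : H) (s : ℝ), F (v, s) = F (v, 0) + s * b := by
    intro v s
    have h : (v, s) = (v, (0:ℝ)) + s • ((0:H), (1:ℝ)) := by
      simp [Prod.ext_iff]
    rw [h, map_add, F.map_smul, smul_eq_mul, hbdefn]
  -- the linear part and its Riesz representative
  set a : H := (InnerProductSpace.toDual ℝ H).symm (F.comp (ContinuousLinearMap.inl ℝ H ℝ)) with hadef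
  have ha : ∀ v : H, ⟪a, v⟫ = F (v, 0) := by
    intro v
    rw [hadef, InnerProductSpace.toDual_symm_apply]
    rfl
  have hb_le : b ≤ 0 := by
    by_contra hb0
    push_neg at hb0
    have h1 : ∀ s : ℝ, sSup S < s → s * b < u := by
      intro s hs
      have := hFU (0, s) (hmemU 0 s (by simpa using hε) hs)
      rwa [hFsplit, hF00, zero_add] at this
    have hs1 : sSup S < max (sSup S + 1) (u / b + 1) :=
      lt_of_lt_of_le (lt_add_one _) (le_max_left _ _)
    have hs2 : u / b < max (sSup S + 1) (u / b + 1) :=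
      lt_of_lt_of_le (lt_add_one _) (le_max_right _ _)
    rw [div_lt_iff₀ hb0] at hs2
    exact absurd (h1 _ hs1) (not_lt.2 hs2.le)
  -- empirical point of the hull
  have hempir : ((0:H), (Phat A).toReal) ∈ convexHull ℝ Γ := by
    have hmem := Finset.centerMass_mem_convexHull (s := Γ) (Finset.univ : Finset (Fin N))
      (w := fun _ => (N:ℝ)⁻¹) (z := fun i => ((φ (ξs i) - μhat, ind (ξs i)) : H × ℝ))
      hw0 (by rw [hw1]; norm_num) (fun i _ => Set.mem_range.2 ⟨ξs i, rfl⟩)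
    have hcm : (Finset.univ : Finset (Fin N)).centerMass (fun _ => (N:ℝ)⁻¹)
        (fun i => ((φ (ξs i) - μhat, ind (ξs i)) : H × ℝ)) = ((0:H), (Phat A).toReal) := by
      rw [Finset.centerMass_eq_of_sum_1 _ _ hw1]
      refine Prod.ext ?_ ?_
      · rw [Prod.fst_sum]
        simp only [Prod.smul_mk]
        simp only [smul_sub]
        rw [Finset.sum_sub_distrib, ← Finset.sum_smul, hw1, one_smul, ← Finset.smul_sum,
          ← hμhat, sub_self]
      · rw [Prod.snd_sum]
        simp only [Prod.smul_mk, smul_eq_mul]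
        rw [hPhat, mixM_apply hw0 hAmeas]
        exact (Finset.sum_congr rfl fun i _ => by rw [hindA]).symm
    rwa [hcm] at hmem
  have hbne : b ≠ 0 := by
    intro h0
    have h1 := hFT _ hempir
    rw [hFsplit, hF00, h0, mul_zero, add_zero] at h1
    have h2 := hFU (0, sSup S + 1) (hmemU 0 (sSup S + 1) (by simpa using hε) (lt_add_one _))
    rw [hFsplit, hF00, h0, mul_zero, add_zero] at h2
    linarith
  have hbneg : b < 0 := lt_of_le_of_ne hb_le hbne
  set c : ℝ := (-b)⁻¹ with hcdef
  have hc : 0 < c := inv_pos.2 (neg_pos.2 hbneg)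
  have hcb : c * (-b) = 1 := inv_mul_cancel₀ (by linarith)
  set g : H := c • a with hgdef
  set g₀ : ℝ := -(u * c) - ⟪g, μhat⟫ with hg₀def
  have hinner_g : ∀ v : H, ⟪g, v⟫ = c * ⟪a, v⟫ := fun v => real_inner_smul_left _ _ _
  -- dual feasibility
  have hfeas : ∀ ξ : Ξ, ind ξ ≤ g₀ + ⟪g, φ ξ⟫ := by
    intro ξ
    have h1 : u ≤ F (φ ξ - μhat, ind ξ) := hFT _ (subset_convexHull ℝ Γ ⟨ξ, rfl⟩)
    rw [hFsplit, ← ha, inner_sub_right] at h1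
    rw [hg₀def, hinner_g (φ ξ), hinner_g μhat]
    have hcb' : c * b = -1 := by linarith [hcb]
    have h3 : c * (ind ξ * b) = -(ind ξ) := by
      rw [show c * (ind ξ * b) = (c * b) * ind ξ from by ring, hcb']
      ring
    linarith [mul_le_mul_of_nonneg_left h1 hc.le, h3]
  -- norm bound from the ball side
  have hball : ∀ v : H, ‖v‖ < ε → ⟪a, v⟫ + b * sSup S ≤ u := by
    intro v hv
    have h1 : ∀ δ : ℝ, 0 < δ → ⟪a, v⟫ + b * (sSup S + δ) < u := by
      intro δ hδ
      have := hFU (v, sSup S + δ) (hmemU v _ hv (lt_add_of_pos_right _ hδ))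
      rw [hFsplit, ← ha] at this
      linarith
    by_contra hcon
    push_neg at hcon
    set δ := (⟪a, v⟫ + b * sSup S - u) / (2 * (-b)) with hδdef
    have hδpos : 0 < δ := div_pos (by linarith) (by linarith)
    have hbδ : b * δ = -((⟪a, v⟫ + b * sSup S - u) / 2) := by
      rw [hδdef]; field_simp
    have := h1 δ hδpos
    rw [mul_add, hbδ] at this
    linarith
  have hnorm : ε * ‖a‖ ≤ u - b * sSup S := by
    rcases eq_or_ne a 0 with h0 | h0
    · have := hball 0 (by simpa using hε)
      simp only [inner_zero_right, zero_add] at this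
      simp [h0]
      linarith
    · have hna : 0 < ‖a‖ := norm_pos_iff.2 h0
      have key : ∀ r : ℝ, 0 ≤ r → r < ε → r * ‖a‖ + b * sSup S ≤ u := by
        intro r hr0 hrε
        have hv : ‖(r / ‖a‖) • a‖ < ε := by
          rw [norm_smul, Real.norm_eq_abs, abs_of_nonneg (div_nonneg hr0 hna.le),
            div_mul_cancel₀ _ hna.ne']
          exact hrε
        have h2 := hball _ hv
        have h3 : ⟪a, (r / ‖a‖) • a⟫ = r * ‖a‖ := by
          rw [real_inner_smul_right, real_inner_self_eq_norm_mul_norm]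
          field_simp
        rw [h3] at h2
        exact h2
      by_contra hcon
      push_neg at hcon
      set gap := ε * ‖a‖ - (u - b * sSup S) with hgap
      have hgappos : 0 < gap := by rw [hgap]; linarith
      set r := max 0 (ε - gap / (2 * ‖a‖)) with hrdef
      have hr0 : 0 ≤ r := le_max_left _ _
      have hrε : r < ε := by
        apply max_lt hε
        have : 0 < gap / (2 * ‖a‖) := div_pos hgappos (by linarith)
        linarith
      have h4 := key r hr0 hrε
      have h5 : (ε - gap / (2 * ‖a‖)) * ‖a‖ = ε * ‖a‖ - gap / 2 := by
        field_simp
      have h6 : (ε - gap / (2 * ‖a‖)) * ‖a‖ ≤ r * ‖a‖ :=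
        mul_le_mul_of_nonneg_right (le_max_right _ _) hna.le
      rw [h5] at h6
      linarith [hgap, h4, h6, hgappos]
  -- the value of the dual solution is at most the sup
  have hval_le : g₀ + (N:ℝ)⁻¹ * ∑ i, ⟪g, φ (ξs i)⟫ + ε * ‖g‖ ≤ sSup S := by
    rw [← hinner_mu g]
    have h2 : ‖g‖ = c * ‖a‖ := by
      rw [hgdef, norm_smul, Real.norm_eq_abs, abs_of_pos hc]
    rw [hg₀def, h2]
    have hcbs : c * (-b) * sSup S = sSup S := by rw [hcb]; ring
    linarith [mul_le_mul_of_nonneg_left hnorm hc.le, hcbs]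
  have hs_le_val : sSup S ≤ g₀ + (N:ℝ)⁻¹ * ∑ i, ⟪g, φ (ξs i)⟫ + ε * ‖g‖ :=
    csSup_le hSne (hweak g₀ g hfeas)
  have hval_eq : g₀ + (N:ℝ)⁻¹ * ∑ i, ⟪g, φ (ξs i)⟫ + ε * ‖g‖ = sSup S :=
    le_antisymm hval_le hs_le_val
  -- complement computation
  have hcompl : ∀ P : Measure Ξ, IsProbabilityMeasure P →
      (P {ξ : Ξ | f ξ ≤ 0}).toReal = 1 - (P A).toReal := by
    intro P hP
    haveI := hP
    have hsetc : {ξ : Ξ | f ξ ≤ 0} = Aᶜ := by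
      ext ξ
      simp [hAdef, not_lt]
    rw [hsetc, measure_compl hAmeas (measure_ne_top P A), measure_univ,
      ENNReal.toReal_sub_of_le prob_le_one ENNReal.one_ne_top]
    simp
  refine ⟨⟨g₀, g, hfeas, hval_eq, ?_⟩, ?_, ?_⟩
  · intro g₀' g' hfeas'
    rw [hval_eq]
    exact csSup_le hSne (hweak g₀' g' hfeas')
  · intro hLHS
    refine ⟨g₀, g, hfeas, ?_⟩
    rw [hval_eq]
    refine csSup_le hSne ?_
    rintro r ⟨P, hP, hPball, rfl⟩
    have h1 := hLHS P hP hPball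
    rw [hcompl P hP] at h1
    linarith
  · rintro ⟨g₀', g', hfeas', hle⟩ P hP hball'
    have hr : (P A).toReal ∈ S := ⟨P, hP, hball', rfl⟩
    have := hweak g₀' g' hfeas' _ hr
    rw [hcompl P hP]
    linarith
end

section
/- Minimax exchange for the distributionally robust CVaR (Lemma 1). Let Ξ be a compact metric space, φ : Ξ → H continuous (hence the kernel k is bounded and continuous and the MMD ball 𝒫 is weakly compact), ε > 0, α ∈ (0,1), and let f(x,·) : Ξ → ℝ be Borel measurable and bounded on Ξ. Then sup_{P∈𝒫} inf_{t∈ℝ} ( E_P[(f(x,ξ)+t)_+] − tα ) = inf_{t∈ℝ} sup_{P∈𝒫} ( E_P[(f(x,ξ)+t)_+] − tα ), where (·)_+ = max(0,·). -/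
open MeasureTheory ENNReal

namespace DRCVaR

variable {Ξ : Type*} [MeasurableSpace Ξ]

/-- The inner CVaR objective. -/
noncomputable def g (f : Ξ → ℝ) (α : ℝ) (P : Measure Ξ) (t : ℝ) : ℝ :=
  ∫ ξ, max (f ξ + t) 0 ∂P - t * α

variable {f : Ξ → ℝ} {M : ℝ}

lemma integrable_max (hfm : Measurable f) (hfb : ∀ ξ, |f ξ| ≤ M)
    (P : Measure Ξ) [IsFiniteMeasure P] (t : ℝ) :
    Integrable (fun ξ => max (f ξ + t) 0) P := by
  refine (integrable_const (M + |t|)).mono'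
    ((hfm.add_const t).max measurable_const).aestronglyMeasurable ?_
  filter_upwards with ξ
  rw [Real.norm_eq_abs, abs_of_nonneg (le_max_right _ _)]
  have h1 := hfb ξ
  have h2 : f ξ + t ≤ M + |t| := by
    have ha := abs_le.1 h1
    have hb := le_abs_self t
    linarith [ha.2]
  have h3 : (0:ℝ) ≤ M + |t| := by
    have := (abs_nonneg (f ξ)).trans h1
    positivity
  exact max_le h2 h3

lemma integrable_f (hfm : Measurable f) (hfb : ∀ ξ, |f ξ| ≤ M)
    (P : Measure Ξ) [IsFiniteMeasure P] : Integrable f P := by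
  refine (integrable_const M).mono' hfm.aestronglyMeasurable ?_
  filter_upwards with ξ using by rw [Real.norm_eq_abs]; exact hfb ξ

lemma intf_ge (hfm : Measurable f) (hfb : ∀ ξ, |f ξ| ≤ M)
    (P : Measure Ξ) [IsProbabilityMeasure P] : -M ≤ ∫ ξ, f ξ ∂P := by
  have : ∫ _ : Ξ, (-M) ∂P ≤ ∫ ξ, f ξ ∂P := by
    refine integral_mono (integrable_const _) (integrable_f hfm hfb P) fun ξ => ?_
    exact (abs_le.1 (hfb ξ)).1
  simpa using this

lemma intf_le (hfm : Measurable f) (hfb : ∀ ξ, |f ξ| ≤ M)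
    (P : Measure Ξ) [IsProbabilityMeasure P] : ∫ ξ, f ξ ∂P ≤ M := by
  have : ∫ ξ, f ξ ∂P ≤ ∫ _ : Ξ, M ∂P := by
    refine integral_mono (integrable_f hfm hfb P) (integrable_const _) fun ξ => ?_
    exact (abs_le.1 (hfb ξ)).2
  simpa using this

lemma g_le {α : ℝ} (hα0 : 0 ≤ α) (hfm : Measurable f) (hfb : ∀ ξ, |f ξ| ≤ M)
    (P : Measure Ξ) [IsProbabilityMeasure P] (t : ℝ) :
    g f α P t ≤ M + |t| + |t| * α := by
  have h1 : ∫ ξ, max (f ξ + t) 0 ∂P ≤ M + |t| := by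
    have : ∫ ξ, max (f ξ + t) 0 ∂P ≤ ∫ _ : Ξ, (M + |t|) ∂P := by
      refine integral_mono (integrable_max hfm hfb P t) (integrable_const _) fun ξ => ?_
      have h1 := abs_le.1 (hfb ξ)
      have := le_abs_self t
      have h3 : (0:ℝ) ≤ M + |t| := by
        have := (abs_nonneg (f ξ)).trans (hfb ξ); positivity
      exact max_le (by linarith [h1.2]) h3
    simpa using this
  have h2 : -(t * α) ≤ |t| * α := by
    have := neg_abs_le t
    nlinarith [abs_nonneg t]
  unfold g; linarith

lemma g_ge {α : ℝ} (hα0 : 0 ≤ α) (hα1 : α ≤ 1) (hM : 0 ≤ M)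
    (hfm : Measurable f) (hfb : ∀ ξ, |f ξ| ≤ M)
    (P : Measure Ξ) [IsProbabilityMeasure P] (t : ℝ) : -M ≤ g f α P t := by
  unfold g
  rcases le_or_gt 0 t with ht | ht
  · have h1 : ∫ ξ, f ξ ∂P + t ≤ ∫ ξ, max (f ξ + t) 0 ∂P := by
      have : ∫ ξ, (f ξ + t) ∂P ≤ ∫ ξ, max (f ξ + t) 0 ∂P := by
        refine integral_mono (by exact (integrable_f hfm hfb P).add (integrable_const t))
          (integrable_max hfm hfb P t) fun ξ => le_max_left _ _
      rwa [integral_add (integrable_f hfm hfb P) (integrable_const t), integral_const,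
        probReal_univ, one_smul] at this
    have h2 := intf_ge hfm hfb P
    nlinarith
  · have h1 : (0:ℝ) ≤ ∫ ξ, max (f ξ + t) 0 ∂P :=
      integral_nonneg fun ξ => le_max_right _ _
    nlinarith


lemma g_of_ge {α : ℝ} (hfm : Measurable f) (hfb : ∀ ξ, |f ξ| ≤ M)
    (P : Measure Ξ) [IsProbabilityMeasure P] {t : ℝ} (ht : M ≤ t) :
    g f α P t = ∫ ξ, f ξ ∂P + t - t * α := by
  unfold g
  have h1 : ∀ ξ, max (f ξ + t) 0 = f ξ + t := by
    intro ξ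
    have := (abs_le.1 (hfb ξ)).1
    exact max_eq_left (by linarith)
  rw [show (fun ξ => max (f ξ + t) 0) = fun ξ => f ξ + t from funext h1]
  rw [integral_add (integrable_f hfm hfb P) (integrable_const t), integral_const,
    probReal_univ, one_smul]

lemma g_of_le {α : ℝ} (hfb : ∀ ξ, |f ξ| ≤ M)
    (P : Measure Ξ) {t : ℝ} (ht : t ≤ -M) :
    g f α P t = -(t * α) := by
  unfold g
  have h1 : ∀ ξ, max (f ξ + t) 0 = 0 := by
    intro ξ
    have := (abs_le.1 (hfb ξ)).2
    exact max_eq_right (by linarith)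
  rw [show (fun ξ => max (f ξ + t) 0) = fun _ => (0:ℝ) from funext h1]
  simp

/-- projection onto [-M, M] -/
noncomputable def proj (M t : ℝ) : ℝ := max (-M) (min M t)

lemma proj_mem {M : ℝ} (hM : 0 ≤ M) (t : ℝ) : proj M t ∈ Set.Icc (-M) M := by
  constructor
  · exact le_max_left _ _
  · exact max_le (by linarith) (min_le_left _ _)

lemma g_proj {α : ℝ} (hα0 : 0 ≤ α) (hα1 : α ≤ 1) (hM : 0 ≤ M)
    (hfm : Measurable f) (hfb : ∀ ξ, |f ξ| ≤ M)
    (P : Measure Ξ) [IsProbabilityMeasure P] (t : ℝ) :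
    g f α P (proj M t) ≤ g f α P t := by
  rcases le_or_gt t (-M) with ht | ht
  · have hp : proj M t = -M := by
      unfold proj
      rw [min_eq_right (by linarith), max_eq_left (by linarith)]
    rw [hp, g_of_le hfb P le_rfl, g_of_le hfb P ht]
    nlinarith
  rcases le_or_gt M t with ht2 | ht2
  · have hp : proj M t = M := by
      unfold proj
      rw [min_eq_left ht2, max_eq_right (by linarith)]
    rw [hp, g_of_ge hfm hfb P le_rfl, g_of_ge hfm hfb P ht2]
    nlinarith
  · have hp : proj M t = t := by
      unfold proj
      rw [min_eq_right (by linarith), max_eq_right (by linarith)]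
    rw [hp]

lemma g_lip {α : ℝ} (hα0 : 0 ≤ α) (hfm : Measurable f) (hfb : ∀ ξ, |f ξ| ≤ M)
    (P : Measure Ξ) [IsProbabilityMeasure P] (t s : ℝ) :
    |g f α P t - g f α P s| ≤ (1 + α) * |t - s| := by
  unfold g
  have key : |∫ ξ, max (f ξ + t) 0 ∂P - ∫ ξ, max (f ξ + s) 0 ∂P| ≤ |t - s| := by
    rw [← integral_sub (integrable_max hfm hfb P t) (integrable_max hfm hfb P s)]
    calc |∫ ξ, (max (f ξ + t) 0 - max (f ξ + s) 0) ∂P|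
        ≤ ∫ ξ, |max (f ξ + t) 0 - max (f ξ + s) 0| ∂P := by
          exact (Real.norm_eq_abs _ ▸ norm_integral_le_integral_norm _).trans
            (le_of_eq (by simp [Real.norm_eq_abs]))
      _ ≤ ∫ _ : Ξ, |t - s| ∂P := by
          refine integral_mono ((integrable_max hfm hfb P t).sub
            (integrable_max hfm hfb P s)).abs (integrable_const _) fun ξ => ?_
          have := abs_max_sub_max_le_abs (f ξ + t) (f ξ + s) 0
          calc |max (f ξ + t) 0 - max (f ξ + s) 0| ≤ |(f ξ + t) - (f ξ + s)| := this
            _ = |t - s| := by ring_nf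
      _ = |t - s| := by simp
  have h2 : |t * α - s * α| ≤ α * |t - s| := by
    rw [← sub_mul, abs_mul, abs_of_nonneg hα0]; ring_nf; rfl
  calc |(∫ ξ, max (f ξ + t) 0 ∂P - t * α) - (∫ ξ, max (f ξ + s) 0 ∂P - s * α)|
      ≤ |∫ ξ, max (f ξ + t) 0 ∂P - ∫ ξ, max (f ξ + s) 0 ∂P| + |t * α - s * α| := by
        rw [show (∫ ξ, max (f ξ + t) 0 ∂P - t * α) - (∫ ξ, max (f ξ + s) 0 ∂P - s * α)
          = (∫ ξ, max (f ξ + t) 0 ∂P - ∫ ξ, max (f ξ + s) 0 ∂P) - (t * α - s * α) by ring]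
        exact abs_sub _ _
    _ ≤ |t - s| + α * |t - s| := add_le_add key h2
    _ = (1 + α) * |t - s| := by ring

lemma g_convexOn {α : ℝ} (hfm : Measurable f) (hfb : ∀ ξ, |f ξ| ≤ M)
    (P : Measure Ξ) [IsProbabilityMeasure P] :
    ConvexOn ℝ Set.univ (g f α P) := by
  refine ⟨convex_univ, fun x _ y _ a b ha hb hab => ?_⟩
  simp only [smul_eq_mul]
  unfold g
  have key : ∫ ξ, max (f ξ + (a * x + b * y)) 0 ∂P
      ≤ a * ∫ ξ, max (f ξ + x) 0 ∂P + b * ∫ ξ, max (f ξ + y) 0 ∂P := by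
    have h1 : ∫ ξ, max (f ξ + (a * x + b * y)) 0 ∂P
        ≤ ∫ ξ, (a * max (f ξ + x) 0 + b * max (f ξ + y) 0) ∂P := by
      refine integral_mono (integrable_max hfm hfb P _)
        (((integrable_max hfm hfb P x).const_mul a).add
          ((integrable_max hfm hfb P y).const_mul b)) fun ξ => ?_
      have hx : f ξ + x ≤ max (f ξ + x) 0 := le_max_left _ _
      have hy : f ξ + y ≤ max (f ξ + y) 0 := le_max_left _ _
      have hx0 : (0:ℝ) ≤ max (f ξ + x) 0 := le_max_right _ _
      have hy0 : (0:ℝ) ≤ max (f ξ + y) 0 := le_max_right _ _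
      refine max_le ?_ (by nlinarith)
      have : f ξ + (a * x + b * y) = a * (f ξ + x) + b * (f ξ + y) := by
        have : a * f ξ + b * f ξ = f ξ := by rw [← add_mul, hab, one_mul]
        linarith [mul_comm a (f ξ)]
      rw [this]
      exact add_le_add (mul_le_mul_of_nonneg_left hx ha) (mul_le_mul_of_nonneg_left hy hb)
    rwa [integral_add ((integrable_max hfm hfb P x).const_mul a)
      ((integrable_max hfm hfb P y).const_mul b), integral_const_mul, integral_const_mul] at h1
  have haff : (a * x + b * y) * α = a * (x * α) + b * (y * α) := by ring
  linarith


lemma isProbabilityMeasure_mix (P1 P2 : Measure Ξ)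
    [IsProbabilityMeasure P1] [IsProbabilityMeasure P2]
    {a b : ℝ} (ha : 0 ≤ a) (hb : 0 ≤ b) (hab : a + b = 1) :
    IsProbabilityMeasure (ENNReal.ofReal a • P1 + ENNReal.ofReal b • P2) := by
  constructor
  simp only [Measure.add_apply, Measure.smul_apply, measure_univ, smul_eq_mul, mul_one]
  rw [← ENNReal.ofReal_add ha hb, hab, ENNReal.ofReal_one]

lemma integral_mix {E : Type*} [NormedAddCommGroup E] [NormedSpace ℝ E]
    (P1 P2 : Measure Ξ) {a b : ℝ} (ha : 0 ≤ a) (hb : 0 ≤ b)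
    {ψ : Ξ → E} (h1 : Integrable ψ P1) (h2 : Integrable ψ P2) :
    ∫ x, ψ x ∂(ENNReal.ofReal a • P1 + ENNReal.ofReal b • P2)
      = a • ∫ x, ψ x ∂P1 + b • ∫ x, ψ x ∂P2 := by
  rw [integral_add_measure (h1.smul_measure ENNReal.ofReal_ne_top)
      (h2.smul_measure ENNReal.ofReal_ne_top),
    integral_smul_measure, integral_smul_measure,
    ENNReal.toReal_ofReal ha, ENNReal.toReal_ofReal hb]

lemma g_mix {α : ℝ} (hfm : Measurable f) (hfb : ∀ ξ, |f ξ| ≤ M)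
    (P1 P2 : Measure Ξ) [IsProbabilityMeasure P1] [IsProbabilityMeasure P2]
    {a b : ℝ} (ha : 0 ≤ a) (hb : 0 ≤ b) (hab : a + b = 1) (t : ℝ) :
    g f α (ENNReal.ofReal a • P1 + ENNReal.ofReal b • P2) t
      = a * g f α P1 t + b * g f α P2 t := by
  unfold g
  rw [integral_mix P1 P2 ha hb (integrable_max hfm hfb P1 t) (integrable_max hfm hfb P2 t)]
  simp only [smul_eq_mul]
  linear_combination (t * α) * hab


lemma g_continuous {α : ℝ} (hα0 : 0 ≤ α) (hfm : Measurable f) (hfb : ∀ ξ, |f ξ| ≤ M)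
    (P : Measure Ξ) [IsProbabilityMeasure P] : Continuous (g f α P) := by
  have : LipschitzWith (Real.toNNReal (1 + α)) (g f α P) := by
    apply LipschitzWith.of_dist_le_mul
    intro x y
    rw [Real.dist_eq, Real.dist_eq]
    calc |g f α P x - g f α P y| ≤ (1 + α) * |x - y| := g_lip hα0 hfm hfb P x y
      _ = (Real.toNNReal (1 + α) : ℝ) * |x - y| := by
          rw [Real.coe_toNNReal _ (by linarith)]
  exact this.continuous

lemma lt_comb {x y l w : ℝ} (h0 : 0 ≤ l) (h1 : l ≤ 1) (hx : w < x) (hy : w < y) :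
    w < l * x + (1 - l) * y := by
  have key : l * w + (1 - l) * w = w := by ring
  rcases eq_or_lt_of_le h0 with h | h
  · rw [← h]; linarith [hy]
  · have a1 : l * w < l * x := mul_lt_mul_of_pos_left hx h
    have a2 : (1 - l) * w ≤ (1 - l) * y :=
      mul_le_mul_of_nonneg_left hy.le (by linarith : (0:ℝ) ≤ 1 - l)
    linarith

lemma convexOn_comb {F1 F2 : ℝ → ℝ} (h1 : ConvexOn ℝ Set.univ F1)
    (h2 : ConvexOn ℝ Set.univ F2) {l : ℝ} (hl0 : 0 ≤ l) (hl1 : l ≤ 1) :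
    ConvexOn ℝ Set.univ (fun t => l * F1 t + (1 - l) * F2 t) := by
  refine ⟨convex_univ, fun x _ y _ a b ha hb hab => ?_⟩
  have e1 := h1.2 (Set.mem_univ x) (Set.mem_univ y) ha hb hab
  have e2 := h2.2 (Set.mem_univ x) (Set.mem_univ y) ha hb hab
  simp only [smul_eq_mul] at *
  have c1 := mul_le_mul_of_nonneg_left e1 hl0
  have c2 := mul_le_mul_of_nonneg_left e2 (by linarith : (0:ℝ) ≤ 1 - l)
  calc l * F1 (a * x + b * y) + (1 - l) * F2 (a * x + b * y)
      ≤ l * (a * F1 x + b * F1 y) + (1 - l) * (a * F2 x + b * F2 y) := by linarith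
    _ = a * (l * F1 x + (1 - l) * F2 x) + b * (l * F1 y + (1 - l) * F2 y) := by ring



theorem minimax {f : Ξ → ℝ} {M α : ℝ} (hfm : Measurable f) (hfb : ∀ ξ, |f ξ| ≤ M)
    (hM : 0 ≤ M) (hα0 : 0 ≤ α) (hα1 : α ≤ 1)
    (𝒮 : Set (Measure Ξ)) (hne : 𝒮.Nonempty)
    (hprob : ∀ P ∈ 𝒮, IsProbabilityMeasure P)
    (hconv : ∀ P ∈ 𝒮, ∀ Q ∈ 𝒮, ∀ a b : ℝ, 0 ≤ a → 0 ≤ b → a + b = 1 →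
      (ENNReal.ofReal a • P + ENNReal.ofReal b • Q) ∈ 𝒮) :
    sSup {r | ∃ P ∈ 𝒮, r = ⨅ t, g f α P t}
      = ⨅ t, sSup {r | ∃ P ∈ 𝒮, r = g f α P t} := by
  obtain ⟨P₀, hP₀⟩ := hne
  have hrange : ∀ P ∈ 𝒮, BddBelow (Set.range fun t => g f α P t) := by
    intro P hP
    haveI := hprob P hP
    exact ⟨-M, by rintro r ⟨t, rfl⟩; exact g_ge hα0 hα1 hM hfm hfb P t⟩
  have hiInf_le : ∀ P ∈ 𝒮, ∀ t, (⨅ s, g f α P s) ≤ g f α P t :=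
    fun P hP t => ciInf_le (hrange P hP) t
  have hStne : ∀ t : ℝ, {r | ∃ P ∈ 𝒮, r = g f α P t}.Nonempty := fun t => ⟨_, P₀, hP₀, rfl⟩
  have hStbdd : ∀ t : ℝ, BddAbove {r | ∃ P ∈ 𝒮, r = g f α P t} := by
    intro t
    refine ⟨M + |t| + |t| * α, ?_⟩
    rintro r ⟨P, hP, rfl⟩
    haveI := hprob P hP
    exact g_le hα0 hfm hfb P t
  have hSIne : {r | ∃ P ∈ 𝒮, r = ⨅ t, g f α P t}.Nonempty := ⟨_, P₀, hP₀, rfl⟩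
  have hSIbdd : BddAbove {r | ∃ P ∈ 𝒮, r = ⨅ t, g f α P t} := by
    refine ⟨M, ?_⟩
    rintro r ⟨P, hP, rfl⟩
    haveI := hprob P hP
    refine (hiInf_le P hP 0).trans ?_
    have := g_le hα0 hfm hfb P 0
    simpa using this
  set h : ℝ → ℝ := fun t => sSup {r | ∃ P ∈ 𝒮, r = g f α P t} with hh
  have hgle_h : ∀ P ∈ 𝒮, ∀ t, g f α P t ≤ h t := fun P hP t =>
    le_csSup (hStbdd t) ⟨P, hP, rfl⟩
  have hhbdd : BddBelow (Set.range h) := by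
    refine ⟨-M, ?_⟩
    rintro r ⟨t, rfl⟩
    haveI := hprob P₀ hP₀
    exact (g_ge hα0 hα1 hM hfm hfb P₀ t).trans (hgle_h P₀ hP₀ t)
  apply le_antisymm
  · refine le_ciInf fun t => csSup_le hSIne ?_
    rintro r ⟨P, hP, rfl⟩
    exact (hiInf_le P hP t).trans (hgle_h P hP t)
  · by_contra hlt
    push_neg at hlt
    set w := sSup {r | ∃ P ∈ 𝒮, r = ⨅ t, g f α P t} with hw
    set v := ⨅ t, h t with hv
    have hwv : w < v := hlt
    set δ := v - w with hδ
    have hδpos : 0 < δ := by rw [hδ]; linarith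
    set w₁ := w + δ/3 with hw₁
    set w₂ := w + 2*δ/3 with hw₂
    have hww₁ : w < w₁ := by rw [hw₁]; linarith
    have hw₁w₂ : w₁ < w₂ := by rw [hw₁, hw₂]; linarith
    have hw₂v : w₂ < v := by rw [hw₂, hδ]; linarith
    have hv_le : ∀ t, v ≤ h t := fun t => ciInf_le hhbdd t
    have hwit : ∀ P ∈ 𝒮, ∃ t ∈ Set.Icc (-M) M, g f α P t ≤ w₁ := by
      intro P hP
      haveI := hprob P hP
      have h1 : (⨅ t, g f α P t) ≤ w := le_csSup hSIbdd ⟨P, hP, rfl⟩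
      have h2 : (⨅ t, g f α P t) < w₁ := lt_of_le_of_lt h1 hww₁
      obtain ⟨t, ht⟩ := exists_lt_of_ciInf_lt h2
      exact ⟨proj M t, proj_mem hM t, (g_proj hα0 hα1 hM hfm hfb P t).trans ht.le⟩
    set S : Measure Ξ → Set ℝ := fun P => {t | t ∈ Set.Icc (-M) M ∧ g f α P t ≤ w₂} with hS
    have hSne : ∀ P ∈ 𝒮, (S P).Nonempty := by
      intro P hP; obtain ⟨t, htC, htv⟩ := hwit P hP
      exact ⟨t, htC, htv.trans hw₁w₂.le⟩
    have hSbddA : ∀ P, BddAbove (S P) := fun P => ⟨M, fun t ht => ht.1.2⟩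
    have hSbddB : ∀ P, BddBelow (S P) := fun P => ⟨-M, fun t ht => ht.1.1⟩
    have hSclosed : ∀ P ∈ 𝒮, IsClosed (S P) := by
      intro P hP
      haveI := hprob P hP
      have heq : S P = Set.Icc (-M) M ∩ {t | g f α P t ≤ w₂} := rfl
      rw [heq]
      exact isClosed_Icc.inter (isClosed_le (g_continuous hα0 hfm hfb P) continuous_const)
    have hSconv : ∀ P ∈ 𝒮, Convex ℝ (S P) := by
      intro P hP
      haveI := hprob P hP
      have heq : S P = Set.Icc (-M) M ∩ {t | g f α P t ≤ w₂} := rfl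
      rw [heq]
      refine (convex_Icc _ _).inter ?_
      have := (g_convexOn (α := α) hfm hfb P).convex_le w₂
      simpa using this
    have hInfMem : ∀ P ∈ 𝒮, sInf (S P) ∈ S P := fun P hP =>
      (hSclosed P hP).csInf_mem (hSne P hP) (hSbddB P)
    have hSupMem : ∀ P ∈ 𝒮, sSup (S P) ∈ S P := fun P hP =>
      (hSclosed P hP).csSup_mem (hSne P hP) (hSbddA P)
    have hpair : ∃ P1 ∈ 𝒮, ∃ P2 ∈ 𝒮, sSup (S P1) < sInf (S P2) := by
      by_contra hno
      push_neg at hno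
      set t₀ := sSup {x | ∃ P ∈ 𝒮, x = sInf (S P)} with ht₀
      have hIne : {x | ∃ P ∈ 𝒮, x = sInf (S P)}.Nonempty := ⟨_, P₀, hP₀, rfl⟩
      have hIbdd : BddAbove {x | ∃ P ∈ 𝒮, x = sInf (S P)} := by
        refine ⟨M, ?_⟩; rintro x ⟨P, hP, rfl⟩
        exact ((hInfMem P hP).1).2
      have ht₀S : ∀ P ∈ 𝒮, t₀ ∈ S P := by
        intro P hP
        have h1 : sInf (S P) ≤ t₀ := le_csSup hIbdd ⟨P, hP, rfl⟩
        have h2 : t₀ ≤ sSup (S P) := by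
          refine csSup_le hIne ?_
          rintro x ⟨Q, hQ, rfl⟩
          exact hno P hP Q hQ
        exact ((hSconv P hP).ordConnected.out (hInfMem P hP) (hSupMem P hP)) ⟨h1, h2⟩
      have hht₀ : h t₀ ≤ w₂ := by
        refine csSup_le (hStne t₀) ?_
        rintro r ⟨P, hP, rfl⟩
        exact (ht₀S P hP).2
      exact absurd ((hv_le t₀).trans hht₀) (not_le.mpr hw₂v)
    obtain ⟨P1, hP1, P2, hP2, hsep⟩ := hpair
    haveI := hprob P1 hP1
    haveI := hprob P2 hP2
    set b1 := sSup (S P1) with hb1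
    set a2 := sInf (S P2) with ha2
    set c := (b1 + a2)/2 with hc
    have hb1c : b1 < c := by rw [hc]; linarith
    have hca2 : c < a2 := by rw [hc]; linarith
    have hcC : c ∈ Set.Icc (-M) M := by
      constructor
      · exact le_trans (hSupMem P1 hP1).1.1 hb1c.le
      · exact le_trans hca2.le (hInfMem P2 hP2).1.2
    have hc1 : w₂ < g f α P1 c := by
      by_contra hle; push_neg at hle
      have : c ∈ S P1 := ⟨hcC, hle⟩
      exact absurd (le_csSup (hSbddA P1) this) (not_le.mpr hb1c)
    have hc2 : w₂ < g f α P2 c := by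
      by_contra hle; push_neg at hle
      have : c ∈ S P2 := ⟨hcC, hle⟩
      exact absurd (csInf_le (hSbddB P2) this) (not_le.mpr hca2)
    set K0 := 2*(M + M + M*α) + 1 with hK0
    have hK0pos : 0 < K0 := by rw [hK0]; nlinarith
    have hGbnd : ∀ P ∈ 𝒮, ∀ t ∈ Set.Icc (-M) M, |g f α P t| ≤ M + M + M*α := by
      intro P hP t htC
      haveI := hprob P hP
      rw [abs_le]
      constructor
      · have := g_ge hα0 hα1 hM hfm hfb P t; nlinarith
      · have h1 := g_le hα0 hfm hfb P t
        have h2 : |t| ≤ M := abs_le.mpr ⟨htC.1, htC.2⟩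
        nlinarith [abs_nonneg t]
    set η := (w₂ - w₁)/K0 with hη
    have hηpos : 0 < η := div_pos (by linarith) hK0pos
    set gl : ℝ → ℝ → ℝ := fun l t => l * g f α P1 t + (1 - l) * g f α P2 t with hgl
    have hglmix : ∀ l ∈ Set.Icc (0:ℝ) 1, ∀ t, gl l t
        = g f α (ENNReal.ofReal l • P1 + ENNReal.ofReal (1-l) • P2) t := by
      intro l hl t
      rw [g_mix hfm hfb P1 P2 hl.1 (by linarith [hl.2]) (by ring) t]
    have hmem : ∀ l ∈ Set.Icc (0:ℝ) 1,
        (ENNReal.ofReal l • P1 + ENNReal.ofReal (1-l) • P2) ∈ 𝒮 :=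
      fun l hl => hconv P1 hP1 P2 hP2 l (1-l) hl.1 (by linarith [hl.2]) (by ring)
    have hglc : ∀ l ∈ Set.Icc (0:ℝ) 1, w₂ < gl l c := by
      intro l hl
      have e : gl l c = l * g f α P1 c + (1-l) * g f α P2 c := rfl
      rw [e]
      exact lt_comb hl.1 hl.2 hc1 hc2
    set A := {l | l ∈ Set.Icc (0:ℝ) 1 ∧ ∃ t ∈ Set.Icc (-M) M, t < c ∧ gl l t ≤ w₁} with hA
    set B := {l | l ∈ Set.Icc (0:ℝ) 1 ∧ ∃ t ∈ Set.Icc (-M) M, c < t ∧ gl l t ≤ w₁} with hB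
    have hcover : ∀ l ∈ Set.Icc (0:ℝ) 1, l ∈ A ∪ B := by
      intro l hl
      obtain ⟨t, htC, htv⟩ := hwit _ (hmem l hl)
      rw [← hglmix l hl t] at htv
      rcases lt_trichotomy t c with hlt' | heq' | hgt'
      · exact Or.inl ⟨hl, t, htC, hlt', htv⟩
      · exfalso
        have := hglc l hl
        rw [← heq'] at this
        linarith
      · exact Or.inr ⟨hl, t, htC, hgt', htv⟩
    have hglconv : ∀ l ∈ Set.Icc (0:ℝ) 1, ConvexOn ℝ Set.univ (gl l) :=
      fun l hl => convexOn_comb (g_convexOn hfm hfb P1) (g_convexOn hfm hfb P2) hl.1 hl.2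
    have hsepAB : ∀ l ∈ A, ∀ m ∈ B, η ≤ |l - m| := by
      intro l hl m hm
      by_contra hcon; push_neg at hcon
      obtain ⟨hlI, t₁, ht₁C, ht₁c, ht₁v⟩ := hl
      obtain ⟨hmI, t₂, ht₂C, ht₂c, ht₂v⟩ := hm
      have hdiff : gl l t₂ ≤ w₂ := by
        have h1 : gl l t₂ - gl m t₂ = (l - m) * (g f α P1 t₂ - g f α P2 t₂) := by
          rw [hgl]; ring
        have h2 : |gl l t₂ - gl m t₂| ≤ |l - m| * (2*(M + M + M*α)) := by
          rw [h1, abs_mul]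
          refine mul_le_mul_of_nonneg_left ?_ (abs_nonneg _)
          have b1' := hGbnd P1 hP1 t₂ ht₂C
          have b2' := hGbnd P2 hP2 t₂ ht₂C
          calc |g f α P1 t₂ - g f α P2 t₂| ≤ |g f α P1 t₂| + |g f α P2 t₂| := abs_sub _ _
            _ ≤ 2*(M + M + M*α) := by linarith
        have h3 : |l - m| * (2*(M + M + M*α)) < η * K0 := by
          calc |l - m| * (2*(M + M + M*α)) ≤ |l - m| * K0 := by
                refine mul_le_mul_of_nonneg_left (by rw [hK0]; linarith) (abs_nonneg _)
            _ < η * K0 := mul_lt_mul_of_pos_right hcon hK0pos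
        have h4 : η * K0 = w₂ - w₁ := by
          rw [hη]; field_simp
        have h5 := (le_abs_self (gl l t₂ - gl m t₂)).trans h2
        linarith
      have hc_seg : c ∈ segment ℝ t₁ t₂ := by
        rw [segment_eq_Icc (le_of_lt (ht₁c.trans ht₂c))]
        exact ⟨ht₁c.le, ht₂c.le⟩
      have hmax : gl l c ≤ max (gl l t₁) (gl l t₂) :=
        (hglconv l hlI).le_on_segment (Set.mem_univ t₁) (Set.mem_univ t₂) hc_seg
      have hcle : gl l c ≤ w₂ := hmax.trans (max_le (ht₁v.trans hw₁w₂.le) hdiff)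
      linarith [hglc l hlI]
    have h1A : (1:ℝ) ∈ A := by
      obtain ⟨t, htC, htv⟩ := hwit P1 hP1
      refine ⟨⟨zero_le_one, le_refl 1⟩, t, htC, ?_, ?_⟩
      · have hts : t ∈ S P1 := ⟨htC, htv.trans hw₁w₂.le⟩
        exact lt_of_le_of_lt (le_csSup (hSbddA P1) hts) hb1c
      · have hgl : gl 1 t = g f α P1 t := by rw [hgl]; simp
        rw [hgl]; exact htv
    have h0B : (0:ℝ) ∈ B := by
      obtain ⟨t, htC, htv⟩ := hwit P2 hP2
      refine ⟨⟨le_refl 0, zero_le_one⟩, t, htC, ?_, ?_⟩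
      · have hts : t ∈ S P2 := ⟨htC, htv.trans hw₁w₂.le⟩
        exact lt_of_lt_of_le hca2 (csInf_le (hSbddB P2) hts)
      · have hgl : gl 0 t = g f α P2 t := by rw [hgl]; simp
        rw [hgl]; exact htv
    have hAsub : A ⊆ Set.Icc (0:ℝ) 1 := fun l hl => hl.1
    set s := sInf A with hs
    have hAne : A.Nonempty := ⟨1, h1A⟩
    have hAbdd : BddBelow A := ⟨0, fun l hl => (hAsub hl).1⟩
    have hsI : s ∈ Set.Icc (0:ℝ) 1 :=
      ⟨le_csInf hAne (fun l hl => (hAsub hl).1), (csInf_le hAbdd h1A)⟩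
    have hsA : s ∈ A := by
      rcases hcover s hsI with hcase | hcase
      · exact hcase
      · exfalso
        obtain ⟨a, haA, ha⟩ := exists_lt_of_csInf_lt hAne (lt_add_of_pos_right s hηpos)
        have h1 : s ≤ a := csInf_le hAbdd haA
        have h2 := hsepAB a haA s hcase
        rw [abs_of_nonneg (by linarith)] at h2
        linarith
    have hs0 : 0 < s := by
      rcases eq_or_lt_of_le hsI.1 with hcase | hcase
      · exfalso
        have h2 := hsepAB s hsA 0 h0B
        rw [← hcase] at h2
        simp at h2
        linarith
      · exact hcase
    set b := max 0 (s - η/2) with hbdef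
    have hbI : b ∈ Set.Icc (0:ℝ) 1 :=
      ⟨le_max_left _ _, max_le (by linarith [hsI.2]) (by linarith [hsI.2])⟩
    have hbs : b < s := by
      rcases max_cases 0 (s - η/2) with ⟨h1, h2⟩ | ⟨h1, h2⟩ <;> rw [hbdef, h1] <;> linarith
    have hbB : b ∈ B := by
      rcases hcover b hbI with hcase | hcase
      · exact absurd (csInf_le hAbdd hcase) (not_le.mpr hbs)
      · exact hcase
    have hsb : s - b ≤ η/2 := by
      rcases le_or_gt 0 (s - η/2) with hcase | hcase
      · rw [hbdef, max_eq_right hcase]; linarith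
      · rw [hbdef, max_eq_left hcase.le]; linarith
    have hfin := hsepAB s hsA b hbB
    rw [abs_of_nonneg (by linarith)] at hfin
    linarith

end DRCVaR


open RealInnerProductSpace

/-- Minimax exchange for the distributionally robust CVaR (Lemma 1).
`f` plays the role of `f(x, ·)` for a fixed decision `x`, assumed Borel measurable
and bounded on the compact metric space `Ξ`; the MMD ambiguity set `𝒫` is the ball
of radius `ε` around the empirical measure of the sample `ξs`, measured via the
kernel mean embeddings `∫ φ dP` and `(1/N) ∑ i, φ (ξs i)`. -/
theorem minimax_exchange_DR_CVaR
    {Ξ : Type*} [MetricSpace Ξ] [CompactSpace Ξ] [MeasurableSpace Ξ] [BorelSpace Ξ]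
    {H : Type*} [NormedAddCommGroup H] [InnerProductSpace ℝ H] [CompleteSpace H]
    (φ : Ξ → H) (hφ : Continuous φ)
    {N : ℕ} (hN : 0 < N) (ξs : Fin N → Ξ)
    (ε : ℝ) (hε : 0 < ε) (α : ℝ) (hα : α ∈ Set.Ioo (0 : ℝ) 1)
    (f : Ξ → ℝ) (hfm : Measurable f) (M : ℝ) (hfb : ∀ ξ, |f ξ| ≤ M) :
    sSup {r : ℝ | ∃ P : Measure Ξ, IsProbabilityMeasure P ∧
        ‖(∫ ξ, φ ξ ∂P) - (N : ℝ)⁻¹ • ∑ i, φ (ξs i)‖ ≤ ε ∧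
        r = ⨅ t : ℝ, (∫ ξ, max (f ξ + t) 0 ∂P - t * α)}
      = ⨅ t : ℝ, sSup {r : ℝ | ∃ P : Measure Ξ, IsProbabilityMeasure P ∧
          ‖(∫ ξ, φ ξ ∂P) - (N : ℝ)⁻¹ • ∑ i, φ (ξs i)‖ ≤ ε ∧
          r = ∫ ξ, max (f ξ + t) 0 ∂P - t * α} := by
  have hΞ : Nonempty Ξ := ⟨ξs ⟨0, hN⟩⟩
  have hM : 0 ≤ M := (abs_nonneg _).trans (hfb (ξs ⟨0, hN⟩))
  obtain ⟨hα0, hα1⟩ := hα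
  obtain ⟨ξm, -, hξm⟩ := isCompact_univ.exists_isMaxOn (Set.univ_nonempty)
    (hφ.norm.continuousOn)
  rw [isMaxOn_iff] at hξm
  have hφint : ∀ (P : Measure Ξ), IsProbabilityMeasure P → Integrable φ P := by
    intro P hP
    exact (integrable_const ‖φ ξm‖).mono' hφ.aestronglyMeasurable
      (Filter.Eventually.of_forall fun x => hξm x trivial)
  set μ0 : H := (N : ℝ)⁻¹ • ∑ i, φ (ξs i) with hμ0
  set 𝒮 : Set (Measure Ξ) := {P | IsProbabilityMeasure P ∧ ‖(∫ ξ, φ ξ ∂P) - μ0‖ ≤ ε}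
    with h𝒮
  have hprob : ∀ P ∈ 𝒮, IsProbabilityMeasure P := fun P hP => hP.1
  have hne : 𝒮.Nonempty := by
    refine ⟨(N : ℝ≥0∞)⁻¹ • ∑ i, Measure.dirac (ξs i), ?_, ?_⟩
    · constructor
      simp only [Measure.smul_apply, Measure.coe_finset_sum, Finset.sum_apply,
        measure_univ, smul_eq_mul, Finset.sum_const, Finset.card_univ,
        Fintype.card_fin, nsmul_eq_mul, mul_one]
      exact ENNReal.inv_mul_cancel (by exact_mod_cast hN.ne')
        (ENNReal.natCast_ne_top N)
    · have hint : ∫ ξ, φ ξ ∂((N : ℝ≥0∞)⁻¹ • ∑ i, Measure.dirac (ξs i)) = μ0 := by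
        rw [integral_smul_measure,
          integral_finset_sum_measure (fun i _ => hφint _ inferInstance)]
        simp only [integral_dirac]
        rw [ENNReal.toReal_inv, ENNReal.toReal_natCast, hμ0]
      rw [hint, sub_self, norm_zero]
      exact hε.le
  have hconv : ∀ P ∈ 𝒮, ∀ Q ∈ 𝒮, ∀ a b : ℝ, 0 ≤ a → 0 ≤ b → a + b = 1 →
      (ENNReal.ofReal a • P + ENNReal.ofReal b • Q) ∈ 𝒮 := by
    intro P hP Q hQ a b ha hb hab
    haveI := hP.1
    haveI := hQ.1
    refine ⟨DRCVaR.isProbabilityMeasure_mix P Q ha hb hab, ?_⟩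
    rw [DRCVaR.integral_mix P Q ha hb (hφint P hP.1) (hφint Q hQ.1)]
    have key : a • (∫ ξ, φ ξ ∂P) + b • (∫ ξ, φ ξ ∂Q) - μ0
        = a • ((∫ ξ, φ ξ ∂P) - μ0) + b • ((∫ ξ, φ ξ ∂Q) - μ0) := by
      rw [smul_sub, smul_sub, sub_add_sub_comm, ← add_smul, hab, one_smul]
    rw [key]
    calc ‖a • ((∫ ξ, φ ξ ∂P) - μ0) + b • ((∫ ξ, φ ξ ∂Q) - μ0)‖
        ≤ ‖a • ((∫ ξ, φ ξ ∂P) - μ0)‖ + ‖b • ((∫ ξ, φ ξ ∂Q) - μ0)‖ := norm_add_le _ _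
      _ = a * ‖(∫ ξ, φ ξ ∂P) - μ0‖ + b * ‖(∫ ξ, φ ξ ∂Q) - μ0‖ := by
          rw [norm_smul, norm_smul, Real.norm_of_nonneg ha, Real.norm_of_nonneg hb]
      _ ≤ a * ε + b * ε := add_le_add
          (mul_le_mul_of_nonneg_left hP.2 ha) (mul_le_mul_of_nonneg_left hQ.2 hb)
      _ = ε := by rw [← add_mul, hab, one_mul]
  have main := DRCVaR.minimax hfm hfb hM hα0.le hα1.le 𝒮 hne hprob hconv
  have e1 : {r : ℝ | ∃ P : Measure Ξ, IsProbabilityMeasure P ∧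
      ‖(∫ ξ, φ ξ ∂P) - μ0‖ ≤ ε ∧
      r = ⨅ t : ℝ, (∫ ξ, max (f ξ + t) 0 ∂P - t * α)}
      = {r | ∃ P ∈ 𝒮, r = ⨅ t, DRCVaR.g f α P t} := by
    ext r
    constructor
    · rintro ⟨P, h1, h2, h3⟩; exact ⟨P, ⟨h1, h2⟩, h3⟩
    · rintro ⟨P, ⟨h1, h2⟩, h3⟩; exact ⟨P, h1, h2, h3⟩
  have e2 : ∀ t : ℝ, {r : ℝ | ∃ P : Measure Ξ, IsProbabilityMeasure P ∧
      ‖(∫ ξ, φ ξ ∂P) - μ0‖ ≤ ε ∧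
      r = ∫ ξ, max (f ξ + t) 0 ∂P - t * α}
      = {r | ∃ P ∈ 𝒮, r = DRCVaR.g f α P t} := by
    intro t
    ext r
    constructor
    · rintro ⟨P, h1, h2, h3⟩; exact ⟨P, ⟨h1, h2⟩, h3⟩
    · rintro ⟨P, ⟨h1, h2⟩, h3⟩; exact ⟨P, h1, h2, h3⟩
  rw [e1]
  rw [show (fun t : ℝ => sSup {r : ℝ | ∃ P : Measure Ξ, IsProbabilityMeasure P ∧
      ‖(∫ ξ, φ ξ ∂P) - μ0‖ ≤ ε ∧ r = ∫ ξ, max (f ξ + t) 0 ∂P - t * α})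
      = fun t : ℝ => sSup {r | ∃ P ∈ 𝒮, r = DRCVaR.g f α P t}
    from funext fun t => congrArg sSup (e2 t)]
  exact main
end

section
/- Dual reformulation of the distributionally robust CVaR constraint (Proposition 2). Let Ξ be a compact metric space, φ : Ξ → H continuous, ε > 0, α ∈ (0,1), and let f(x,·) : Ξ → ℝ be Borel measurable, bounded on Ξ, and lower semicontinuous. Then sup_{P∈𝒫} CVaR_{1−α}^P[f(x,·)] ≤ 0 holds if and only if there exist t, g₀ ∈ ℝ and g ∈ H such that (i) g₀ + (1/N)∑_{i=1}^N ⟨g, φ(ξ_i)⟩_H + ε‖g‖_H ≤ tα, and (ii) (f(x,ξ)+t)_+ ≤ g₀ + ⟨g, φ(ξ)⟩_H for every ξ ∈ Ξ. Moreover, sup_{P∈𝒫} CVaR_{1−α}^P[f(x,·)] equals the minimum over all (t, g₀, g) ∈ ℝ × ℝ × H satisfying (ii) of g₀ + (1/N)∑_{i=1}^N ⟨g, φ(ξ_i)⟩_H + ε‖g‖_H − tα. -/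
set_option linter.unusedSectionVars false

open MeasureTheory RealInnerProductSpace

namespace DRCVaRAux

variable {Ξ : Type*} [MetricSpace Ξ] [CompactSpace Ξ] [MeasurableSpace Ξ] [BorelSpace Ξ]
variable {H : Type*} [NormedAddCommGroup H] [InnerProductSpace ℝ H] [CompleteSpace H]

lemma int_abs {P : Measure Ξ} [IsFiniteMeasure P] {u : Ξ → ℝ}
    (hu : AEStronglyMeasurable u P) {C : ℝ} (hC : ∀ ξ, |u ξ| ≤ C) : Integrable u P :=
  (integrable_const C).mono' hu (ae_of_all _ fun ξ => by simpa [Real.norm_eq_abs] using hC ξ)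

lemma int_norm {P : Measure Ξ} [IsFiniteMeasure P] {u : Ξ → H}
    (hu : AEStronglyMeasurable u P) {C : ℝ} (hC : ∀ ξ, ‖u ξ‖ ≤ C) : Integrable u P :=
  (integrable_const C).mono' hu (ae_of_all _ hC)

/-- The CVaR objective. -/
noncomputable def LL (f : Ξ → ℝ) (α : ℝ) (P : Measure Ξ) (t : ℝ) : ℝ :=
  (∫ ξ, max (f ξ + t) 0 ∂P) - t * α

/-- CVaR. -/
noncomputable def RR (f : Ξ → ℝ) (α : ℝ) (P : Measure Ξ) : ℝ := ⨅ t, LL f α P t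

section basic

variable {f : Ξ → ℝ} (hfm : Measurable f) {M : ℝ} (hfb : ∀ ξ, |f ξ| ≤ M) (hM : 0 ≤ M)
variable {α : ℝ} (hα : α ∈ Set.Ioo (0:ℝ) 1)

include hfm hfb hM in
lemma int_max (P : Measure Ξ) [IsFiniteMeasure P] (t : ℝ) :
    Integrable (fun ξ => max (f ξ + t) 0) P := by
  apply int_abs ((hfm.add_const t).max measurable_const).aestronglyMeasurable (C := M + |t|)
  intro ξ
  have h1 := (abs_le.mp (hfb ξ)).2
  have h2 := le_abs_self t
  have h0 : (0:ℝ) ≤ max (f ξ + t) 0 := le_max_right _ _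
  rw [abs_of_nonneg h0]
  have : (0:ℝ) ≤ M + |t| := by positivity
  exact max_le (by linarith) this

include hfm hfb in
lemma int_f (P : Measure Ξ) [IsFiniteMeasure P] : Integrable f P :=
  int_abs hfm.aestronglyMeasurable hfb

include hfm hfb hM hα in
lemma LL_ge (P : Measure Ξ) [IsProbabilityMeasure P] (t : ℝ) :
    -(M * α) ≤ LL f α P t := by
  obtain ⟨hα0, hα1⟩ := hα
  rcases le_or_gt t M with ht | ht
  · have h1 : (0:ℝ) ≤ ∫ ξ, max (f ξ + t) 0 ∂P :=
      integral_nonneg fun ξ => le_max_right _ _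
    have h2 : t * α ≤ M * α := mul_le_mul_of_nonneg_right ht hα0.le
    unfold LL; linarith
  · have hint : Integrable (fun ξ => f ξ + t) P := (int_f hfm hfb P).add (integrable_const t)
    have h1 : ∫ ξ, (f ξ + t) ∂P ≤ ∫ ξ, max (f ξ + t) 0 ∂P :=
      integral_mono hint (int_max hfm hfb hM P t) fun ξ => le_max_left _ _
    have h2 : ∫ ξ, (f ξ + t) ∂P = (∫ ξ, f ξ ∂P) + t := by
      rw [integral_add (int_f hfm hfb P) (integrable_const t), integral_const]
      simp
    have h3 : -M ≤ ∫ ξ, f ξ ∂P := by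
      have := integral_mono (integrable_const (-M)) (int_f hfm hfb P)
        (fun ξ => (abs_le.mp (hfb ξ)).1)
      simpa using this
    unfold LL; nlinarith

include hfm hfb hM hα in
lemma bddBelow_LL (P : Measure Ξ) [IsProbabilityMeasure P] :
    BddBelow (Set.range (LL f α P)) :=
  ⟨-(M * α), by rintro _ ⟨t, rfl⟩; exact LL_ge hfm hfb hM hα P t⟩

include hfm hfb hM hα in
lemma RR_le (P : Measure Ξ) [IsProbabilityMeasure P] (t : ℝ) :
    RR f α P ≤ LL f α P t :=
  ciInf_le (bddBelow_LL hfm hfb hM hα P) t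

include hfm hfb hM hα in
lemma RR_le_Mα (P : Measure Ξ) [IsProbabilityMeasure P] : RR f α P ≤ M * α := by
  have h := RR_le hfm hfb hM hα P (-M)
  have h2 : LL f α P (-M) = M * α := by
    unfold LL
    have : (fun ξ => max (f ξ + -M) 0) = fun _ => (0:ℝ) := by
      funext ξ
      have := (abs_le.mp (hfb ξ)).2
      exact max_eq_right (by linarith)
    rw [this, integral_zero]
    ring
  linarith [h, h2.le]

end basic

section dual

variable {φ : Ξ → H} (hφ : Continuous φ) {K : ℝ} (hK : ∀ ξ, ‖φ ξ‖ ≤ K)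
variable {f : Ξ → ℝ} (hfm : Measurable f) {M : ℝ} (hfb : ∀ ξ, |f ξ| ≤ M) (hM : 0 ≤ M)
variable {α : ℝ} (hα : α ∈ Set.Ioo (0:ℝ) 1)

include hφ hK in
lemma int_phi (P : Measure Ξ) [IsFiniteMeasure P] : Integrable φ P :=
  int_norm hφ.aestronglyMeasurable hK

include hφ hK in
lemma int_inner (g : H) (P : Measure Ξ) [IsFiniteMeasure P] :
    Integrable (fun ξ => ⟪g, φ ξ⟫) P := by
  apply int_abs (continuous_const.inner hφ).aestronglyMeasurable (C := ‖g‖ * K)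
  intro ξ
  calc |⟪g, φ ξ⟫| ≤ ‖g‖ * ‖φ ξ‖ := abs_real_inner_le_norm _ _
  _ ≤ ‖g‖ * K := by
      have h0 : (0:ℝ) ≤ ‖φ ξ‖ := norm_nonneg _
      exact mul_le_mul_of_nonneg_left (hK ξ) (norm_nonneg g)

include hφ hK in
lemma inner_int (g : H) (P : Measure Ξ) [IsFiniteMeasure P] :
    ∫ ξ, ⟪g, φ ξ⟫ ∂P = ⟪g, ∫ ξ, φ ξ ∂P⟫ :=
  integral_inner (int_phi hφ hK P) g

include hφ hK hfm hfb hM hα in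
/-- Weak duality. -/
lemma weak_duality (mh : H) {ε : ℝ} (P : Measure Ξ) [IsProbabilityMeasure P]
    (hP : ‖(∫ ξ, φ ξ ∂P) - mh‖ ≤ ε) (t g₀ : ℝ) (g : H)
    (hfeas : ∀ ξ, max (f ξ + t) 0 ≤ g₀ + ⟪g, φ ξ⟫) :
    RR f α P ≤ g₀ + ⟪g, mh⟫ + ε * ‖g‖ - t * α := by
  have h1 : RR f α P ≤ LL f α P t := RR_le hfm hfb hM hα P t
  have h2 : (∫ ξ, max (f ξ + t) 0 ∂P) ≤ ∫ ξ, (g₀ + ⟪g, φ ξ⟫) ∂P :=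
    integral_mono (int_max hfm hfb hM P t)
      ((integrable_const g₀).add (int_inner hφ hK g P)) hfeas
  have h3 : ∫ ξ, (g₀ + ⟪g, φ ξ⟫) ∂P = g₀ + ⟪g, ∫ ξ, φ ξ ∂P⟫ := by
    rw [integral_add (integrable_const g₀) (int_inner hφ hK g P), integral_const,
      inner_int hφ hK g P]
    simp
  have h4 : ⟪g, ∫ ξ, φ ξ ∂P⟫ - ⟪g, mh⟫ ≤ ε * ‖g‖ := by
    have h5 : ⟪g, (∫ ξ, φ ξ ∂P) - mh⟫ ≤ ‖g‖ * ‖(∫ ξ, φ ξ ∂P) - mh‖ :=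
      real_inner_le_norm _ _
    have h6 : ‖g‖ * ‖(∫ ξ, φ ξ ∂P) - mh‖ ≤ ‖g‖ * ε :=
      mul_le_mul_of_nonneg_left hP (norm_nonneg g)
    rw [inner_sub_right] at h5
    nlinarith [h5, h6]
  unfold LL at h1
  linarith

/-- The empirical measure. -/
noncomputable def Phat {N : ℕ} (ξs : Fin N → Ξ) : Measure Ξ :=
  ((N : ENNReal))⁻¹ • ∑ i, Measure.dirac (ξs i)

lemma Phat_prob {N : ℕ} (hN : 0 < N) (ξs : Fin N → Ξ) :
    IsProbabilityMeasure (Phat ξs) := by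
  constructor
  rw [Phat, Measure.smul_apply, Measure.finset_sum_apply]
  simp only [measure_univ, Finset.sum_const, Finset.card_univ, Fintype.card_fin, nsmul_eq_mul,
    mul_one, smul_eq_mul]
  exact ENNReal.inv_mul_cancel (by exact_mod_cast hN.ne') (ENNReal.natCast_ne_top N)

lemma integral_Phat {E : Type*} [NormedAddCommGroup E] [NormedSpace ℝ E] [CompleteSpace E]
    {N : ℕ} (ξs : Fin N → Ξ) (u : Ξ → E)
    (hu : ∀ i : Fin N, Integrable u (Measure.dirac (ξs i))) :
    ∫ ξ, u ξ ∂(Phat ξs) = (N : ℝ)⁻¹ • ∑ i, u (ξs i) := by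
  rw [Phat, integral_smul_measure, integral_finset_sum_measure (fun i _ => hu i)]
  simp [integral_dirac, ENNReal.toReal_inv]

include hK hα in
/-- The one-dimensional minimax step: from the separation inequality applied to all
two-point mixtures, produce a common optimal threshold `t₀`. -/
lemma oneD {f : Ξ → ℝ} {M : ℝ} (hfb : ∀ ξ, |f ξ| ≤ M) (ξ0 : Ξ) (g : H) (c : ℝ)
    (hc : ∀ ξ₁ ξ₂ : Ξ,
      (⨅ t : ℝ, ((1-α) * max (f ξ₁ + t) 0 + α * max (f ξ₂ + t) 0 - t * α))
        ≤ (1-α) * ⟪g, φ ξ₁⟫ + α * ⟪g, φ ξ₂⟫ + c) :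
    ∃ t₀ g₀ : ℝ, (∀ ξ, max (f ξ + t₀) 0 ≤ g₀ + ⟪g, φ ξ⟫) ∧ g₀ - t₀ * α ≤ c := by
  obtain ⟨hα0, hα1⟩ := hα
  have hM0 : 0 ≤ M := le_trans (abs_nonneg _) (hfb ξ0)
  set b : Ξ → ℝ := fun ξ => ⟪g, φ ξ⟫ with hbdef
  have hK0 : 0 ≤ K := le_trans (norm_nonneg _) (hK ξ0)
  have hbK : ∀ ξ, |b ξ| ≤ ‖g‖ * K := by
    intro ξ
    calc |b ξ| ≤ ‖g‖ * ‖φ ξ‖ := abs_real_inner_le_norm _ _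
    _ ≤ ‖g‖ * K := mul_le_mul_of_nonneg_left (hK ξ) (norm_nonneg g)
  set Kb : ℝ := ‖g‖ * K with hKbdef
  have hKb0 : 0 ≤ Kb := mul_nonneg (norm_nonneg g) hK0
  set m : Ξ → ℝ → ℝ := fun ξ t => max (f ξ + t) 0 - b ξ with hmdef
  have hub : ∀ (t : ℝ) (ξ : Ξ), m ξ t ≤ M + |t| + Kb := by
    intro t ξ
    have h1 := (abs_le.mp (hfb ξ)).2
    have h2 := le_abs_self t
    have h3 := (abs_le.mp (hbK ξ)).1
    have h4 : max (f ξ + t) 0 ≤ M + |t| := max_le (by linarith) (by linarith [abs_nonneg t])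
    simp only [hmdef]; linarith
  have hbdd : ∀ t : ℝ, BddAbove (Set.range fun ξ => m ξ t) :=
    fun t => ⟨M + |t| + Kb, by rintro _ ⟨ξ, rfl⟩; exact hub t ξ⟩
  have hne : ∀ t : ℝ, (Set.range fun ξ => m ξ t).Nonempty := fun t => ⟨m ξ0 t, ξ0, rfl⟩
  set ψ : ℝ → ℝ := fun t => sSup (Set.range fun ξ => m ξ t) with hψdef
  have hle : ∀ (t : ℝ) (ξ : Ξ), m ξ t ≤ ψ t := fun t ξ => le_csSup (hbdd t) ⟨ξ, rfl⟩
  have hmono : ∀ (ξ : Ξ) {s t : ℝ}, s ≤ t → m ξ s ≤ m ξ t := by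
    intro ξ s t hst
    simp only [hmdef]
    have : max (f ξ + s) 0 ≤ max (f ξ + t) 0 := max_le_max (by linarith) le_rfl
    linarith
  have hlipm : ∀ (ξ : Ξ) (s t : ℝ), m ξ t ≤ m ξ s + |t - s| := by
    intro ξ s t
    have h := abs_max_sub_max_le_abs (f ξ + t) (f ξ + s) (0:ℝ)
    rw [show f ξ + t - (f ξ + s) = t - s by ring] at h
    have h2 := (abs_le.mp h).2
    simp only [hmdef]; linarith
  have hψlip : ∀ s t : ℝ, ψ t ≤ ψ s + |t - s| := by
    intro s t
    apply csSup_le (hne t)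
    rintro _ ⟨ξ, rfl⟩
    have := hlipm ξ s t
    have := hle s ξ
    linarith
  have hψcont : Continuous ψ := by
    have hl : LipschitzWith 1 ψ := by
      apply LipschitzWith.of_dist_le_mul
      intro t s
      rw [Real.dist_eq, Real.dist_eq, NNReal.coe_one, one_mul]
      have h1 := hψlip s t
      have h2 := hψlip t s
      rw [abs_sub_le_iff]
      have h3 : |s - t| = |t - s| := abs_sub_comm s t
      rw [h3] at h2
      exact ⟨by linarith, by linarith⟩
    exact hl.continuous
  set q : ℝ → ℝ := fun t => ψ t - t * α with hqdef
  have hqcont : Continuous q := hψcont.sub (continuous_id.mul continuous_const)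
  have hm0lb : ∀ t : ℝ, -Kb ≤ m ξ0 t := by
    intro t
    have h3 := (abs_le.mp (hbK ξ0)).2
    have h0 : (0:ℝ) ≤ max (f ξ0 + t) 0 := le_max_right _ _
    simp only [hmdef]; linarith
  have hlb1 : ∀ t : ℝ, -Kb - t * α ≤ q t := by
    intro t
    have := le_trans (hm0lb t) (hle t ξ0)
    simp only [hqdef]; linarith
  have hlb2 : ∀ t : ℝ, t * (1 - α) - M - Kb ≤ q t := by
    intro t
    have h1 : f ξ0 + t - b ξ0 ≤ m ξ0 t := by
      simp only [hmdef]
      have : f ξ0 + t ≤ max (f ξ0 + t) 0 := le_max_left _ _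
      linarith
    have h2 := (abs_le.mp (hfb ξ0)).1
    have h3 := (abs_le.mp (hbK ξ0)).2
    have h4 := le_trans h1 (hle t ξ0)
    simp only [hqdef]; linarith
  set A : ℝ := max 1 (max ((q 0 + Kb + 1)/α) ((q 0 + M + Kb + 1)/(1-α))) with hAdef
  have hA1 : (1:ℝ) ≤ A := le_max_left _ _
  have h0mem : (0:ℝ) ∈ Set.Icc (-A) A := by
    constructor <;> [linarith; linarith]
  have hAα : q 0 + Kb + 1 ≤ A * α := by
    have h : (q 0 + Kb + 1)/α ≤ A :=
      le_trans (le_max_left ((q 0 + Kb + 1)/α) ((q 0 + M + Kb + 1)/(1-α)))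
        (le_max_right 1 _)
    exact (div_le_iff₀ hα0).mp h
  have hAα2 : q 0 + M + Kb + 1 ≤ A * (1-α) := by
    have h : (q 0 + M + Kb + 1)/(1-α) ≤ A :=
      le_trans (le_max_right ((q 0 + Kb + 1)/α) ((q 0 + M + Kb + 1)/(1-α)))
        (le_max_right 1 _)
    exact (div_le_iff₀ (by linarith)).mp h
  have hout : ∀ t : ℝ, t ∉ Set.Icc (-A) A → q 0 + 1 ≤ q t := by
    intro t ht
    rw [Set.mem_Icc, not_and_or] at ht
    rcases ht with ht | ht
    · push_neg at ht
      have h1 := hlb1 t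
      have hp := mul_le_mul_of_nonneg_right ht.le hα0.le
      linarith
    · push_neg at ht
      have h1 := hlb2 t
      have hp := mul_le_mul_of_nonneg_right ht.le (by linarith : (0:ℝ) ≤ 1 - α)
      linarith
  obtain ⟨t₀, ht₀mem, ht₀min⟩ := isCompact_Icc.exists_isMinOn ⟨0, h0mem⟩ hqcont.continuousOn
  have hglobal : ∀ t : ℝ, q t₀ ≤ q t := by
    intro t
    by_cases htI : t ∈ Set.Icc (-A) A
    · exact isMinOn_iff.mp ht₀min t htI
    · have h1 := hout t htI
      have h2 := isMinOn_iff.mp ht₀min 0 h0mem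
      linarith
  have hqc : q t₀ ≤ c := by
    by_contra hvc
    push_neg at hvc
    set v : ℝ := q t₀ with hvdef
    set δ : ℝ := (v - c)/4 with hδdef
    set η : ℝ := min α (1-α) * δ / 2 with hηdef
    clear_value v δ η
    have hδ0 : 0 < δ := by simp only [hδdef]; linarith
    have hmin0 : 0 < min α (1-α) := lt_min hα0 (by linarith)
    have hη0 : 0 < η := by simp only [hηdef]; positivity
    have hηαδ : η < α * δ := by
      have h1 : min α (1-α) ≤ α := min_le_left _ _
      have hp := mul_le_mul_of_nonneg_right h1 hδ0.le
      have hq := mul_pos hα0 hδ0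
      simp only [hηdef]; linarith
    have hη1αδ : η < (1-α) * δ := by
      have h1 : min α (1-α) ≤ 1-α := min_le_right _ _
      have hp := mul_le_mul_of_nonneg_right h1 hδ0.le
      have hq := mul_pos (by linarith : (0:ℝ) < 1-α) hδ0
      simp only [hηdef]; linarith
    have hηδ : η ≤ δ / 2 := by
      have h1 : min α (1-α) ≤ 1 := le_trans (min_le_left _ _) (by linarith)
      have hp := mul_le_mul_of_nonneg_right h1 hδ0.le
      simp only [hηdef]; linarith
    obtain ⟨x₂, hx₂mem, h₂⟩ := exists_lt_of_lt_csSup (hne (t₀+δ))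
      (show ψ (t₀+δ) - η < ψ (t₀+δ) by linarith)
    obtain ⟨ξ₂, rfl⟩ := hx₂mem
    obtain ⟨x₁, hx₁mem, h₁⟩ := exists_lt_of_lt_csSup (hne (t₀-δ))
      (show ψ (t₀-δ) - η < ψ (t₀-δ) by linarith)
    obtain ⟨ξ₁, rfl⟩ := hx₁mem
    have hψv : ∀ t : ℝ, v + t * α ≤ ψ t := by
      intro t
      have h := hglobal t
      simp only [hqdef] at h
      simp only [hvdef]
      linarith
    have hψt₀ : ψ t₀ = v + t₀ * α := by
      have : v = ψ t₀ - t₀ * α := hvdef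
      linarith
    have h₁' : v + (t₀-δ)*α - η < m ξ₁ (t₀-δ) := lt_of_le_of_lt (by linarith [hψv (t₀-δ)]) h₁
    have h₂' : v + (t₀+δ)*α - η < m ξ₂ (t₀+δ) := lt_of_le_of_lt (by linarith [hψv (t₀+δ)]) h₂
    have hC1 : f ξ₁ + (t₀ - δ) < 0 := by
      by_contra hge
      push_neg at hge
      have e1 : max (f ξ₁ + (t₀ - δ)) 0 = f ξ₁ + (t₀-δ) := max_eq_left hge
      have e2 : max (f ξ₁ + t₀) 0 = f ξ₁ + t₀ := max_eq_left (by linarith)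
      have key : m ξ₁ t₀ = m ξ₁ (t₀-δ) + δ := by
        simp only [hmdef, e1, e2]; ring
      have hle1 := hle t₀ ξ₁
      rw [hψt₀] at hle1
      linarith [h₁', hη1αδ]
    have hC2 : 0 < f ξ₂ + (t₀ + δ) := by
      by_contra hge
      push_neg at hge
      have e1 : max (f ξ₂ + (t₀+δ)) 0 = 0 := max_eq_right hge
      have e0 : (0:ℝ) ≤ max (f ξ₂ + t₀) 0 := le_max_right _ _
      have hle2 := hle t₀ ξ₂
      rw [hψt₀] at hle2
      have key : m ξ₂ (t₀+δ) ≤ m ξ₂ t₀ := by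
        simp only [hmdef, e1]
        linarith [le_max_right (f ξ₂ + t₀) (0:ℝ)]
      linarith [h₂', hηαδ]
    have LB1 : ∀ t : ℝ, m ξ₁ (t₀ - δ) ≤ m ξ₁ t := by
      intro t
      rcases le_or_gt (t₀ - δ) t with h | h
      · exact hmono ξ₁ h
      · have e1 : max (f ξ₁ + (t₀-δ)) 0 = 0 := max_eq_right hC1.le
        have e0 : (0:ℝ) ≤ max (f ξ₁ + t) 0 := le_max_right _ _
        simp only [hmdef, e1]; linarith
    have LB2 : ∀ t : ℝ, m ξ₂ (t₀ + δ) + (t - (t₀ + δ)) ≤ m ξ₂ t := by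
      intro t
      rcases le_or_gt t (t₀ + δ) with h | h
      · have hl := hlipm ξ₂ t (t₀+δ)
        rw [abs_of_nonneg (by linarith)] at hl
        linarith
      · have e1 : max (f ξ₂ + (t₀+δ)) 0 = f ξ₂ + (t₀+δ) := max_eq_left hC2.le
        have e2 : max (f ξ₂ + t) 0 = f ξ₂ + t := max_eq_left (by linarith)
        simp only [hmdef, e1, e2]; linarith
    have hG : ∀ t : ℝ,
        (1-α) * m ξ₁ (t₀-δ) + α * m ξ₂ (t₀+δ) - α * (t₀+δ) + ((1-α) * b ξ₁ + α * b ξ₂)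
          ≤ (1-α) * max (f ξ₁ + t) 0 + α * max (f ξ₂ + t) 0 - t * α := by
      intro t
      have l1 := mul_le_mul_of_nonneg_left (LB1 t) (by linarith : (0:ℝ) ≤ 1 - α)
      have l2 := mul_le_mul_of_nonneg_left (LB2 t) hα0.le
      have e1 : max (f ξ₁ + t) 0 = m ξ₁ t + b ξ₁ := by simp [hmdef]
      have e2 : max (f ξ₂ + t) 0 = m ξ₂ t + b ξ₂ := by simp [hmdef]
      rw [e1, e2]
      linarith [l1, l2]
    have hinf := le_trans (le_ciInf hG) (hc ξ₁ ξ₂)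
    have hb1 : b ξ₁ = ⟪g, φ ξ₁⟫ := rfl
    have hb2 : b ξ₂ = ⟪g, φ ξ₂⟫ := rfl
    rw [hb1, hb2] at hinf
    have hfin : (1-α) * m ξ₁ (t₀-δ) + α * m ξ₂ (t₀+δ) - α * (t₀+δ) ≤ c := by linarith
    have m1 := mul_le_mul_of_nonneg_left h₁'.le (by linarith : (0:ℝ) ≤ 1 - α)
    have m2 := mul_le_mul_of_nonneg_left h₂'.le hα0.le
    have hq4 : 2*α*(1-α)*δ ≤ δ/2 := by nlinarith [sq_nonneg (2*α - 1), hδ0.le]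
    linarith [m1, m2, hfin, hq4, hηδ]
  refine ⟨t₀, ψ t₀, ?_, hqc⟩
  intro ξ
  have h := hle t₀ ξ
  simp only [hmdef] at h
  linarith

lemma int_smul_ofReal {E : Type*} [NormedAddCommGroup E] {P : Measure Ξ} {u : Ξ → E}
    (hu : Integrable u P) (a : ℝ) : Integrable u (ENNReal.ofReal a • P) := by
  rcases eq_or_ne (ENNReal.ofReal a) 0 with h | h
  · rw [h, zero_smul]
    exact integrable_zero_measure
  · exact (integrable_smul_measure h ENNReal.ofReal_ne_top).mpr hu

lemma integral_combo {E : Type*} [NormedAddCommGroup E] [NormedSpace ℝ E]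
    {P₁ P₂ : Measure Ξ} {u : Ξ → E} (h1 : Integrable u P₁) (h2 : Integrable u P₂)
    {a b : ℝ} (ha : 0 ≤ a) (hb : 0 ≤ b) :
    ∫ ξ, u ξ ∂(ENNReal.ofReal a • P₁ + ENNReal.ofReal b • P₂)
      = a • ∫ ξ, u ξ ∂P₁ + b • ∫ ξ, u ξ ∂P₂ := by
  rw [integral_add_measure (int_smul_ofReal h1 a) (int_smul_ofReal h2 b),
    integral_smul_measure, integral_smul_measure, ENNReal.toReal_ofReal ha,
    ENNReal.toReal_ofReal hb]

lemma prob_combo {P₁ P₂ : Measure Ξ} [IsProbabilityMeasure P₁] [IsProbabilityMeasure P₂]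
    {a b : ℝ} (ha : 0 ≤ a) (hb : 0 ≤ b) (hab : a + b = 1) :
    IsProbabilityMeasure (ENNReal.ofReal a • P₁ + ENNReal.ofReal b • P₂) := by
  constructor
  simp only [Measure.add_apply, Measure.smul_apply, measure_univ, smul_eq_mul, mul_one]
  rw [← ENNReal.ofReal_add ha hb, hab, ENNReal.ofReal_one]

include hφ hK hfm hfb hM hα in
/-- The separation step: a dual pair `(g, c)` bounding the CVaR of every probability
measure, with value dominated by `S`. -/
lemma separation {ε : ℝ} (hε : 0 < ε) (mh : H) {S : ℝ}
    (hmem : ∀ P : Measure Ξ, IsProbabilityMeasure P →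
      ‖(∫ ξ, φ ξ ∂P) - mh‖ ≤ ε → RR f α P ≤ S)
    (Pw : Measure Ξ) (hPw : IsProbabilityMeasure Pw) (hPwm : (∫ ξ, φ ξ ∂Pw) = mh) :
    ∃ (g : H) (c : ℝ),
      (∀ P : Measure Ξ, IsProbabilityMeasure P → RR f α P ≤ ⟪g, ∫ ξ, φ ξ ∂P⟫ + c) ∧
      c + ⟪g, mh⟫ + ε * ‖g‖ ≤ S := by
  obtain ⟨hα0, hα1⟩ := hα
  set B : Set (H × ℝ) := (Metric.ball mh ε) ×ˢ (Set.Ioi S) with hBdef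
  set C : Set (H × ℝ) :=
    {p | ∃ P : Measure Ξ, IsProbabilityMeasure P ∧ p.1 = ∫ ξ, φ ξ ∂P ∧ p.2 ≤ RR f α P}
    with hCdef
  have hBconv : Convex ℝ B := (convex_ball _ _).prod (convex_Ioi _)
  have hBopen : IsOpen B := Metric.isOpen_ball.prod isOpen_Ioi
  have hCconv : Convex ℝ C := by
    intro p hp q hq a b ha hb hab
    obtain ⟨P₁, hP₁, hm₁, hs₁⟩ := hp
    obtain ⟨P₂, hP₂, hm₂, hs₂⟩ := hq
    haveI := hP₁; haveI := hP₂
    refine ⟨ENNReal.ofReal a • P₁ + ENNReal.ofReal b • P₂, prob_combo ha hb hab, ?_, ?_⟩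
    · have := integral_combo (int_phi hφ hK P₁) (int_phi hφ hK P₂) ha hb
      simp only [Prod.fst_add, Prod.smul_fst, this, hm₁, hm₂]
    · haveI := prob_combo (P₁ := P₁) (P₂ := P₂) ha hb hab
      have hRR : a * RR f α P₁ + b * RR f α P₂
          ≤ RR f α (ENNReal.ofReal a • P₁ + ENNReal.ofReal b • P₂) := by
        apply le_ciInf
        intro t
        have e : LL f α (ENNReal.ofReal a • P₁ + ENNReal.ofReal b • P₂) t
            = a * LL f α P₁ t + b * LL f α P₂ t := by
          unfold LL
          rw [integral_combo (int_max hfm hfb hM P₁ t) (int_max hfm hfb hM P₂ t) ha hb]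
          simp only [smul_eq_mul]
          have hb' : b = 1 - a := by linarith
          rw [hb']
          ring
        rw [e]
        have r1 := mul_le_mul_of_nonneg_left (RR_le hfm hfb hM ⟨hα0, hα1⟩ P₁ t) ha
        have r2 := mul_le_mul_of_nonneg_left (RR_le hfm hfb hM ⟨hα0, hα1⟩ P₂ t) hb
        linarith
      have : a * p.2 + b * q.2 ≤ a * RR f α P₁ + b * RR f α P₂ :=
        add_le_add (mul_le_mul_of_nonneg_left hs₁ ha) (mul_le_mul_of_nonneg_left hs₂ hb)
      simp only [Prod.snd_add, Prod.smul_snd, smul_eq_mul]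
      linarith
  have hdisj : Disjoint B C := by
    rw [Set.disjoint_left]
    rintro ⟨m, s⟩ hB ⟨P, hP, hm, hs⟩
    obtain ⟨hball, hIoi⟩ := Set.mem_prod.mp hB
    haveI := hP
    have h1 : ‖(∫ ξ, φ ξ ∂P) - mh‖ ≤ ε := by
      rw [← hm]
      exact le_of_lt (by rwa [Metric.mem_ball, dist_eq_norm] at hball)
    have h2 := hmem P hP h1
    have h3 : S < s := hIoi
    simp only at hs
    linarith
  obtain ⟨F, u, hFB, hFC⟩ := geometric_hahn_banach_open hBconv hBopen hCconv hdisj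
  set w : H := (InnerProductSpace.toDual ℝ H).symm (F.comp (ContinuousLinearMap.inl ℝ H ℝ))
    with hwdef
  set β : ℝ := F (0, 1) with hβdef
  have hFsplit : ∀ (m : H) (s : ℝ), F (m, s) = ⟪w, m⟫ + s * β := by
    intro m s
    have h1 : ((m, s) : H × ℝ) = (m, 0) + s • ((0 : H), (1 : ℝ)) := by
      simp [Prod.ext_iff]
    rw [h1, F.map_add, F.map_smul]
    have h2 : F (m, 0) = ⟪w, m⟫ := by
      rw [hwdef, InnerProductSpace.toDual_symm_apply]
      rfl
    rw [h2, smul_eq_mul]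
  have hBside : ∀ (m : H) (s : ℝ), ‖m - mh‖ < ε → S < s → ⟪w, m⟫ + s * β < u := by
    intro m s h1 h2
    have := hFB (m, s) (Set.mem_prod.mpr ⟨by rwa [Metric.mem_ball, dist_eq_norm], h2⟩)
    rwa [hFsplit] at this
  have hCside : ∀ P : Measure Ξ, IsProbabilityMeasure P →
      u ≤ ⟪w, ∫ ξ, φ ξ ∂P⟫ + RR f α P * β := by
    intro P hP
    have := hFC (∫ ξ, φ ξ ∂P, RR f α P) ⟨P, hP, rfl, le_rfl⟩
    rwa [hFsplit] at this
  have hmhball : ∀ s : ℝ, S < s → ⟪w, mh⟫ + s * β < u := by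
    intro s hs
    exact hBside mh s (by simpa using hε) hs
  have hCw : u ≤ ⟪w, mh⟫ + RR f α Pw * β := by
    have := hCside Pw hPw
    rwa [hPwm] at this
  have hβneg : β < 0 := by
    rcases lt_trichotomy β 0 with h | h | h
    · exact h
    · exfalso
      have h1 := hmhball (S + 1) (by linarith)
      rw [h, mul_zero, add_zero] at h1
      rw [h, mul_zero, add_zero] at hCw
      linarith
    · exfalso
      have hsmax : S < max (S + 1) ((u - ⟪w, mh⟫)/β + 1) :=
        lt_of_lt_of_le (by linarith) (le_max_left _ _)
      have h1 := hmhball _ hsmax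
      have h2 : ((u - ⟪w, mh⟫)/β + 1) * β ≤ max (S + 1) ((u - ⟪w, mh⟫)/β + 1) * β :=
        mul_le_mul_of_nonneg_right (le_max_right _ _) h.le
      have h3 : ((u - ⟪w, mh⟫)/β + 1) * β = (u - ⟪w, mh⟫) + β := by
        field_simp
      rw [h3] at h2
      linarith
  set γ : ℝ := -β with hγdef
  have hγ0 : 0 < γ := by rw [hγdef]; linarith
  have hB' : ∀ m : H, ‖m - mh‖ < ε → ⟪w, m⟫ + S * β ≤ u := by
    intro m hm
    by_contra hcon
    push_neg at hcon
    have hpos : 0 < (⟪w, m⟫ + S * β - u)/(2*γ) := div_pos (by linarith) (by linarith)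
    have h1 := hBside m (S + (⟪w, m⟫ + S * β - u)/(2*γ)) hm (by linarith)
    have hβγ : β = -γ := by rw [hγdef]; ring
    have e : (S + (⟪w, m⟫ + S * β - u)/(2*γ)) * β = S * β - (⟪w, m⟫ + S * β - u)/2 := by
      rw [hβγ]
      field_simp
      ring
    rw [e] at h1
    linarith
  have hsup : ⟪w, mh⟫ + ε * ‖w‖ + S * β ≤ u := by
    rcases eq_or_ne w 0 with hw | hw
    · have h1 := hB' mh (by simpa using hε)
      simp only [hw, inner_zero_left, norm_zero, mul_zero, zero_add] at h1 ⊢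
      linarith
    · have hw0 : 0 < ‖w‖ := norm_pos_iff.mpr hw
      have key : ∀ r : ℝ, 0 ≤ r → r < ε → ⟪w, mh⟫ + r * ‖w‖ + S * β ≤ u := by
        intro r hr0 hrε
        have hmub : ‖(mh + (r/‖w‖) • w) - mh‖ < ε := by
          rw [add_sub_cancel_left, norm_smul, Real.norm_eq_abs, abs_div,
            abs_of_nonneg hr0, abs_of_nonneg hw0.le, div_mul_cancel₀ _ hw0.ne']
          exact hrε
        have h1 := hB' (mh + (r/‖w‖) • w) hmub
        rw [inner_add_right, real_inner_smul_right, real_inner_self_eq_norm_mul_norm] at h1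
        have e : (r/‖w‖) * (‖w‖ * ‖w‖) = r * ‖w‖ := by
          field_simp
        rw [e] at h1
        linarith
      by_contra hcon
      push_neg at hcon
      have hD0 : 0 ≤ u - S * β - ⟪w, mh⟫ := by
        have := key 0 le_rfl hε
        linarith
      have hDw : (u - S * β - ⟪w, mh⟫)/‖w‖ < ε := (div_lt_iff₀ hw0).mpr (by linarith)
      have hr0 : 0 ≤ ((u - S * β - ⟪w, mh⟫)/‖w‖ + ε)/2 := by
        have : 0 ≤ (u - S * β - ⟪w, mh⟫)/‖w‖ := div_nonneg hD0 hw0.le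
        linarith
      have hrε : ((u - S * β - ⟪w, mh⟫)/‖w‖ + ε)/2 < ε := by linarith
      have h1 := key _ hr0 hrε
      have e : (((u - S * β - ⟪w, mh⟫)/‖w‖ + ε)/2) * ‖w‖
          = ((u - S * β - ⟪w, mh⟫) + ε * ‖w‖)/2 := by
        field_simp
      rw [e] at h1
      linarith
  refine ⟨γ⁻¹ • w, -(u/γ), ?_, ?_⟩
  · intro P hP
    have h1 := hCside P hP
    have hβγ : β = -γ := by rw [hγdef]; ring
    rw [hβγ] at h1
    have h2 : RR f α P * γ ≤ ⟪w, ∫ ξ, φ ξ ∂P⟫ - u := by nlinarith [h1]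
    rw [real_inner_smul_left]
    calc RR f α P = (RR f α P * γ) * γ⁻¹ := by field_simp
    _ ≤ (⟪w, ∫ ξ, φ ξ ∂P⟫ - u) * γ⁻¹ :=
        mul_le_mul_of_nonneg_right h2 (inv_nonneg.mpr hγ0.le)
    _ = γ⁻¹ * ⟪w, ∫ ξ, φ ξ ∂P⟫ + -(u/γ) := by
        field_simp
        ring
  · rw [real_inner_smul_left, norm_smul, Real.norm_eq_abs, abs_of_pos (inv_pos.mpr hγ0)]
    have hβγ : β = -γ := by rw [hγdef]; ring
    rw [hβγ] at hsup
    have h2 : ⟪w, mh⟫ + ε * ‖w‖ - u ≤ S * γ := by linarith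
    calc -(u/γ) + γ⁻¹ * ⟪w, mh⟫ + ε * (γ⁻¹ * ‖w‖)
        = (⟪w, mh⟫ + ε * ‖w‖ - u) * γ⁻¹ := by field_simp; ring
    _ ≤ (S * γ) * γ⁻¹ := mul_le_mul_of_nonneg_right h2 (inv_nonneg.mpr hγ0.le)
    _ = S := by field_simp

end dual
end DRCVaRAux


open DRCVaRAux

/-- Dual reformulation of the distributionally robust CVaR constraint (Proposition 2).
`f` plays the role of `f(x, ·)` for a fixed decision `x`, assumed Borel measurable,
bounded and lower semicontinuous on the compact metric space `Ξ`.
`CVaR_{1-α}^P[f] = ⨅ t, (E_P[(f+t)_+] - tα)`; the MMD ambiguity set is the ball of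
radius `ε` around the empirical measure of the sample `ξs`, measured via the kernel
mean embeddings `∫ φ dP` and `(1/N) ∑ i, φ (ξs i)`. -/
theorem dual_reformulation_DR_CVaR
    {Ξ : Type*} [MetricSpace Ξ] [CompactSpace Ξ] [MeasurableSpace Ξ] [BorelSpace Ξ]
    {H : Type*} [NormedAddCommGroup H] [InnerProductSpace ℝ H] [CompleteSpace H]
    (φ : Ξ → H) (hφ : Continuous φ)
    {N : ℕ} (hN : 0 < N) (ξs : Fin N → Ξ)
    (ε : ℝ) (hε : 0 < ε) (α : ℝ) (hα : α ∈ Set.Ioo (0 : ℝ) 1)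
    (f : Ξ → ℝ) (hfm : Measurable f) (M : ℝ) (hfb : ∀ ξ, |f ξ| ≤ M)
    (hflsc : LowerSemicontinuous f) :
    -- (1) the DR-CVaR constraint holds iff the dual program is feasible
    (sSup {r : ℝ | ∃ P : Measure Ξ, IsProbabilityMeasure P ∧
        ‖(∫ ξ, φ ξ ∂P) - (N : ℝ)⁻¹ • ∑ i, φ (ξs i)‖ ≤ ε ∧
        r = ⨅ t : ℝ, (∫ ξ, max (f ξ + t) 0 ∂P - t * α)} ≤ 0 ↔
      ∃ t : ℝ, ∃ g₀ : ℝ, ∃ g : H,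
        g₀ + (N : ℝ)⁻¹ * ∑ i, ⟪g, φ (ξs i)⟫ + ε * ‖g‖ ≤ t * α ∧
        ∀ ξ : Ξ, max (f ξ + t) 0 ≤ g₀ + ⟪g, φ ξ⟫)
    ∧
    -- (2) the worst-case CVaR equals the attained minimum of the dual program
    (∃ t : ℝ, ∃ g₀ : ℝ, ∃ g : H,
      (∀ ξ : Ξ, max (f ξ + t) 0 ≤ g₀ + ⟪g, φ ξ⟫) ∧
      g₀ + (N : ℝ)⁻¹ * ∑ i, ⟪g, φ (ξs i)⟫ + ε * ‖g‖ - t * α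
        = sSup {r : ℝ | ∃ P : Measure Ξ, IsProbabilityMeasure P ∧
            ‖(∫ ξ, φ ξ ∂P) - (N : ℝ)⁻¹ • ∑ i, φ (ξs i)‖ ≤ ε ∧
            r = ⨅ s : ℝ, (∫ ξ, max (f ξ + s) 0 ∂P - s * α)} ∧
      (∀ t' : ℝ, ∀ g₀' : ℝ, ∀ g' : H,
        (∀ ξ : Ξ, max (f ξ + t') 0 ≤ g₀' + ⟪g', φ ξ⟫) →
        g₀ + (N : ℝ)⁻¹ * ∑ i, ⟪g, φ (ξs i)⟫ + ε * ‖g‖ - t * α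
          ≤ g₀' + (N : ℝ)⁻¹ * ∑ i, ⟪g', φ (ξs i)⟫ + ε * ‖g'‖ - t' * α)) := by
  obtain ⟨K, hKmem⟩ := (isCompact_range hφ.norm).bddAbove
  have hK : ∀ ξ, ‖φ ξ‖ ≤ K := fun ξ => hKmem ⟨ξ, rfl⟩
  set ξ0 : Ξ := ξs ⟨0, hN⟩ with hξ0def
  have hM0 : 0 ≤ M := le_trans (abs_nonneg _) (hfb ξ0)
  set mh : H := (N : ℝ)⁻¹ • ∑ i, φ (ξs i) with hmhdef
  set 𝒮 : Set ℝ := {r : ℝ | ∃ P : Measure Ξ, IsProbabilityMeasure P ∧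
      ‖(∫ ξ, φ ξ ∂P) - mh‖ ≤ ε ∧
      r = ⨅ t : ℝ, (∫ ξ, max (f ξ + t) 0 ∂P - t * α)} with h𝒮def
  haveI hPhat : IsProbabilityMeasure (Phat ξs) := Phat_prob hN ξs
  have hPhatint : (∫ ξ, φ ξ ∂(Phat ξs)) = mh := by
    rw [integral_Phat ξs φ (fun i => int_norm hφ.aestronglyMeasurable hK)]
  have hSmemPhat : RR f α (Phat ξs) ∈ 𝒮 := by
    refine ⟨Phat ξs, hPhat, ?_, rfl⟩
    rw [hPhatint]
    simp [hε.le]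
  have hSne : 𝒮.Nonempty := ⟨_, hSmemPhat⟩
  have hSbdd : BddAbove 𝒮 := by
    refine ⟨M * α, ?_⟩
    rintro r ⟨P, hP, hPε, rfl⟩
    haveI := hP
    exact RR_le_Mα hfm hfb hM0 hα P
  have hinner_sum : ∀ g' : H, ⟪g', mh⟫ = (N : ℝ)⁻¹ * ∑ i, ⟪g', φ (ξs i)⟫ := by
    intro g'
    rw [hmhdef, real_inner_smul_right, inner_sum]
  have hweak : ∀ (t g₀ : ℝ) (g : H), (∀ ξ, max (f ξ + t) 0 ≤ g₀ + ⟪g, φ ξ⟫) →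
      sSup 𝒮 ≤ g₀ + ⟪g, mh⟫ + ε * ‖g‖ - t * α := by
    intro t g₀ g hfeas
    apply csSup_le hSne
    rintro r ⟨P, hP, hPε, rfl⟩
    haveI := hP
    exact weak_duality hφ hK hfm hfb hM0 hα mh P hPε t g₀ g hfeas
  have hmem : ∀ P : Measure Ξ, IsProbabilityMeasure P →
      ‖(∫ ξ, φ ξ ∂P) - mh‖ ≤ ε → RR f α P ≤ sSup 𝒮 :=
    fun P hP hPe => le_csSup hSbdd ⟨P, hP, hPe, rfl⟩
  obtain ⟨g, c, hgc1, hgc2⟩ :=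
    separation hφ hK hfm hfb hM0 hα hε mh hmem (Phat ξs) hPhat hPhatint
  have hc2pt : ∀ ξ₁ ξ₂ : Ξ,
      (⨅ t : ℝ, ((1-α) * max (f ξ₁ + t) 0 + α * max (f ξ₂ + t) 0 - t * α))
        ≤ (1-α) * ⟪g, φ ξ₁⟫ + α * ⟪g, φ ξ₂⟫ + c := by
    intro ξ₁ ξ₂
    obtain ⟨hα0, hα1⟩ := hα
    set P : Measure Ξ :=
      ENNReal.ofReal (1-α) • Measure.dirac ξ₁ + ENNReal.ofReal α • Measure.dirac ξ₂
      with hPdef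
    haveI hPp : IsProbabilityMeasure P :=
      prob_combo (by linarith) hα0.le (by ring)
    have h1 := hgc1 P hPp
    have hint : (∫ ξ, φ ξ ∂P) = (1-α) • φ ξ₁ + α • φ ξ₂ := by
      rw [hPdef, integral_combo (int_norm hφ.aestronglyMeasurable hK)
        (int_norm hφ.aestronglyMeasurable hK) (by linarith) hα0.le]
      simp [integral_dirac]
    have hLL : ∀ t : ℝ, LL f α P t
        = (1-α) * max (f ξ₁ + t) 0 + α * max (f ξ₂ + t) 0 - t * α := by
      intro t
      unfold DRCVaRAux.LL
      rw [hPdef, integral_combo (int_max hfm hfb hM0 _ t) (int_max hfm hfb hM0 _ t)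
        (by linarith) hα0.le]
      simp [integral_dirac, smul_eq_mul]
    have hRReq : RR f α P
        = ⨅ t : ℝ, ((1-α) * max (f ξ₁ + t) 0 + α * max (f ξ₂ + t) 0 - t * α) := by
      unfold DRCVaRAux.RR
      exact iInf_congr hLL
    rw [hRReq, hint, inner_add_right, real_inner_smul_right, real_inner_smul_right] at h1
    exact h1
  obtain ⟨t₀, g₀, hfeas, hval⟩ := oneD hK hα hfb ξ0 g c hc2pt
  have hvalle : g₀ + ⟪g, mh⟫ + ε * ‖g‖ - t₀ * α ≤ sSup 𝒮 := by linarith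
  have hvaleq : g₀ + ⟪g, mh⟫ + ε * ‖g‖ - t₀ * α = sSup 𝒮 :=
    le_antisymm hvalle (hweak t₀ g₀ g hfeas)
  constructor
  · constructor
    · intro hS0
      refine ⟨t₀, g₀, g, ?_, hfeas⟩
      have h := hinner_sum g
      linarith [hvaleq.le.trans hS0, h.ge]
    · rintro ⟨t, g₀', g', hineq, hfeas'⟩
      have h1 := hweak t g₀' g' hfeas'
      have h2 := hinner_sum g'
      linarith
  · refine ⟨t₀, g₀, g, hfeas, ?_, ?_⟩
    · rw [← hinner_sum g]
      exact hvaleq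
    · intro t' g₀' g' hfeas'
      have h1 := hweak t' g₀' g' hfeas'
      have h2 := hinner_sum g'
      have h3 := hinner_sum g
      linarith
end

section
/- Finite-sample guarantee for MMD-DRCCP constraint satisfaction (deterministic core of Proposition 3). Let P₀ be a probability measure on Ξ, let ξ_1,…,ξ_N ∈ Ξ with empirical measure P̂_N, and suppose φ is P₀-Bochner-integrable and f(x̂,·) : Ξ → ℝ is Borel measurable and bounded. Fix x̂, ĝ ∈ H, t̂ ∈ ℝ, α ∈ (0,1), ρ ≥ 0 and ℰ ≥ 0, and assume: (i) MMD(P₀, P̂_N) ≤ ρ; (ii) ∫ ( (f(x̂,ξ)+t̂)_+ − ⟨ĝ, φ(ξ)⟩_H ) dP₀(ξ) ≤ (1/N)∑_{i=1}^N ( (f(x̂,ξ_i)+t̂)_+ − ⟨ĝ, φ(ξ_i)⟩_H ) + ℰ; (iii) (f(x̂,ξ_i)+t̂)_+ ≤ ⟨ĝ, φ(ξ_i)⟩_H for every i = 1,…,N; and (iv) (1/N)∑_{i=1}^N ⟨ĝ, φ(ξ_i)⟩_H + ρ‖ĝ‖_H ≤ t̂α. Then CVaR_{1−α}^{P₀}[f(x̂,·)]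 ≤ ℰ. -/
open MeasureTheory RealInnerProductSpace

/-- Finite-sample guarantee for MMD-DRCCP constraint satisfaction
(deterministic core of Proposition 3).
`f` plays the role of `f(x̂, ·)` for the computed solution `x̂`, `ghat` of `ĝ`,
`that` of `t̂` and `Err` of the error level `ℰ`.
`CVaR_{1-α}^{P₀}[f] = ⨅ t, (E_{P₀}[(f+t)_+] - tα)`; `MMD(P₀, P̂_N)` is
`‖∫ φ ∂P₀ - (1/N) ∑ i, φ (ξs i)‖`. -/
theorem finite_sample_guarantee_CVaR
    {Ξ : Type*} [MetricSpace Ξ] [MeasurableSpace Ξ] [BorelSpace Ξ]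
    {H : Type*} [NormedAddCommGroup H] [InnerProductSpace ℝ H] [CompleteSpace H]
    (φ : Ξ → H)
    (P₀ : Measure Ξ) [IsProbabilityMeasure P₀] (hφ : Integrable φ P₀)
    {N : ℕ} (hN : 0 < N) (ξs : Fin N → Ξ)
    (f : Ξ → ℝ) (hfm : Measurable f) (M : ℝ) (hfb : ∀ ξ, |f ξ| ≤ M)
    (ghat : H) (that α ρ Err : ℝ)
    (hα : α ∈ Set.Ioo (0 : ℝ) 1) (hρ : 0 ≤ ρ) (hErr : 0 ≤ Err)
    -- (i) the ambiguity radius dominates the estimation error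
    (hMMD : ‖(∫ ξ, φ ξ ∂P₀) - (N : ℝ)⁻¹ • ∑ i, φ (ξs i)‖ ≤ ρ)
    -- (ii) population–empirical gap bound
    (hgap : ∫ ξ, (max (f ξ + that) 0 - ⟪ghat, φ ξ⟫) ∂P₀
        ≤ (N : ℝ)⁻¹ * ∑ i, (max (f (ξs i) + that) 0 - ⟪ghat, φ (ξs i)⟫) + Err)
    -- (iii) sampled majorization constraints
    (hsample : ∀ i, max (f (ξs i) + that) 0 ≤ ⟪ghat, φ (ξs i)⟫)
    -- (iv) risk constraint
    (hrisk : (N : ℝ)⁻¹ * ∑ i, ⟪ghat, φ (ξs i)⟫ + ρ * ‖ghat‖ ≤ that * α) :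
    (⨅ t : ℝ, (∫ ξ, max (f ξ + t) 0 ∂P₀ - t * α)) ≤ Err := by
  by_cases hbdd : BddBelow (Set.range fun t : ℝ => ∫ ξ, max (f ξ + t) 0 ∂P₀ - t * α)
  · refine le_trans (ciInf_le hbdd that) ?_
    -- integrability facts
    have hmax_int : Integrable (fun ξ => max (f ξ + that) 0) P₀ := by
      refine Integrable.mono' (integrable_const (M + |that|))
        ((hfm.add_const that).max measurable_const).aestronglyMeasurable ?_
      refine Filter.Eventually.of_forall fun ξ => ?_
      have h1 : |f ξ + that| ≤ M + |that| :=
        le_trans (abs_add_le _ _) (add_le_add_left (hfb ξ) _)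
      rw [Real.norm_eq_abs]
      have hM : (0:ℝ) ≤ M := le_trans (abs_nonneg _) (hfb ξ)
      rw [abs_le] at h1 ⊢
      refine ⟨by linarith [le_max_left (f ξ + that) (0:ℝ)],
        max_le h1.2 (by positivity)⟩
    have hinner_int : Integrable (fun ξ => ⟪ghat, φ ξ⟫) P₀ := hφ.const_inner ghat
    have hsplit : ∫ ξ, (max (f ξ + that) 0 - ⟪ghat, φ ξ⟫) ∂P₀
        = (∫ ξ, max (f ξ + that) 0 ∂P₀) - ∫ ξ, ⟪ghat, φ ξ⟫ ∂P₀ :=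
      integral_sub hmax_int hinner_int
    have hinner_eq : ∫ ξ, ⟪ghat, φ ξ⟫ ∂P₀ = ⟪ghat, ∫ ξ, φ ξ ∂P₀⟫ := integral_inner hφ ghat
    -- Cauchy–Schwarz step
    have hcs : ⟪ghat, ∫ ξ, φ ξ ∂P₀⟫
        ≤ (N : ℝ)⁻¹ * ∑ i, ⟪ghat, φ (ξs i)⟫ + ρ * ‖ghat‖ := by
      have h1 : ⟪ghat, (∫ ξ, φ ξ ∂P₀) - (N : ℝ)⁻¹ • ∑ i, φ (ξs i)⟫
          ≤ ρ * ‖ghat‖ := by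
        calc ⟪ghat, (∫ ξ, φ ξ ∂P₀) - (N : ℝ)⁻¹ • ∑ i, φ (ξs i)⟫
            ≤ ‖ghat‖ * ‖(∫ ξ, φ ξ ∂P₀) - (N : ℝ)⁻¹ • ∑ i, φ (ξs i)‖ :=
              real_inner_le_norm _ _
          _ ≤ ‖ghat‖ * ρ := by
              exact mul_le_mul_of_nonneg_left hMMD (norm_nonneg _)
          _ = ρ * ‖ghat‖ := mul_comm _ _
      have h2 : ⟪ghat, ((N : ℝ)⁻¹ • ∑ i, φ (ξs i) : H)⟫
          = (N : ℝ)⁻¹ * ∑ i, ⟪ghat, φ (ξs i)⟫ := by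
        rw [inner_smul_right, inner_sum]
      have h3 : ⟪ghat, ∫ ξ, φ ξ ∂P₀⟫
          = ⟪ghat, (∫ ξ, φ ξ ∂P₀) - (N : ℝ)⁻¹ • ∑ i, φ (ξs i)⟫
            + ⟪ghat, ((N : ℝ)⁻¹ • ∑ i, φ (ξs i) : H)⟫ := by
        rw [← inner_add_right, sub_add_cancel]
      rw [h3, h2]; linarith
    have hsum_nonpos : (N : ℝ)⁻¹ * ∑ i, (max (f (ξs i) + that) 0 - ⟪ghat, φ (ξs i)⟫) ≤ 0 := by
      apply mul_nonpos_of_nonneg_of_nonpos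
      · positivity
      · exact Finset.sum_nonpos fun i _ => sub_nonpos.mpr (hsample i)
    have : ∫ ξ, max (f ξ + that) 0 ∂P₀
        ≤ (N : ℝ)⁻¹ * ∑ i, ⟪ghat, φ (ξs i)⟫ + ρ * ‖ghat‖ + Err := by
      have := hgap
      rw [hsplit, hinner_eq] at this
      linarith
    linarith
  · rw [Real.iInf_of_not_bddBelow hbdd]; exact hErr
end

section
/- Finite-sample chance-constraint satisfaction (Corollary, deterministic core). Under the hypotheses (i)–(iv) of the deterministic finite-sample guarantee — namely MMD(P₀, P̂_N) ≤ ρ; the population–empirical gap bound ∫((f(x̂,ξ)+t̂)_+ − ⟨ĝ, φ(ξ)⟩_H) dP₀ ≤ (1/N)∑_i ((f(x̂,ξ_i)+t̂)_+ − ⟨ĝ, φ(ξ_i)⟩_H) + ℰ; the sampled constraints (f(x̂,ξ_i)+t̂)_+ ≤ ⟨ĝ, φ(ξ_i)⟩_H for all i; and the risk constraint (1/N)∑_i ⟨ĝ, φ(ξ_i)⟩_H + ρ‖ĝ‖_H ≤ t̂α — the solution x̂ satisfies the chance constraint up to error ℰ/α: P₀{ ξ ∈ Ξ : f(x̂,ξ)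 ≤ ℰ/α } ≥ 1 − α. -/
open MeasureTheory RealInnerProductSpace

/-- Finite-sample chance-constraint satisfaction (Corollary, deterministic core).
`f` plays the role of `f(x̂, ·)` for the computed solution `x̂`, `ghat` of `ĝ`,
`that` of `t̂` and `Err` of the error level `ℰ`. Under hypotheses (i)–(iv) of the
deterministic finite-sample guarantee, the chance constraint holds up to error
`Err / α`: `P₀ {ξ | f ξ ≤ Err / α} ≥ 1 - α`. -/
theorem finite_sample_guarantee_chance_constraint
    {Ξ : Type*} [MetricSpace Ξ] [MeasurableSpace Ξ] [BorelSpace Ξ]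
    {H : Type*} [NormedAddCommGroup H] [InnerProductSpace ℝ H] [CompleteSpace H]
    (φ : Ξ → H)
    (P₀ : Measure Ξ) [IsProbabilityMeasure P₀] (hφ : Integrable φ P₀)
    {N : ℕ} (hN : 0 < N) (ξs : Fin N → Ξ)
    (f : Ξ → ℝ) (hfm : Measurable f) (M : ℝ) (hfb : ∀ ξ, |f ξ| ≤ M)
    (ghat : H) (that α ρ Err : ℝ)
    (hα : α ∈ Set.Ioo (0 : ℝ) 1) (hρ : 0 ≤ ρ) (hErr : 0 ≤ Err)
    -- (i) the ambiguity radius dominates the estimation error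
    (hMMD : ‖(∫ ξ, φ ξ ∂P₀) - (N : ℝ)⁻¹ • ∑ i, φ (ξs i)‖ ≤ ρ)
    -- (ii) population–empirical gap bound
    (hgap : ∫ ξ, (max (f ξ + that) 0 - ⟪ghat, φ ξ⟫) ∂P₀
        ≤ (N : ℝ)⁻¹ * ∑ i, (max (f (ξs i) + that) 0 - ⟪ghat, φ (ξs i)⟫) + Err)
    -- (iii) sampled majorization constraints
    (hsample : ∀ i, max (f (ξs i) + that) 0 ≤ ⟪ghat, φ (ξs i)⟫)
    -- (iv) risk constraint
    (hrisk : (N : ℝ)⁻¹ * ∑ i, ⟪ghat, φ (ξs i)⟫ + ρ * ‖ghat‖ ≤ that * α) :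
    1 - α ≤ (P₀ {ξ : Ξ | f ξ ≤ Err / α}).toReal := by
  obtain ⟨hα0, hα1⟩ := hα
  set h : Ξ → ℝ := fun ξ => max (f ξ + that) 0 with hh_def
  have hh_meas : Measurable h := (hfm.add_const that).max measurable_const
  have hh_int : Integrable h P₀ := by
    refine (integrable_const (M + |that|)).mono' hh_meas.aestronglyMeasurable ?_
    have hM0 : 0 ≤ M := le_trans (abs_nonneg _) (hfb (ξs ⟨0, hN⟩))
    filter_upwards with ξ
    have := hfb ξ
    simp only [hh_def, Real.norm_eq_abs]
    rw [abs_of_nonneg (le_max_right _ _)]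
    refine max_le ?_ (by positivity)
    calc f ξ + that ≤ |f ξ| + |that| := add_le_add (le_abs_self _) (le_abs_self _)
      _ ≤ M + |that| := by linarith
  have hg_int : Integrable (fun ξ => ⟪ghat, φ ξ⟫) P₀ := hφ.const_inner ghat
  -- sum in (ii) is ≤ 0
  have hsum : (N : ℝ)⁻¹ * ∑ i, (max (f (ξs i) + that) 0 - ⟪ghat, φ (ξs i)⟫) ≤ 0 := by
    apply mul_nonpos_of_nonneg_of_nonpos (by positivity)
    exact Finset.sum_nonpos fun i _ => sub_nonpos.mpr (hsample i)
  -- ∫ h ≤ ∫ ⟪ghat, φ⟫ + Err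
  have h1 : ∫ ξ, h ξ ∂P₀ ≤ (∫ ξ, ⟪ghat, φ ξ⟫ ∂P₀) + Err := by
    have := integral_sub hh_int hg_int
    have h2 : ∫ ξ, (h ξ - ⟪ghat, φ ξ⟫) ∂P₀ ≤ Err := le_trans hgap (by linarith)
    rw [this] at h2; linarith
  -- ∫ ⟪ghat, φ⟫ ≤ that * α
  have h3 : (∫ ξ, ⟪ghat, φ ξ⟫ ∂P₀) ≤ that * α := by
    have hi : (∫ ξ, ⟪ghat, φ ξ⟫ ∂P₀) = ⟪ghat, ∫ ξ, φ ξ ∂P₀⟫ := integral_inner hφ ghat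
    have hsplit : ⟪ghat, ∫ ξ, φ ξ ∂P₀⟫
        = ⟪ghat, (N : ℝ)⁻¹ • ∑ i, φ (ξs i)⟫
          + ⟪ghat, (∫ ξ, φ ξ ∂P₀) - (N : ℝ)⁻¹ • ∑ i, φ (ξs i)⟫ := by
      rw [← inner_add_right]; congr 1; abel
    have hc : ⟪ghat, (∫ ξ, φ ξ ∂P₀) - (N : ℝ)⁻¹ • ∑ i, φ (ξs i)⟫ ≤ ρ * ‖ghat‖ := by
      calc ⟪ghat, (∫ ξ, φ ξ ∂P₀) - (N : ℝ)⁻¹ • ∑ i, φ (ξs i)⟫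
          ≤ ‖ghat‖ * ‖(∫ ξ, φ ξ ∂P₀) - (N : ℝ)⁻¹ • ∑ i, φ (ξs i)‖ :=
            real_inner_le_norm _ _
        _ ≤ ‖ghat‖ * ρ := mul_le_mul_of_nonneg_left hMMD (norm_nonneg _)
        _ = ρ * ‖ghat‖ := mul_comm _ _
    have hemp : ⟪ghat, (N : ℝ)⁻¹ • ∑ i, φ (ξs i)⟫ = (N : ℝ)⁻¹ * ∑ i, ⟪ghat, φ (ξs i)⟫ := by
      rw [inner_smul_right, inner_sum]
    rw [hi, hsplit, hemp]
    linarith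
  have hint : ∫ ξ, h ξ ∂P₀ ≤ α * (that + Err / α) := by
    have : α * (that + Err / α) = that * α + Err := by
      field_simp
    linarith
  have hint0 : 0 ≤ ∫ ξ, h ξ ∂P₀ := integral_nonneg fun ξ => le_max_right _ _
  set c := that + Err / α with hc_def
  have hc0 : 0 ≤ c := nonneg_of_mul_nonneg_right (le_trans hint0 hint) hα0
  -- the complement has measure ≤ α
  have hbad : (P₀ {ξ : Ξ | Err / α < f ξ}).toReal ≤ α := by
    rcases eq_or_lt_of_le hc0 with hc0' | hc0'
    · -- c = 0 : ∫ h = 0 so h = 0 a.e., but h > 0 on the bad set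
      have hint00 : ∫ ξ, h ξ ∂P₀ = 0 := le_antisymm (by rw [← hc0'] at hint; simpa using hint) hint0
      have hae : h =ᵐ[P₀] 0 :=
        (integral_eq_zero_iff_of_nonneg (fun ξ => le_max_right _ _) hh_int).mp hint00
      have hnull : P₀ {ξ : Ξ | Err / α < f ξ} = 0 := by
        refine measure_mono_null ?_ (ae_iff.mp hae)
        intro ξ hξ
        have hξ' : Err / α < f ξ := hξ
        have hca : that + Err / α = 0 := by rw [← hc_def, ← hc0']
        have hpos : 0 < f ξ + that := by linarith
        have : 0 < h ξ := lt_of_lt_of_le hpos (le_max_left _ _)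
        simp only [Set.mem_setOf_eq, Pi.zero_apply]
        exact fun hz => absurd hz (ne_of_gt this)
      rw [hnull]; simpa using hα0.le
    · -- c > 0 : Markov
      have hmarkov := mul_meas_ge_le_integral_of_nonneg
        (Filter.Eventually.of_forall fun ξ => le_max_right (f ξ + that) 0) hh_int c
      have hsub : P₀ {ξ : Ξ | Err / α < f ξ} ≤ P₀ {ξ : Ξ | c ≤ h ξ} := by
        apply measure_mono
        intro ξ hξ
        have : Err / α < f ξ := hξ
        have : c ≤ f ξ + that := by rw [hc_def]; linarith
        exact le_trans this (le_max_left _ _)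
      have hfin : P₀ {ξ : Ξ | c ≤ h ξ} ≠ ⊤ := measure_ne_top _ _
      have h4 : (P₀ {ξ : Ξ | Err / α < f ξ}).toReal ≤ (P₀ {ξ : Ξ | c ≤ h ξ}).toReal :=
        ENNReal.toReal_mono hfin hsub
      have h5 : c * (P₀ {ξ : Ξ | c ≤ h ξ}).toReal ≤ α * c := le_trans hmarkov (by linarith)
      have h6 : (P₀ {ξ : Ξ | c ≤ h ξ}).toReal ≤ α := by
        rw [mul_comm α c] at h5
        exact le_of_mul_le_mul_left h5 hc0'
      linarith
  -- conclude
  have hmeas : MeasurableSet {ξ : Ξ | f ξ ≤ Err / α} := measurableSet_le hfm measurable_const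
  have hcompl : {ξ : Ξ | f ξ ≤ Err / α}ᶜ = {ξ : Ξ | Err / α < f ξ} := by
    ext ξ; simp [not_le]
  have hadd : P₀ {ξ : Ξ | f ξ ≤ Err / α} + P₀ {ξ : Ξ | f ξ ≤ Err / α}ᶜ = 1 :=
    (measure_add_measure_compl hmeas).trans measure_univ
  have htot : (P₀ {ξ : Ξ | f ξ ≤ Err / α}).toReal
      + (P₀ {ξ : Ξ | Err / α < f ξ}).toReal = 1 := by
    rw [← hcompl, ← ENNReal.toReal_add (measure_ne_top _ _) (measure_ne_top _ _), hadd,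
      ENNReal.toReal_one]
  linarith
end

section
/- Weak duality for the indicator (chance) constraint. Fix a decision x, points ξ_1,…,ξ_N ∈ Ξ, ε > 0, and suppose f(x,·) : Ξ → ℝ is Borel measurable. Suppose g₀ ∈ ℝ and g ∈ H satisfy 𝟙(f(x,ξ) > 0) ≤ g₀ + ⟨g, φ(ξ)⟩_H for every ξ ∈ Ξ. Then for every probability measure P on Ξ with φ P-Bochner-integrable and MMD(P, P̂_N) ≤ ε, one has P{ξ : f(x,ξ) > 0} ≤ g₀ + (1/N)∑_{i=1}^N ⟨g, φ(ξ_i)⟩_H + ε‖g‖_H. In particular, if g₀ + (1/N)∑_{i=1}^N ⟨g, φ(ξ_i)⟩_H + ε‖g‖_H ≤ α, then P{ξ : f(x,ξ) ≤ 0} ≥ 1 − α for every such P. -/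
open MeasureTheory RealInnerProductSpace

/-- Weak duality for the indicator (chance) constraint.
`f` plays the role of `f(x, ·)` for a fixed decision `x`. If `g₀ + ⟪g, φ ·⟫`
majorizes the indicator of `{ξ | f ξ > 0}` pointwise, then for every probability
measure `P` with `φ` Bochner-integrable and `MMD(P, P̂_N) ≤ ε` the probability
`P {f > 0}` is bounded by the dual objective; in particular, if the dual objective
is at most `α` then the chance constraint `P {f ≤ 0} ≥ 1 - α` holds for all such `P`. -/
theorem weak_duality_indicator_constraint
    {Ξ : Type*} [MetricSpace Ξ] [MeasurableSpace Ξ] [BorelSpace Ξ]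
    {H : Type*} [NormedAddCommGroup H] [InnerProductSpace ℝ H] [CompleteSpace H]
    [MeasurableSpace H] [BorelSpace H]
    (φ : Ξ → H) (hφm : Measurable φ)
    {N : ℕ} (hN : 0 < N) (ξs : Fin N → Ξ)
    (ε : ℝ) (hε : 0 < ε) (α : ℝ) (hα : α ∈ Set.Ioo (0 : ℝ) 1)
    (f : Ξ → ℝ) (hfm : Measurable f)
    (g₀ : ℝ) (g : H)
    (hmaj : ∀ ξ : Ξ, (if 0 < f ξ then (1 : ℝ) else 0) ≤ g₀ + ⟪g, φ ξ⟫) :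
    (∀ P : Measure Ξ, IsProbabilityMeasure P → Integrable φ P →
      ‖(∫ ξ, φ ξ ∂P) - (N : ℝ)⁻¹ • ∑ i, φ (ξs i)‖ ≤ ε →
      (P {ξ : Ξ | 0 < f ξ}).toReal
        ≤ g₀ + (N : ℝ)⁻¹ * ∑ i, ⟪g, φ (ξs i)⟫ + ε * ‖g‖)
    ∧
    (g₀ + (N : ℝ)⁻¹ * ∑ i, ⟪g, φ (ξs i)⟫ + ε * ‖g‖ ≤ α →
      ∀ P : Measure Ξ, IsProbabilityMeasure P → Integrable φ P →
        ‖(∫ ξ, φ ξ ∂P) - (N : ℝ)⁻¹ • ∑ i, φ (ξs i)‖ ≤ ε →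
        1 - α ≤ (P {ξ : Ξ | f ξ ≤ 0}).toReal) := by
  have hS : MeasurableSet {ξ : Ξ | 0 < f ξ} := measurableSet_lt measurable_const hfm
  have main : ∀ P : Measure Ξ, IsProbabilityMeasure P → Integrable φ P →
      ‖(∫ ξ, φ ξ ∂P) - (N : ℝ)⁻¹ • ∑ i, φ (ξs i)‖ ≤ ε →
      (P {ξ : Ξ | 0 < f ξ}).toReal
        ≤ g₀ + (N : ℝ)⁻¹ * ∑ i, ⟪g, φ (ξs i)⟫ + ε * ‖g‖ := by
    intro P hP hint hmmd
    set memp : H := (N : ℝ)⁻¹ • ∑ i, φ (ξs i) with hmemp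
    have hind : (P {ξ : Ξ | 0 < f ξ}).toReal
        = ∫ ξ, Set.indicator {ξ : Ξ | 0 < f ξ} 1 ξ ∂P := by
      rw [integral_indicator_one hS]; rfl
    have hintg : Integrable (fun ξ => g₀ + ⟪g, φ ξ⟫) P :=
      (integrable_const g₀).add (hint.const_inner g)
    have hindint : Integrable (Set.indicator {ξ : Ξ | 0 < f ξ} (1 : Ξ → ℝ)) P := by
      exact (integrable_const (1 : ℝ)).indicator hS
    have h1 : (P {ξ : Ξ | 0 < f ξ}).toReal ≤ ∫ ξ, (g₀ + ⟪g, φ ξ⟫) ∂P := by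
      rw [hind]
      refine integral_mono hindint hintg ?_
      intro ξ
      have h := hmaj ξ
      by_cases hx : 0 < f ξ <;>
        simpa [Set.indicator, Set.mem_setOf_eq, hx] using h
    have h2 : ∫ ξ, (g₀ + ⟪g, φ ξ⟫) ∂P = g₀ + ⟪g, ∫ ξ, φ ξ ∂P⟫ := by
      rw [integral_add (integrable_const g₀) (hint.const_inner g), integral_const,
        probReal_univ, one_smul, integral_inner hint]
    have h3 : ⟪g, ∫ ξ, φ ξ ∂P⟫ = ⟪g, memp⟫ + ⟪g, (∫ ξ, φ ξ ∂P) - memp⟫ := by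
      rw [← inner_add_right]; congr 1; abel
    have h4 : ⟪g, memp⟫ = (N : ℝ)⁻¹ * ∑ i, ⟪g, φ (ξs i)⟫ := by
      rw [hmemp, inner_smul_right, inner_sum]
    have h5 : ⟪g, (∫ ξ, φ ξ ∂P) - memp⟫ ≤ ε * ‖g‖ := by
      calc ⟪g, (∫ ξ, φ ξ ∂P) - memp⟫ ≤ ‖g‖ * ‖(∫ ξ, φ ξ ∂P) - memp‖ := real_inner_le_norm _ _
        _ ≤ ‖g‖ * ε := by
          exact mul_le_mul_of_nonneg_left hmmd (norm_nonneg g)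
        _ = ε * ‖g‖ := mul_comm _ _
    calc (P {ξ : Ξ | 0 < f ξ}).toReal ≤ ∫ ξ, (g₀ + ⟪g, φ ξ⟫) ∂P := h1
      _ = g₀ + (⟪g, memp⟫ + ⟪g, (∫ ξ, φ ξ ∂P) - memp⟫) := by rw [h2, h3]
      _ ≤ g₀ + ((N : ℝ)⁻¹ * ∑ i, ⟪g, φ (ξs i)⟫ + ε * ‖g‖) := by
          rw [h4]; gcongr
      _ = g₀ + (N : ℝ)⁻¹ * ∑ i, ⟪g, φ (ξs i)⟫ + ε * ‖g‖ := by ring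
  refine ⟨main, ?_⟩
  intro hdual P hP hint hmmd
  have hb := main P hP hint hmmd
  have hcompl : {ξ : Ξ | f ξ ≤ 0} = {ξ : Ξ | 0 < f ξ}ᶜ := by
    ext ξ; simp [not_lt]
  rw [hcompl, prob_compl_eq_one_sub hS, ENNReal.toReal_sub_of_le prob_le_one ENNReal.one_ne_top,
    ENNReal.toReal_one]
  linarith
end

section
/- Weak duality for the distributionally robust CVaR constraint. Fix a decision x, points ξ_1,…,ξ_N ∈ Ξ, ε > 0, α ∈ (0,1), and suppose f(x,·) : Ξ → ℝ is Borel measurable. Suppose t, g₀ ∈ ℝ and g ∈ H satisfy (f(x,ξ)+t)_+ ≤ g₀ + ⟨g, φ(ξ)⟩_H for every ξ ∈ Ξ. Then for every probability measure P on Ξ with φ P-Bochner-integrable, f(x,·) P-integrable, and MMD(P, P̂_N) ≤ ε, one has CVaR_{1−α}^P[f(x,·)] ≤ g₀ + (1/N)∑_{i=1}^N ⟨g, φ(ξ_i)⟩_H + ε‖g‖_H − tα. In particular, if g₀ + (1/N)∑_{i=1}^N ⟨g, φ(ξ_i)⟩_H + ε‖g‖_H ≤ tα, then sup over such P of CVaR_{1−α}^P[f(x,·)]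 is ≤ 0. -/
open MeasureTheory RealInnerProductSpace

/-- Weak duality for the distributionally robust CVaR constraint.
`f` plays the role of `f(x, ·)` for a fixed decision `x`;
`CVaR_{1-α}^P[f] = ⨅ s, (E_P[(f+s)_+] - sα)`. If `g₀ + ⟪g, φ ·⟫` majorizes
`(f + t)_+` pointwise, then for every probability measure `P` with `φ`
Bochner-integrable, `f` `P`-integrable and `MMD(P, P̂_N) ≤ ε`, the CVaR is bounded
by the dual objective minus `tα`; in particular if the dual objective is at most
`tα` then `CVaR_{1-α}^P[f] ≤ 0` for every such `P`. -/
theorem weak_duality_DR_CVaR_constraint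
    {Ξ : Type*} [MetricSpace Ξ] [MeasurableSpace Ξ] [BorelSpace Ξ]
    {H : Type*} [NormedAddCommGroup H] [InnerProductSpace ℝ H] [CompleteSpace H]
    [MeasurableSpace H] [BorelSpace H]
    (φ : Ξ → H) (hφm : Measurable φ)
    {N : ℕ} (hN : 0 < N) (ξs : Fin N → Ξ)
    (ε : ℝ) (hε : 0 < ε) (α : ℝ) (hα : α ∈ Set.Ioo (0 : ℝ) 1)
    (f : Ξ → ℝ) (hfm : Measurable f)
    (t g₀ : ℝ) (g : H)
    (hmaj : ∀ ξ : Ξ, max (f ξ + t) 0 ≤ g₀ + ⟪g, φ ξ⟫) :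
    (∀ P : Measure Ξ, IsProbabilityMeasure P → Integrable φ P → Integrable f P →
      ‖(∫ ξ, φ ξ ∂P) - (N : ℝ)⁻¹ • ∑ i, φ (ξs i)‖ ≤ ε →
      (⨅ s : ℝ, (∫ ξ, max (f ξ + s) 0 ∂P - s * α))
        ≤ g₀ + (N : ℝ)⁻¹ * ∑ i, ⟪g, φ (ξs i)⟫ + ε * ‖g‖ - t * α)
    ∧
    (g₀ + (N : ℝ)⁻¹ * ∑ i, ⟪g, φ (ξs i)⟫ + ε * ‖g‖ ≤ t * α →
      ∀ P : Measure Ξ, IsProbabilityMeasure P → Integrable φ P → Integrable f P →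
        ‖(∫ ξ, φ ξ ∂P) - (N : ℝ)⁻¹ • ∑ i, φ (ξs i)‖ ≤ ε →
        (⨅ s : ℝ, (∫ ξ, max (f ξ + s) 0 ∂P - s * α)) ≤ 0) := by
  have key : ∀ P : Measure Ξ, IsProbabilityMeasure P → Integrable φ P → Integrable f P →
      ‖(∫ ξ, φ ξ ∂P) - (N : ℝ)⁻¹ • ∑ i, φ (ξs i)‖ ≤ ε →
      (⨅ s : ℝ, (∫ ξ, max (f ξ + s) 0 ∂P - s * α))
        ≤ g₀ + (N : ℝ)⁻¹ * ∑ i, ⟪g, φ (ξs i)⟫ + ε * ‖g‖ - t * α := by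
    intro P hP hφi hfi hmmd
    obtain ⟨hα0, hα1⟩ := hα
    -- integrability of max (f + s) 0
    have hint : ∀ s : ℝ, Integrable (fun ξ => max (f ξ + s) 0) P := by
      intro s
      exact (hfi.add (integrable_const s)).pos_part
    -- bounded below
    have hbdd : BddBelow (Set.range fun s : ℝ => ∫ ξ, max (f ξ + s) 0 ∂P - s * α) := by
      refine ⟨α * ∫ ξ, f ξ ∂P, ?_⟩
      rintro _ ⟨s, rfl⟩
      have hle : ∀ ξ, α * (f ξ + s) ≤ max (f ξ + s) 0 := by
        intro ξ
        rcases le_or_gt 0 (f ξ + s) with h | h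
        · calc α * (f ξ + s) ≤ 1 * (f ξ + s) := by
                exact mul_le_mul_of_nonneg_right hα1.le h
          _ = f ξ + s := one_mul _
          _ ≤ max (f ξ + s) 0 := le_max_left _ _
        · have : α * (f ξ + s) ≤ 0 := mul_nonpos_of_nonneg_of_nonpos hα0.le h.le
          exact this.trans (le_max_right _ _)
      have h1 : ∫ ξ, α * (f ξ + s) ∂P ≤ ∫ ξ, max (f ξ + s) 0 ∂P :=
        integral_mono ((hfi.add (integrable_const s)).const_mul α) (hint s)
          hle
      have h2 : ∫ ξ, α * (f ξ + s) ∂P = α * (∫ ξ, f ξ ∂P) + α * s := by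
        rw [integral_const_mul, integral_add hfi (integrable_const s),
          integral_const]
        simp [mul_add]
      simp only [Set.mem_setOf_eq]
      have := h1
      rw [h2] at this
      linarith
    -- inner ∘ φ integrable
    have hinner : Integrable (fun ξ => ⟪g, φ ξ⟫) P :=
      (innerSL ℝ g).integrable_comp hφi
    -- bound at s = t
    have h1 : (⨅ s : ℝ, (∫ ξ, max (f ξ + s) 0 ∂P - s * α))
        ≤ ∫ ξ, max (f ξ + t) 0 ∂P - t * α := ciInf_le hbdd t
    have h2 : ∫ ξ, max (f ξ + t) 0 ∂P ≤ ∫ ξ, (g₀ + ⟪g, φ ξ⟫) ∂P :=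
      integral_mono (hint t) ((integrable_const g₀).add hinner) hmaj
    have h3 : ∫ ξ, (g₀ + ⟪g, φ ξ⟫) ∂P = g₀ + ⟪g, ∫ ξ, φ ξ ∂P⟫ := by
      rw [integral_add (integrable_const g₀) hinner, integral_const]
      have : ∫ ξ, ⟪g, φ ξ⟫ ∂P = ⟪g, ∫ ξ, φ ξ ∂P⟫ :=
        (innerSL ℝ g).integral_comp_comm hφi
      simp [this]
    have h4 : ⟪g, ∫ ξ, φ ξ ∂P⟫
        ≤ (N : ℝ)⁻¹ * ∑ i, ⟪g, φ (ξs i)⟫ + ε * ‖g‖ := by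
      have heq : ⟪g, ∫ ξ, φ ξ ∂P⟫
          = ⟪g, (N : ℝ)⁻¹ • ∑ i, φ (ξs i)⟫
            + ⟪g, (∫ ξ, φ ξ ∂P) - (N : ℝ)⁻¹ • ∑ i, φ (ξs i)⟫ := by
        rw [← inner_add_right]; congr 1; abel
      have hcs : ⟪g, (∫ ξ, φ ξ ∂P) - (N : ℝ)⁻¹ • ∑ i, φ (ξs i)⟫
          ≤ ‖g‖ * ε := by
        calc ⟪g, (∫ ξ, φ ξ ∂P) - (N : ℝ)⁻¹ • ∑ i, φ (ξs i)⟫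
            ≤ ‖g‖ * ‖(∫ ξ, φ ξ ∂P) - (N : ℝ)⁻¹ • ∑ i, φ (ξs i)‖ :=
              real_inner_le_norm _ _
          _ ≤ ‖g‖ * ε := mul_le_mul_of_nonneg_left hmmd (norm_nonneg g)
      have hemp : ⟪g, (N : ℝ)⁻¹ • ∑ i, φ (ξs i)⟫
          = (N : ℝ)⁻¹ * ∑ i, ⟪g, φ (ξs i)⟫ := by
        rw [inner_smul_right, inner_sum]
      rw [heq, hemp]
      nlinarith [hcs]
    linarith
  refine ⟨key, fun hdual P hP hφi hfi hmmd => ?_⟩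
  have := key P hP hφi hfi hmmd
  linarith
end

section
/- Finite-sample concentration of the empirical kernel mean embedding (the dimension-free radius bound, equation (5)). Let P₀ be a probability measure on Ξ, suppose the kernel satisfies sup_{ξ∈Ξ} k(ξ,ξ) ≤ C for some constant C > 0 (equivalently ‖φ(ξ)‖_H² ≤ C for all ξ), and let δ ∈ (0,1). Let ξ_1,…,ξ_N be i.i.d. with law P₀ and let P̂_N = (1/N)∑_{i=1}^N δ_{ξ_i} be the empirical measure. Then with probability at least 1−δ over the sample, MMD(P₀, P̂_N) = ‖μ_{P₀} − (1/N)∑_{i=1}^N φ(ξ_i)‖_H ≤ √(C/N) + √(2C log(1/δ)/N). -/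
open Real MeasureTheory RealInnerProductSpace

-- L p h = -p*h + log(1-p+p*exp h) ≤ h^2/8 for p ∈ [0,1]
lemma hoeffding_fn_bound {p : ℝ} (hp0 : 0 ≤ p) (hp1 : p ≤ 1) (h : ℝ) :
    -p*h + Real.log (1 - p + p * Real.exp h) ≤ h^2/8 := by
  have hD : ∀ t : ℝ, 0 < 1 - p + p * Real.exp t := by
    intro t
    rcases eq_or_lt_of_le hp1 with h1 | h1
    · rw [h1]; simpa using exp_pos t
    · have := mul_nonneg hp0 (exp_pos t).le; linarith
  set L : ℝ → ℝ := fun t => -p*t + Real.log (1 - p + p * Real.exp t) with hL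
  set L' : ℝ → ℝ := fun t => -p + p * Real.exp t / (1 - p + p * Real.exp t) with hL'
  set L'' : ℝ → ℝ := fun t => (p * Real.exp t * (1-p)) / (1 - p + p * Real.exp t)^2 with hL''
  have hderiv : ∀ t, HasDerivAt L (L' t) t := by
    intro t
    have h1 : HasDerivAt (fun t : ℝ => 1 - p + p * Real.exp t) (p * Real.exp t) t := by
      simpa using ((Real.hasDerivAt_exp t).const_mul p).const_add (1-p)
    have h2 := (h1.log (hD t).ne')
    simpa [hL, hL'] using ((hasDerivAt_id t).const_mul (-p)).fun_add h2
  have hderiv' : ∀ t, HasDerivAt L' (L'' t) t := by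
    intro t
    have h1 : HasDerivAt (fun t : ℝ => 1 - p + p * Real.exp t) (p * Real.exp t) t := by
      simpa using ((Real.hasDerivAt_exp t).const_mul p).const_add (1-p)
    have h2 : HasDerivAt (fun t : ℝ => p * Real.exp t) (p * Real.exp t) t :=
      (Real.hasDerivAt_exp t).const_mul p
    have h3 := h2.div h1 (hD t).ne'
    have : HasDerivAt L' ((p * Real.exp t * (1 - p + p * Real.exp t) - p * Real.exp t * (p * Real.exp t)) / (1 - p + p * Real.exp t)^2) t := by
      simpa [hL'] using (h3.const_add (-p))
    convert this using 1
    simp only [hL'']; ring_nf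
  have hL''bound : ∀ t, |L'' t| ≤ 1/4 := by
    intro t
    have hDpos := hD t
    have hnum : 0 ≤ p * Real.exp t * (1-p) :=
      mul_nonneg (mul_nonneg hp0 (exp_pos t).le) (by linarith)
    rw [abs_of_nonneg (div_nonneg hnum (by positivity))]
    rw [div_le_iff₀ (by positivity)]
    nlinarith [sq_nonneg (p * Real.exp t - (1-p)), exp_pos t]
  have hL'0 : L' 0 = 0 := by simp [hL']
  have hL'bound : ∀ t, |L' t| ≤ |t|/4 := by
    intro t
    have := Convex.norm_image_sub_le_of_norm_hasDerivWithin_le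
      (f := L') (f' := L'') (C := 1/4) (s := Set.univ)
      (fun x _ => (hderiv' x).hasDerivWithinAt) (fun x _ => by simpa using hL''bound x)
      convex_univ (Set.mem_univ 0) (Set.mem_univ t)
    simp only [hL'0, sub_zero, Real.norm_eq_abs] at this
    linarith [this]
  have hL0 : L 0 = 0 := by simp [hL]
  have hcontL' : Continuous L' := by
    have : Continuous fun t : ℝ => 1 - p + p * Real.exp t := by continuity
    exact continuous_const.add ((continuous_const.mul Real.continuous_exp).div this (fun t => (hD t).ne'))
  have hFTC : ∀ t : ℝ, L t = ∫ s in (0:ℝ)..t, L' s := by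
    intro t
    rw [intervalIntegral.integral_eq_sub_of_hasDerivAt (fun x _ => hderiv x)
      (hcontL'.intervalIntegrable 0 t), hL0, sub_zero]
  have key : ∀ t : ℝ, L t ≤ t^2/8 := by
    intro t
    rcases le_or_gt 0 t with ht | ht
    · rw [hFTC t]
      calc ∫ s in (0:ℝ)..t, L' s ≤ ∫ s in (0:ℝ)..t, s/4 := by
            apply intervalIntegral.integral_mono_on ht (hcontL'.intervalIntegrable 0 t)
              (by apply IntervalIntegrable.div_const; exact intervalIntegral.intervalIntegrable_id)
            intro s hs
            have := hL'bound s
            have habs : |s| = s := abs_of_nonneg hs.1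
            rw [habs] at this
            linarith [(abs_le.1 this).2]
        _ = t^2/8 := by
            rw [intervalIntegral.integral_div, integral_id]; ring
    · rw [hFTC t, intervalIntegral.integral_symm t 0]
      have : -∫ s in t..(0:ℝ), L' s ≤ ∫ s in t..(0:ℝ), -s/4 := by
        rw [← intervalIntegral.integral_neg]
        apply intervalIntegral.integral_mono_on ht.le
          ((hcontL'.neg).intervalIntegrable t 0)
          (by apply IntervalIntegrable.div_const; exact (intervalIntegral.intervalIntegrable_id).neg)
        intro s hs
        have := hL'bound s
        have habs : |s| = -s := abs_of_nonpos hs.2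
        rw [habs] at this
        rw [Pi.neg_apply]
        linarith [(abs_le.1 this).1]
      calc -∫ s in t..(0:ℝ), L' s ≤ ∫ s in t..(0:ℝ), -s/4 := this
        _ = t^2/8 := by
          have : ∫ s in t..(0:ℝ), -s/4 = -∫ s in t..(0:ℝ), s/4 := by
            rw [← intervalIntegral.integral_neg]; congr 1; ext s; ring
          rw [this, intervalIntegral.integral_div, integral_id]; ring
  exact key h

/-- Integrability of bounded measurable functions on finite measures. -/
lemma integrable_of_bddAE {Ω : Type*} [MeasurableSpace Ω] {ν : Measure Ω} [IsFiniteMeasure ν]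
    {E : Type*} [NormedAddCommGroup E] {f : Ω → E} (hf : AEStronglyMeasurable f ν)
    {B : ℝ} (hB : ∀ ω, ‖f ω‖ ≤ B) : Integrable f ν :=
  (integrable_const B).mono' hf (Filter.Eventually.of_forall hB)

/-- **Hoeffding's lemma**. -/
lemma hoeffding_lemma {Ω : Type*} [MeasurableSpace Ω] (ν : Measure Ω) [IsProbabilityMeasure ν]
    {X : Ω → ℝ} (hX : Measurable X) {a b : ℝ} (hab : ∀ ω, X ω ∈ Set.Icc a b)
    (h0 : ∫ ω, X ω ∂ν = 0) (lam : ℝ) :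
    ∫ ω, Real.exp (lam * X ω) ∂ν ≤ Real.exp (lam^2 * (b-a)^2 / 8) := by
  have hne : Nonempty Ω := by
    by_contra hc
    rw [not_nonempty_iff] at hc
    have : ν Set.univ = 0 := by simp [Set.eq_empty_of_isEmpty (Set.univ : Set Ω)]
    simp [measure_univ] at this
  obtain ⟨ω₀⟩ := hne
  have hab' : a ≤ b := le_trans (hab ω₀).1 (hab ω₀).2
  have hXint : Integrable X ν := integrable_of_bddAE hX.aestronglyMeasurable
    (B := max |a| |b|) (fun ω => abs_le.2 ⟨le_trans (neg_le_neg (le_max_left _ _)) (le_trans (neg_abs_le a) (hab ω).1),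
      le_trans (hab ω).2 (le_trans (le_abs_self b) (le_max_right _ _))⟩)
  have ha0 : a ≤ 0 := by
    have : ∫ _ω, a ∂ν ≤ ∫ ω, X ω ∂ν := integral_mono (integrable_const a) hXint (fun ω => (hab ω).1)
    simpa [h0] using this
  have hb0 : 0 ≤ b := by
    have : ∫ ω, X ω ∂ν ≤ ∫ _ω, b ∂ν := integral_mono hXint (integrable_const b) (fun ω => (hab ω).2)
    simpa [h0] using this
  rcases eq_or_lt_of_le hab' with heq | hlt
  · -- a = b → a = 0 = b, X = 0
    have haz : a = 0 := le_antisymm ha0 (heq ▸ hb0)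
    have hbz : b = 0 := by rw [← heq, haz]
    have hX0 : ∀ ω, X ω = 0 := fun ω => le_antisymm (hbz ▸ (hab ω).2) (haz ▸ (hab ω).1)
    simp only [hX0, mul_zero, Real.exp_zero, integral_const, measure_univ, ENNReal.toReal_one, probReal_univ, smul_eq_mul, mul_one]
    exact Real.one_le_exp (by positivity)
  · -- a < b
    set p : ℝ := -a / (b - a) with hp
    have hba : (0:ℝ) < b - a := by linarith
    have hp0 : 0 ≤ p := div_nonneg (by linarith) hba.le
    have hp1 : p ≤ 1 := by rw [div_le_one hba]; linarith
    -- pointwise convexity bound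
    have hconv : ∀ ω, Real.exp (lam * X ω) ≤
        (b - X ω)/(b-a) * Real.exp (lam * a) + (X ω - a)/(b-a) * Real.exp (lam * b) := by
      intro ω
      have hx := hab ω
      have ht1 : 0 ≤ (b - X ω)/(b-a) := div_nonneg (by linarith [hx.2]) hba.le
      have ht2 : 0 ≤ (X ω - a)/(b-a) := div_nonneg (by linarith [hx.1]) hba.le
      have hts : (b - X ω)/(b-a) + (X ω - a)/(b-a) = 1 := by
        field_simp
        ring
      have := convexOn_exp.2 (Set.mem_univ (lam * a)) (Set.mem_univ (lam * b)) ht1 ht2 hts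
      simp only [smul_eq_mul] at this
      have harg : (b - X ω)/(b-a) * (lam * a) + (X ω - a)/(b-a) * (lam * b) = lam * X ω := by
        rw [div_mul_eq_mul_div, div_mul_eq_mul_div, ← add_div, div_eq_iff hba.ne']
        ring
      rwa [harg] at this
    -- integrate
    have hint_exp : Integrable (fun ω => Real.exp (lam * X ω)) ν := by
      apply integrable_of_bddAE (Real.measurable_exp.comp (measurable_const.mul hX)).aestronglyMeasurable (B := Real.exp (|lam| * max |a| |b|))
      intro ω
      simp only [Function.comp_apply, Real.norm_eq_abs, Real.abs_exp, Real.exp_le_exp]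
      calc lam * X ω ≤ |lam * X ω| := le_abs_self _
        _ = |lam| * |X ω| := abs_mul _ _
        _ ≤ |lam| * max |a| |b| := by
            apply mul_le_mul_of_nonneg_left _ (abs_nonneg lam)
            exact abs_le.2 ⟨le_trans (neg_le_neg (le_max_left _ _)) (le_trans (neg_abs_le a) (hab ω).1),
              le_trans (hab ω).2 (le_trans (le_abs_self b) (le_max_right _ _))⟩
    have hrhs_int : Integrable (fun ω => (b - X ω)/(b-a) * Real.exp (lam * a) + (X ω - a)/(b-a) * Real.exp (lam * b)) ν := by
      apply Integrable.add
      · exact ((((integrable_const b).sub hXint)).div_const _).mul_const _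
      · exact (((hXint.sub (integrable_const a))).div_const _).mul_const _
    have hstep1 : ∫ ω, Real.exp (lam * X ω) ∂ν ≤ (b * Real.exp (lam*a) - a * Real.exp (lam*b))/(b-a) := by
      calc ∫ ω, Real.exp (lam * X ω) ∂ν
          ≤ ∫ ω, ((b - X ω)/(b-a) * Real.exp (lam * a) + (X ω - a)/(b-a) * Real.exp (lam * b)) ∂ν :=
            integral_mono hint_exp hrhs_int hconv
        _ = (b * Real.exp (lam*a) - a * Real.exp (lam*b))/(b-a) := by
            have I1 : Integrable (fun ω => (b - X ω)/(b-a) * Real.exp (lam*a)) ν :=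
              (((integrable_const b).sub hXint).div_const _).mul_const _
            have I2 : Integrable (fun ω => (X ω - a)/(b-a) * Real.exp (lam*b)) ν :=
              ((hXint.sub (integrable_const a)).div_const _).mul_const _
            rw [integral_add I1 I2,
              integral_mul_const, integral_mul_const, integral_div, integral_div,
              integral_sub (integrable_const b) hXint, integral_sub hXint (integrable_const a), h0]
            simp only [integral_const, measure_univ, ENNReal.toReal_one, probReal_univ, smul_eq_mul, one_mul,
              sub_zero, zero_sub]
            ring
    -- analytic bound
    have hana : (b * Real.exp (lam*a) - a * Real.exp (lam*b))/(b-a) ≤ Real.exp (lam^2*(b-a)^2/8) := by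
      have key := hoeffding_fn_bound hp0 hp1 (lam * (b-a))
      have hDpos : 0 < 1 - p + p * Real.exp (lam*(b-a)) := by
        rcases eq_or_lt_of_le hp1 with h1 | h1
        · rw [h1]; simpa using exp_pos _
        · have := mul_nonneg hp0 (exp_pos (lam*(b-a))).le; linarith
      have e2 : Real.exp (lam*a) * Real.exp (lam*(b-a)) = Real.exp (lam*b) := by
        rw [← Real.exp_add]; congr 1; ring
      have hid : (b * Real.exp (lam*a) - a * Real.exp (lam*b))/(b-a)
          = Real.exp (lam*a) * (1 - p + p * Real.exp (lam*(b-a))) := by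
        rw [← e2, hp]; field_simp; ring
      have e1 : lam*a = -p*(lam*(b-a)) := by rw [hp]; field_simp
      rw [hid]
      calc Real.exp (lam*a) * (1 - p + p*Real.exp (lam*(b-a)))
          = Real.exp (lam*a + Real.log (1 - p + p*Real.exp (lam*(b-a)))) := by
            rw [Real.exp_add, Real.exp_log hDpos]
        _ ≤ Real.exp ((lam*(b-a))^2/8) := by
            rw [Real.exp_le_exp, e1]; exact key
        _ = Real.exp (lam^2*(b-a)^2/8) := by ring_nf
    exact hstep1.trans hana

lemma mcdiarmid_mgf {Ξ : Type*} [MeasurableSpace Ξ] [Nonempty Ξ]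
    (P : Measure Ξ) [IsProbabilityMeasure P] :
    ∀ (n : ℕ) (f : (Fin n → Ξ) → ℝ), StronglyMeasurable f →
    ∀ (B : ℝ), (∀ x, |f x| ≤ B) →
    ∀ (c : ℝ), (∀ (x : Fin n → Ξ) (i : Fin n) (y : Ξ), |f (Function.update x i y) - f x| ≤ c) →
    ∀ lam : ℝ,
    ∫ x, Real.exp (lam * (f x - ∫ z, f z ∂(Measure.pi fun _ : Fin n => P)))
        ∂(Measure.pi fun _ : Fin n => P)
      ≤ Real.exp (n * lam^2 * c^2 / 8) := by
  intro n
  induction n with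
  | zero =>
    intro f hf B hB c hc lam
    have hfc : ∀ x : Fin 0 → Ξ, f x = f default := fun x => by
      rw [Subsingleton.elim x default]
    calc ∫ x, Real.exp (lam * (f x - ∫ z, f z ∂(Measure.pi fun _ : Fin 0 => P)))
            ∂(Measure.pi fun _ : Fin 0 => P)
        = ∫ _x, (1:ℝ) ∂(Measure.pi fun _ : Fin 0 => P) := by
          apply integral_congr_ae; filter_upwards with x
          rw [hfc x]
          have : ∫ z, f z ∂(Measure.pi fun _ : Fin 0 => P) = f default := by
            have : (fun z : Fin 0 → Ξ => f z) = fun _ => f default := funext hfc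
            rw [this, integral_const]; simp
          rw [this]; simp
      _ ≤ Real.exp ((0:ℕ) * lam^2 * c^2 / 8) := by simp
  | succ n IH =>
    intro f hf B hB c hc lam
    set piN : Measure (Fin (n+1) → Ξ) := Measure.pi fun _ => P with hpiN
    set pin : Measure (Fin n → Ξ) := Measure.pi fun _ => P with hpin
    set m : ℝ := ∫ z, f z ∂piN with hm
    -- the equivalence
    set e : (Fin (n+1) → Ξ) ≃ᵐ Ξ × (Fin n → Ξ) :=
      MeasurableEquiv.piFinSuccAbove (fun _ : Fin (n+1) => Ξ) 0 with he
    have hmp : MeasurePreserving e piN (P.prod pin) := by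
      have := measurePreserving_piFinSuccAbove (fun _ : Fin (n+1) => P) 0
      exact this
    have hmps : MeasurePreserving e.symm (P.prod pin) piN := MeasurePreserving.symm e hmp
    have hcons : ∀ (a : Ξ) (x : Fin n → Ξ), e.symm (a, x) = Fin.cons a x := by
      intro a x
      show (MeasurableEquiv.piFinSuccAbove (fun _ : Fin (n+1) => Ξ) 0).symm (a, x) = Fin.cons a x
      simp only [MeasurableEquiv.piFinSuccAbove, MeasurableEquiv.symm,
        MeasurableEquiv.coe_mk, Equiv.symm_symm]
      exact Fin.insertNth_zero' a x
    -- measurability of cons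
    have hcons_meas : Measurable (fun p : Ξ × (Fin n → Ξ) => (Fin.cons p.1 p.2 : Fin (n+1) → Ξ)) := by
      apply measurable_pi_lambda
      intro i
      induction i using Fin.cases with
      | zero => exact measurable_fst
      | succ j => exact (measurable_pi_apply j).comp measurable_snd
    have hF2sm : StronglyMeasurable (fun p : Ξ × (Fin n → Ξ) => f (Fin.cons p.1 p.2)) :=
      hf.comp_measurable hcons_meas
    have hconsx_meas : ∀ x : Fin n → Ξ, Measurable (fun a : Ξ => (Fin.cons a x : Fin (n+1) → Ξ)) := by
      intro x
      apply measurable_pi_lambda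
      intro i
      induction i using Fin.cases with
      | zero => exact measurable_id
      | succ j => exact measurable_const
    -- the conditional mean g
    set g : (Fin n → Ξ) → ℝ := fun x => ∫ a, f (Fin.cons a x) ∂P with hg
    have hg_sm : StronglyMeasurable g := hF2sm.integral_prod_left'
    have hgB : ∀ x, |g x| ≤ B := by
      intro x
      have : ‖∫ a, f (Fin.cons a x) ∂P‖ ≤ B * (P Set.univ).toReal :=
        norm_integral_le_of_norm_le_const (Filter.Eventually.of_forall fun a => by
          simpa using hB (Fin.cons a x))
      simpa using this
    have hgdiff : ∀ (x : Fin n → Ξ) (i : Fin n) (y : Ξ),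
        |g (Function.update x i y) - g x| ≤ c := by
      intro x i y
      have hint1 : Integrable (fun a => f (Fin.cons a (Function.update x i y))) P :=
        integrable_of_bddAE (hf.comp_measurable (hconsx_meas _)).aestronglyMeasurable
          (B := B) (fun a => by simpa using hB _)
      have hint2 : Integrable (fun a => f (Fin.cons a x)) P :=
        integrable_of_bddAE (hf.comp_measurable (hconsx_meas _)).aestronglyMeasurable
          (B := B) (fun a => by simpa using hB _)
      have : g (Function.update x i y) - g x
          = ∫ a, (f (Fin.cons a (Function.update x i y)) - f (Fin.cons a x)) ∂P := by
        rw [integral_sub hint1 hint2]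
      rw [this]
      have hb : ‖∫ a, (f (Fin.cons a (Function.update x i y)) - f (Fin.cons a x)) ∂P‖
          ≤ c * (P Set.univ).toReal := by
        apply norm_integral_le_of_norm_le_const
        filter_upwards with a
        rw [Real.norm_eq_abs, Fin.cons_update]
        exact hc (Fin.cons a x) i.succ y
      simpa using hb
    -- mean transfer : ∫ g dpin = m
    have hfint_prod : Integrable (fun p : Ξ × (Fin n → Ξ) => f (Fin.cons p.1 p.2)) (P.prod pin) :=
      integrable_of_bddAE hF2sm.aestronglyMeasurable (B := B) (fun p => by simpa using hB _)
    have hmean : ∫ x, g x ∂pin = m := by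
      have h1 : ∫ z, f z ∂piN = ∫ p, f (Fin.cons p.1 p.2) ∂(P.prod pin) := by
        rw [← hmps.integral_comp']
        apply integral_congr_ae; filter_upwards with p
        rw [hcons p.1 p.2]
      have h2 : ∫ p : Ξ × (Fin n → Ξ), f (Fin.cons p.1 p.2) ∂(P.prod pin)
          = ∫ a, ∫ x, f (Fin.cons a x) ∂pin ∂P := MeasureTheory.integral_prod _ hfint_prod
      have h3 : ∫ a, ∫ x, f (Fin.cons a x) ∂pin ∂P = ∫ x, ∫ a, f (Fin.cons a x) ∂P ∂pin :=
        integral_integral_swap hfint_prod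
      rw [hg, ← h3, ← h2, ← h1]
    -- main chain
    have hexp_sm : StronglyMeasurable (fun p : Ξ × (Fin n → Ξ) => Real.exp (lam * (f (Fin.cons p.1 p.2) - m))) :=
      (Real.continuous_exp.comp_stronglyMeasurable ((hF2sm.sub stronglyMeasurable_const).const_mul lam))
    have hexp_int : Integrable (fun p : Ξ × (Fin n → Ξ) => Real.exp (lam * (f (Fin.cons p.1 p.2) - m))) (P.prod pin) := by
      apply integrable_of_bddAE hexp_sm.aestronglyMeasurable (B := Real.exp (|lam| * (B + |m|)))
      intro p
      rw [Real.norm_eq_abs, Real.abs_exp, Real.exp_le_exp]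
      calc lam * (f (Fin.cons p.1 p.2) - m) ≤ |lam * (f (Fin.cons p.1 p.2) - m)| := le_abs_self _
        _ = |lam| * |f (Fin.cons p.1 p.2) - m| := abs_mul _ _
        _ ≤ |lam| * (B + |m|) := by
            apply mul_le_mul_of_nonneg_left _ (abs_nonneg lam)
            calc |f (Fin.cons p.1 p.2) - m| ≤ |f (Fin.cons p.1 p.2)| + |m| := abs_sub _ _
              _ ≤ B + |m| := by linarith [hB (Fin.cons p.1 p.2)]
    have step1 : ∫ x, Real.exp (lam * (f x - m)) ∂piN
        = ∫ x, ∫ a, Real.exp (lam * (f (Fin.cons a x) - m)) ∂P ∂pin := by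
      have h1 : ∫ x, Real.exp (lam * (f x - m)) ∂piN
          = ∫ p, Real.exp (lam * (f (Fin.cons p.1 p.2) - m)) ∂(P.prod pin) := by
        rw [← hmps.integral_comp' (g := fun z => Real.exp (lam * (f z - m)))]
        apply integral_congr_ae; filter_upwards with p
        rw [hcons p.1 p.2]
      rw [h1, MeasureTheory.integral_prod _ hexp_int]
      exact integral_integral_swap hexp_int
    -- inner Hoeffding bound
    have inner_bound : ∀ x : Fin n → Ξ,
        ∫ a, Real.exp (lam * (f (Fin.cons a x) - m)) ∂P
          ≤ Real.exp (lam^2 * c^2 / 8) * Real.exp (lam * (g x - m)) := by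
      intro x
      have hXmeas : Measurable (fun a : Ξ => f (Fin.cons a x) - g x) :=
        ((hf.comp_measurable (hconsx_meas x)).measurable).sub measurable_const
      have hXint : Integrable (fun a : Ξ => f (Fin.cons a x)) P :=
        integrable_of_bddAE (hf.comp_measurable (hconsx_meas x)).aestronglyMeasurable
          (B := B) (fun a => by simpa using hB _)
      have hX0 : ∫ a, (f (Fin.cons a x) - g x) ∂P = 0 := by
        rw [integral_sub hXint (integrable_const _), integral_const]
        simp [hg]
      have hbdd : BddBelow (Set.range fun a : Ξ => f (Fin.cons a x)) :=
        ⟨-B, by rintro _ ⟨a, rfl⟩; linarith [abs_le.1 (hB (Fin.cons a x))]⟩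
      set lo : ℝ := ⨅ a : Ξ, f (Fin.cons a x) with hlo
      have hXbounds : ∀ a : Ξ, (f (Fin.cons a x) - g x) ∈ Set.Icc (lo - g x) (lo - g x + c) := by
        intro a
        constructor
        · have : lo ≤ f (Fin.cons a x) := ciInf_le hbdd a
          linarith
        · have hle : f (Fin.cons a x) - c ≤ lo := by
            apply le_ciInf
            intro a'
            have h := hc (Fin.cons a' x) 0 a
            rw [Fin.update_cons_zero] at h
            linarith [abs_le.1 h]
          linarith
      have hhoef := hoeffding_lemma P hXmeas hXbounds hX0 lam
      have hsimp : (lo - g x + c) - (lo - g x) = c := by ring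
      rw [hsimp] at hhoef
      have hfactor : ∀ a : Ξ, Real.exp (lam * (f (Fin.cons a x) - m))
          = Real.exp (lam * (g x - m)) * Real.exp (lam * (f (Fin.cons a x) - g x)) := by
        intro a
        rw [← Real.exp_add]; congr 1; ring
      calc ∫ a, Real.exp (lam * (f (Fin.cons a x) - m)) ∂P
          = ∫ a, Real.exp (lam * (g x - m)) * Real.exp (lam * (f (Fin.cons a x) - g x)) ∂P := by
            apply integral_congr_ae; filter_upwards with a; rw [hfactor a]
        _ = Real.exp (lam * (g x - m)) * ∫ a, Real.exp (lam * (f (Fin.cons a x) - g x)) ∂P :=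
            integral_const_mul _ _
        _ ≤ Real.exp (lam * (g x - m)) * Real.exp (lam^2 * c^2 / 8) := by
            apply mul_le_mul_of_nonneg_left hhoef (Real.exp_nonneg _)
        _ = Real.exp (lam^2 * c^2 / 8) * Real.exp (lam * (g x - m)) := mul_comm _ _
    -- integrate the bound
    have hLHS_int : Integrable (fun x => ∫ a, Real.exp (lam * (f (Fin.cons a x) - m)) ∂P) pin := by
      apply integrable_of_bddAE hexp_sm.integral_prod_left'.aestronglyMeasurable
        (B := Real.exp (|lam| * (B + |m|)))
      intro x
      have : ‖∫ a, Real.exp (lam * (f (Fin.cons a x) - m)) ∂P‖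
          ≤ Real.exp (|lam| * (B + |m|)) * (P Set.univ).toReal := by
        apply norm_integral_le_of_norm_le_const
        filter_upwards with a
        rw [Real.norm_eq_abs, Real.abs_exp, Real.exp_le_exp]
        calc lam * (f (Fin.cons a x) - m) ≤ |lam| * |f (Fin.cons a x) - m| :=
              (le_abs_self _).trans (le_of_eq (abs_mul _ _))
          _ ≤ |lam| * (B + |m|) := by
              apply mul_le_mul_of_nonneg_left _ (abs_nonneg lam)
              calc |f (Fin.cons a x) - m| ≤ |f (Fin.cons a x)| + |m| := abs_sub _ _
                _ ≤ B + |m| := by linarith [hB (Fin.cons a x)]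
      simpa using this
    have hg_exp_sm : StronglyMeasurable (fun x => Real.exp (lam * (g x - m))) :=
      Real.continuous_exp.comp_stronglyMeasurable ((hg_sm.sub stronglyMeasurable_const).const_mul lam)
    have hg_exp_int : Integrable (fun x => Real.exp (lam * (g x - m))) pin := by
      apply integrable_of_bddAE hg_exp_sm.aestronglyMeasurable (B := Real.exp (|lam| * (B + |m|)))
      intro x
      rw [Real.norm_eq_abs, Real.abs_exp, Real.exp_le_exp]
      calc lam * (g x - m) ≤ |lam| * |g x - m| := (le_abs_self _).trans (le_of_eq (abs_mul _ _))
        _ ≤ |lam| * (B + |m|) := by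
            apply mul_le_mul_of_nonneg_left _ (abs_nonneg lam)
            calc |g x - m| ≤ |g x| + |m| := abs_sub _ _
              _ ≤ B + |m| := by linarith [hgB x]
    have hIH := IH g hg_sm B hgB c hgdiff lam
    rw [hmean] at hIH
    calc ∫ x, Real.exp (lam * (f x - m)) ∂piN
        = ∫ x, ∫ a, Real.exp (lam * (f (Fin.cons a x) - m)) ∂P ∂pin := step1
      _ ≤ ∫ x, Real.exp (lam^2 * c^2 / 8) * Real.exp (lam * (g x - m)) ∂pin :=
          integral_mono hLHS_int (hg_exp_int.const_mul _) inner_bound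
      _ = Real.exp (lam^2 * c^2 / 8) * ∫ x, Real.exp (lam * (g x - m)) ∂pin :=
          integral_const_mul _ _
      _ ≤ Real.exp (lam^2 * c^2 / 8) * Real.exp (n * lam^2 * c^2 / 8) :=
          mul_le_mul_of_nonneg_left hIH (Real.exp_nonneg _)
      _ = Real.exp ((n+1 : ℕ) * lam^2 * c^2 / 8) := by
          rw [← Real.exp_add]; congr 1; push_cast; ring

/-- Second moment of sum of iid centered bounded Hilbert-valued variables. -/
lemma sum_sq_bound {Ξ : Type*} [MeasurableSpace Ξ]
    {H : Type*} [NormedAddCommGroup H] [InnerProductSpace ℝ H] [CompleteSpace H]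
    (P : Measure Ξ) [IsProbabilityMeasure P]
    (ψ : Ξ → H) (hψ : StronglyMeasurable ψ) {C : ℝ} (hC : 0 ≤ C)
    (hb : ∀ ξ, ‖ψ ξ‖^2 ≤ C) :
    ∀ n : ℕ, ∫ x : Fin n → Ξ, ‖∑ i, (ψ (x i) - ∫ ξ, ψ ξ ∂P)‖^2
        ∂(Measure.pi fun _ : Fin n => P) ≤ n * C := by
  set μ0 : H := ∫ ξ, ψ ξ ∂P with hμ0
  have hs : ∀ ξ, ‖ψ ξ‖ ≤ Real.sqrt C := fun ξ => by
    rw [← Real.sqrt_sq (norm_nonneg (ψ ξ))]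
    exact Real.sqrt_le_sqrt (hb ξ)
  have hψint : Integrable ψ P := integrable_of_bddAE hψ.aestronglyMeasurable (B := Real.sqrt C) hs
  have hμ0n : ‖μ0‖ ≤ Real.sqrt C := by
    have := norm_integral_le_of_norm_le_const (μ := P) (C := Real.sqrt C)
      (Filter.Eventually.of_forall hs)
    simpa using this
  have hcent_int : Integrable (fun ξ => ψ ξ - μ0) P := hψint.sub (integrable_const _)
  have hcent0 : ∫ ξ, (ψ ξ - μ0) ∂P = 0 := by
    rw [integral_sub hψint (integrable_const _), integral_const]
    simp [hμ0]
  -- one-variable second moment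
  have hone : ∫ ξ, ‖ψ ξ - μ0‖^2 ∂P ≤ C := by
    have hexpand : ∀ ξ, ‖ψ ξ - μ0‖^2 = ‖ψ ξ‖^2 - 2 * ⟪ψ ξ, μ0⟫ + ‖μ0‖^2 := fun ξ => by
      rw [@norm_sub_sq_real]
    have hint1 : Integrable (fun ξ => ‖ψ ξ‖^2) P :=
      integrable_of_bddAE (hψ.norm.pow 2).aestronglyMeasurable (B := C)
        (fun ξ => by rw [Real.norm_eq_abs, abs_of_nonneg (by positivity)]; exact hb ξ)
    have hint2 : Integrable (fun ξ => ⟪ψ ξ, μ0⟫) P := by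
      apply integrable_of_bddAE (B := Real.sqrt C * ‖μ0‖)
      · exact hψ.aestronglyMeasurable.inner aestronglyMeasurable_const
      · intro ξ
        calc ‖⟪ψ ξ, μ0⟫‖ ≤ ‖ψ ξ‖ * ‖μ0‖ := norm_inner_le_norm _ _
          _ ≤ Real.sqrt C * ‖μ0‖ := by
              apply mul_le_mul_of_nonneg_right (hs ξ) (norm_nonneg _)
    have hInner : ∫ ξ, ⟪ψ ξ, μ0⟫ ∂P = ‖μ0‖^2 := by
      have h1 : ∀ ξ, ⟪ψ ξ, μ0⟫ = ⟪μ0, ψ ξ⟫ := fun ξ => real_inner_comm _ _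
      simp_rw [h1]
      rw [integral_inner hψint μ0, ← hμ0, real_inner_self_eq_norm_sq]
    calc ∫ ξ, ‖ψ ξ - μ0‖^2 ∂P
        = ∫ ξ, (‖ψ ξ‖^2 - 2 * ⟪ψ ξ, μ0⟫ + ‖μ0‖^2) ∂P := by
          apply integral_congr_ae; filter_upwards with ξ; rw [hexpand ξ]
      _ = (∫ ξ, ‖ψ ξ‖^2 ∂P) - 2 * ∫ ξ, ⟪ψ ξ, μ0⟫ ∂P + ‖μ0‖^2 := by
          have hA : Integrable (fun ξ => ‖ψ ξ‖^2 - 2 * ⟪ψ ξ, μ0⟫) P :=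
            hint1.sub (hint2.const_mul 2)
          rw [integral_add hA (integrable_const _),
            integral_sub hint1 (hint2.const_mul 2), integral_const_mul, integral_const]
          simp
      _ ≤ C - 2 * ‖μ0‖^2 + ‖μ0‖^2 := by
          rw [hInner]
          have : ∫ ξ, ‖ψ ξ‖^2 ∂P ≤ C := by
            have := integral_mono hint1 (integrable_const C) hb
            simpa using this
          linarith
      _ ≤ C := by nlinarith [norm_nonneg μ0]
  -- induction
  intro n
  induction n with
  | zero =>
    have : ∀ x : Fin 0 → Ξ, ‖∑ i : Fin 0, (ψ (x i) - μ0)‖^2 = 0 := fun x => by simp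
    simp only [this]
    simp
  | succ n IH =>
    set pin : Measure (Fin n → Ξ) := Measure.pi fun _ => P with hpin
    set piN : Measure (Fin (n+1) → Ξ) := Measure.pi fun _ => P with hpiN
    set S : ∀ k, (Fin k → Ξ) → H := fun k x => ∑ i, (ψ (x i) - μ0) with hS
    set e : (Fin (n+1) → Ξ) ≃ᵐ Ξ × (Fin n → Ξ) :=
      MeasurableEquiv.piFinSuccAbove (fun _ : Fin (n+1) => Ξ) 0 with he
    have hmp : MeasurePreserving e piN (P.prod pin) :=
      measurePreserving_piFinSuccAbove (fun _ : Fin (n+1) => P) 0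
    have hmps : MeasurePreserving e.symm (P.prod pin) piN := MeasurePreserving.symm e hmp
    have hcons : ∀ (a : Ξ) (x : Fin n → Ξ), e.symm (a, x) = Fin.cons a x := by
      intro a x
      show (MeasurableEquiv.piFinSuccAbove (fun _ : Fin (n+1) => Ξ) 0).symm (a, x) = Fin.cons a x
      simp only [MeasurableEquiv.piFinSuccAbove, MeasurableEquiv.symm,
        MeasurableEquiv.coe_mk, Equiv.symm_symm]
      exact Fin.insertNth_zero' a x
    have hsum_cons : ∀ (a : Ξ) (x : Fin n → Ξ),
        S (n+1) (Fin.cons a x) = (ψ a - μ0) + S n x := by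
      intro a x
      simp only [hS, Fin.sum_univ_succ, Fin.cons_zero, Fin.cons_succ]
    -- measurability of S n
    have hSsm : ∀ k, StronglyMeasurable (S k) := by
      intro k
      apply Finset.stronglyMeasurable_fun_sum
      intro i _
      exact (hψ.comp_measurable (measurable_pi_apply i)).sub stronglyMeasurable_const
    have hSbound : ∀ k (x : Fin k → Ξ), ‖S k x‖ ≤ k * (2 * Real.sqrt C) := by
      intro k x
      calc ‖S k x‖ ≤ ∑ i : Fin k, ‖ψ (x i) - μ0‖ := norm_sum_le _ _
        _ ≤ ∑ _i : Fin k, (2 * Real.sqrt C) := by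
            apply Finset.sum_le_sum
            intro i _
            calc ‖ψ (x i) - μ0‖ ≤ ‖ψ (x i)‖ + ‖μ0‖ := norm_sub_le _ _
              _ ≤ 2 * Real.sqrt C := by linarith [hs (x i), hμ0n]
        _ = k * (2 * Real.sqrt C) := by simp [Finset.sum_const, Finset.card_univ]
    have hsq_int : ∀ k, Integrable (fun x : Fin k → Ξ => ‖S k x‖^2) (Measure.pi fun _ : Fin k => P) := by
      intro k
      have hsm : AEStronglyMeasurable (fun x : Fin k → Ξ => ‖S k x‖^2)
          (Measure.pi fun _ : Fin k => P) := ((hSsm k).norm.pow 2).aestronglyMeasurable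
      apply integrable_of_bddAE hsm (B := (k * (2 * Real.sqrt C))^2)
      intro x
      rw [Real.norm_eq_abs, abs_of_nonneg (by positivity)]
      have h1 := hSbound k x
      have h2 := norm_nonneg (S k x)
      nlinarith
    -- prod integrand
    have hG_sm : StronglyMeasurable (fun p : Ξ × (Fin n → Ξ) => ‖S (n+1) (Fin.cons p.1 p.2)‖^2) := by
      have hcm : Measurable (fun p : Ξ × (Fin n → Ξ) => (Fin.cons p.1 p.2 : Fin (n+1) → Ξ)) := by
        apply measurable_pi_lambda
        intro i
        induction i using Fin.cases with
        | zero => exact measurable_fst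
        | succ j => exact (measurable_pi_apply j).comp measurable_snd
      exact ((hSsm (n+1)).comp_measurable hcm).norm.pow 2
    have hG_int : Integrable (fun p : Ξ × (Fin n → Ξ) => ‖S (n+1) (Fin.cons p.1 p.2)‖^2) (P.prod pin) := by
      have hsm : AEStronglyMeasurable (fun p : Ξ × (Fin n → Ξ) => ‖S (n+1) (Fin.cons p.1 p.2)‖^2)
          (P.prod pin) := hG_sm.aestronglyMeasurable
      apply integrable_of_bddAE hsm (B := ((n+1) * (2 * Real.sqrt C))^2)
      intro p
      rw [Real.norm_eq_abs, abs_of_nonneg (by positivity)]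
      have h1 := hSbound (n+1) (Fin.cons p.1 p.2)
      have h2 := norm_nonneg (S (n+1) (Fin.cons p.1 p.2))
      push_cast at h1 ⊢
      nlinarith
    -- transfer and swap
    have step1 : ∫ x, ‖S (n+1) x‖^2 ∂piN
        = ∫ x, ∫ a, ‖S (n+1) (Fin.cons a x)‖^2 ∂P ∂pin := by
      have h1 : ∫ x, ‖S (n+1) x‖^2 ∂piN
          = ∫ p, ‖S (n+1) (Fin.cons p.1 p.2)‖^2 ∂(P.prod pin) := by
        rw [← hmps.integral_comp' (g := fun z => ‖S (n+1) z‖^2)]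
        apply integral_congr_ae; filter_upwards with p
        rw [hcons p.1 p.2]
      rw [h1, MeasureTheory.integral_prod _ hG_int]
      have hG_int' : Integrable
          (Function.uncurry fun (a : Ξ) (x : Fin n → Ξ) => ‖S (n+1) (Fin.cons a x)‖^2)
          (P.prod pin) := hG_int
      exact integral_integral_swap hG_int'
    -- inner integral
    have inner_eq : ∀ x : Fin n → Ξ,
        ∫ a, ‖S (n+1) (Fin.cons a x)‖^2 ∂P
          = (∫ ξ, ‖ψ ξ - μ0‖^2 ∂P) + ‖S n x‖^2 := by
      intro x
      have hexpand : ∀ a, ‖S (n+1) (Fin.cons a x)‖^2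
          = ‖ψ a - μ0‖^2 + 2 * ⟪S n x, ψ a - μ0⟫ + ‖S n x‖^2 := by
        intro a
        rw [hsum_cons a x, @norm_add_sq_real]
        rw [real_inner_comm]
      have hint1 : Integrable (fun a => ‖ψ a - μ0‖^2) P := by
        have hsm : AEStronglyMeasurable (fun a => ‖ψ a - μ0‖^2) P :=
          ((hψ.sub stronglyMeasurable_const).norm.pow 2).aestronglyMeasurable
        apply integrable_of_bddAE hsm (B := (2 * Real.sqrt C)^2)
        intro a
        rw [Real.norm_eq_abs, abs_of_nonneg (by positivity)]
        have : ‖ψ a - μ0‖ ≤ 2 * Real.sqrt C := by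
          calc ‖ψ a - μ0‖ ≤ ‖ψ a‖ + ‖μ0‖ := norm_sub_le _ _
            _ ≤ 2 * Real.sqrt C := by linarith [hs a, hμ0n]
        nlinarith [norm_nonneg (ψ a - μ0)]
      have hint2 : Integrable (fun a => ⟪S n x, ψ a - μ0⟫) P := by
        apply integrable_of_bddAE (B := ‖S n x‖ * (2 * Real.sqrt C))
        · exact aestronglyMeasurable_const.inner
            (hψ.sub stronglyMeasurable_const).aestronglyMeasurable
        · intro a
          calc ‖⟪S n x, ψ a - μ0⟫‖ ≤ ‖S n x‖ * ‖ψ a - μ0‖ := norm_inner_le_norm _ _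
            _ ≤ ‖S n x‖ * (2 * Real.sqrt C) := by
                apply mul_le_mul_of_nonneg_left _ (norm_nonneg _)
                calc ‖ψ a - μ0‖ ≤ ‖ψ a‖ + ‖μ0‖ := norm_sub_le _ _
                  _ ≤ 2 * Real.sqrt C := by linarith [hs a, hμ0n]
      have hInner0 : ∫ a, ⟪S n x, ψ a - μ0⟫ ∂P = 0 := by
        rw [integral_inner hcent_int (S n x), hcent0, inner_zero_right]
      calc ∫ a, ‖S (n+1) (Fin.cons a x)‖^2 ∂P
          = ∫ a, (‖ψ a - μ0‖^2 + 2 * ⟪S n x, ψ a - μ0⟫ + ‖S n x‖^2) ∂P := by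
            apply integral_congr_ae; filter_upwards with a; rw [hexpand a]
        _ = (∫ a, ‖ψ a - μ0‖^2 ∂P) + 2 * ∫ a, ⟪S n x, ψ a - μ0⟫ ∂P + ‖S n x‖^2 := by
            have hA : Integrable (fun a => ‖ψ a - μ0‖^2 + 2 * ⟪S n x, ψ a - μ0⟫) P :=
              hint1.add (hint2.const_mul 2)
            rw [integral_add hA (integrable_const _),
              integral_add hint1 (hint2.const_mul 2), integral_const_mul, integral_const]
            simp
        _ = (∫ ξ, ‖ψ ξ - μ0‖^2 ∂P) + ‖S n x‖^2 := by rw [hInner0]; ring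
    calc ∫ x, ‖S (n+1) x‖^2 ∂piN
        = ∫ x, ((∫ ξ, ‖ψ ξ - μ0‖^2 ∂P) + ‖S n x‖^2) ∂pin := by
          rw [step1]
          apply integral_congr_ae; filter_upwards with x; rw [inner_eq x]
      _ = (∫ ξ, ‖ψ ξ - μ0‖^2 ∂P) + ∫ x, ‖S n x‖^2 ∂pin := by
          rw [integral_add (integrable_const _) (hsq_int n), integral_const]
          simp
          rfl
      _ ≤ C + n * C := add_le_add hone IH
      _ = (n+1 : ℕ) * C := by push_cast; ring

/-- Finite-sample concentration of the empirical kernel mean embedding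
(the dimension-free radius bound, equation (5)). If the kernel is bounded,
`k(ξ, ξ) = ‖φ ξ‖² ≤ C`, then for an i.i.d. sample `ξ_1, …, ξ_N ~ P₀`
(modeled by the product measure on `Fin N → Ξ`), with probability at least `1 - δ`,
`MMD(P₀, P̂_N) = ‖μ_{P₀} - (1/N) ∑ i, φ (ξ_i)‖ ≤ √(C/N) + √(2 C log(1/δ) / N)`. -/
theorem empirical_kme_concentration
    {Ξ : Type*} [MetricSpace Ξ] [MeasurableSpace Ξ] [BorelSpace Ξ]
    {H : Type*} [NormedAddCommGroup H] [InnerProductSpace ℝ H] [CompleteSpace H]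
    [MeasurableSpace H] [BorelSpace H]
    (φ : Ξ → H) (hφm : Measurable φ)
    (P₀ : Measure Ξ) [IsProbabilityMeasure P₀] (hφi : Integrable φ P₀)
    (C : ℝ) (hC : 0 < C) (hbound : ∀ ξ : Ξ, ‖φ ξ‖ ^ 2 ≤ C)
    (δ : ℝ) (hδ : δ ∈ Set.Ioo (0 : ℝ) 1)
    {N : ℕ} (hN : 0 < N) :
    1 - δ ≤ ((Measure.pi fun _ : Fin N => P₀)
      {ξs : Fin N → Ξ |
        ‖(∫ ξ, φ ξ ∂P₀) - (N : ℝ)⁻¹ • ∑ i, φ (ξs i)‖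
          ≤ Real.sqrt (C / N) + Real.sqrt (2 * C * Real.log (1 / δ) / N)}).toReal := by
  obtain ⟨hδ0, hδ1⟩ := hδ
  have hΞ : Nonempty Ξ := by
    by_contra hc
    rw [not_nonempty_iff] at hc
    have h1 : P₀ Set.univ = 1 := measure_univ
    rw [Set.eq_empty_of_isEmpty (Set.univ : Set Ξ)] at h1
    simp at h1
  set ν : Measure (Fin N → Ξ) := Measure.pi fun _ => P₀ with hν
  have hNne : (N:ℝ) ≠ 0 := Nat.cast_ne_zero.2 hN.ne'
  have hNpos : (0:ℝ) < N := Nat.cast_pos.2 hN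
  -- a strongly measurable pointwise-bounded modification of φ
  set φ' : Ξ → H := hφi.1.mk φ with hφ'def
  have hφ'sm : StronglyMeasurable φ' := hφi.1.stronglyMeasurable_mk
  have hφ'ae : φ =ᵐ[P₀] φ' := hφi.1.ae_eq_mk
  set ψ : Ξ → H := fun ξ => if ‖φ' ξ‖^2 ≤ C then φ' ξ else 0 with hψdef
  have hsmeas : MeasurableSet {ξ : Ξ | ‖φ' ξ‖^2 ≤ C} :=
    measurableSet_le ((hφ'sm.norm.measurable).pow_const 2) measurable_const
  have hψsm : StronglyMeasurable ψ :=
    StronglyMeasurable.ite hsmeas hφ'sm stronglyMeasurable_const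
  have hψb : ∀ ξ, ‖ψ ξ‖^2 ≤ C := by
    intro ξ
    by_cases h : ‖φ' ξ‖^2 ≤ C
    · simp only [hψdef, if_pos h]; exact h
    · simp only [hψdef, if_neg h, norm_zero]; nlinarith
  have hψae : ψ =ᵐ[P₀] φ := by
    filter_upwards [hφ'ae] with ξ h
    have hb' : ‖φ' ξ‖^2 ≤ C := by rw [← h]; exact hbound ξ
    simp only [hψdef, if_pos hb']
    exact h.symm
  have hsC : ∀ ξ, ‖ψ ξ‖ ≤ Real.sqrt C := fun ξ => by
    rw [← Real.sqrt_sq (norm_nonneg (ψ ξ))]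
    exact Real.sqrt_le_sqrt (hψb ξ)
  set μ0 : H := ∫ ξ, ψ ξ ∂P₀ with hμ0
  have hμeq : ∫ ξ, φ ξ ∂P₀ = μ0 := integral_congr_ae hψae.symm
  have hμ0n : ‖μ0‖ ≤ Real.sqrt C := by
    have := norm_integral_le_of_norm_le_const (μ := P₀) (C := Real.sqrt C)
      (Filter.Eventually.of_forall hsC)
    simpa [hμ0] using this
  -- the empirical discrepancy function
  set f : (Fin N → Ξ) → ℝ := fun x => ‖μ0 - (N:ℝ)⁻¹ • ∑ i, ψ (x i)‖ with hfdef
  have hf_sm : StronglyMeasurable f :=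
    (stronglyMeasurable_const.sub ((Finset.stronglyMeasurable_fun_sum _
      (fun i _ => hψsm.comp_measurable (measurable_pi_apply i))).const_smul _)).norm
  set B : ℝ := 2 * Real.sqrt C with hBdef
  have hB : ∀ x, |f x| ≤ B := by
    intro x
    rw [abs_of_nonneg (norm_nonneg _)]
    calc ‖μ0 - (N:ℝ)⁻¹ • ∑ i, ψ (x i)‖ ≤ ‖μ0‖ + ‖(N:ℝ)⁻¹ • ∑ i, ψ (x i)‖ := norm_sub_le _ _
      _ ≤ Real.sqrt C + (N:ℝ)⁻¹ * (N * Real.sqrt C) := by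
          apply add_le_add hμ0n
          rw [norm_smul, Real.norm_eq_abs, abs_of_nonneg (by positivity)]
          apply mul_le_mul_of_nonneg_left _ (by positivity)
          calc ‖∑ i, ψ (x i)‖ ≤ ∑ i : Fin N, ‖ψ (x i)‖ := norm_sum_le _ _
            _ ≤ ∑ _i : Fin N, Real.sqrt C := Finset.sum_le_sum (fun i _ => hsC (x i))
            _ = N * Real.sqrt C := by simp [Finset.sum_const, Finset.card_univ]
      _ = B := by rw [hBdef]; field_simp; ring
  set c : ℝ := 2 * Real.sqrt C / N with hcdef
  have hdiff : ∀ (x : Fin N → Ξ) (i : Fin N) (y : Ξ),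
      |f (Function.update x i y) - f x| ≤ c := by
    intro x i y
    have hupd : (fun j => ψ (Function.update x i y j))
        = Function.update (fun j => ψ (x j)) i (ψ y) := by
      funext j
      exact Function.apply_update (fun _ v => ψ v) x i y j
    have hsub : ∑ j, ψ (x j) - ∑ j, ψ (Function.update x i y j) = ψ (x i) - ψ y := by
      rw [hupd, Finset.sum_update_of_mem (Finset.mem_univ i),
        Finset.sum_eq_sum_sdiff_singleton_add (Finset.mem_univ i) (fun j => ψ (x j))]
      abel
    have hdiffv : (μ0 - (N:ℝ)⁻¹ • ∑ j, ψ (Function.update x i y j))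
        - (μ0 - (N:ℝ)⁻¹ • ∑ j, ψ (x j)) = (N:ℝ)⁻¹ • (ψ (x i) - ψ y) := by
      rw [sub_sub_sub_cancel_left, ← smul_sub, hsub]
    calc |f (Function.update x i y) - f x|
        ≤ ‖(μ0 - (N:ℝ)⁻¹ • ∑ j, ψ (Function.update x i y j))
            - (μ0 - (N:ℝ)⁻¹ • ∑ j, ψ (x j))‖ := abs_norm_sub_norm_le _ _
      _ = (N:ℝ)⁻¹ * ‖ψ (x i) - ψ y‖ := by
          rw [hdiffv, norm_smul, Real.norm_eq_abs, abs_of_nonneg (by positivity)]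
      _ ≤ (N:ℝ)⁻¹ * (2 * Real.sqrt C) := by
          apply mul_le_mul_of_nonneg_left _ (by positivity)
          calc ‖ψ (x i) - ψ y‖ ≤ ‖ψ (x i)‖ + ‖ψ y‖ := norm_sub_le _ _
            _ ≤ 2 * Real.sqrt C := by linarith [hsC (x i), hsC y]
      _ = c := by rw [hcdef]; field_simp
  -- integrals
  have hf_int : Integrable f ν :=
    integrable_of_bddAE hf_sm.aestronglyMeasurable
      (B := B) (fun x => by rw [Real.norm_eq_abs]; exact hB x)
  set m : ℝ := ∫ z, f z ∂ν with hm
  have hm_nonneg : 0 ≤ m := integral_nonneg (fun x => norm_nonneg _)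
  -- f x = N⁻¹ ‖∑ (ψ (x i) - μ0)‖
  have hNsmul : (N:ℝ)⁻¹ • ((N:ℕ) • μ0) = μ0 := by
    rw [← Nat.cast_smul_eq_nsmul ℝ, smul_smul, inv_mul_cancel₀ hNne, one_smul]
  have hfx : ∀ x, f x = (N:ℝ)⁻¹ * ‖∑ i, (ψ (x i) - μ0)‖ := by
    intro x
    have h1 : μ0 - (N:ℝ)⁻¹ • ∑ i, ψ (x i) = -((N:ℝ)⁻¹ • ∑ i, (ψ (x i) - μ0)) := by
      rw [Finset.sum_sub_distrib, Finset.sum_const, Finset.card_univ, Fintype.card_fin,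
        smul_sub, hNsmul, neg_sub]
    rw [hfdef]
    simp only
    rw [h1, norm_neg, norm_smul, Real.norm_eq_abs, abs_of_nonneg (by positivity)]
  have hf2_int : Integrable (fun x => f x^2) ν := by
    have hsm : AEStronglyMeasurable (fun x => f x^2) ν :=
      (hf_sm.pow 2).aestronglyMeasurable
    apply integrable_of_bddAE hsm (B := B^2)
    intro x
    rw [Real.norm_eq_abs, abs_of_nonneg (by positivity)]
    have := hB x
    nlinarith [abs_nonneg (f x), le_abs_self (f x), neg_abs_le (f x)]
  have hvar : m^2 ≤ ∫ x, f x^2 ∂ν := by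
    have h0 : 0 ≤ ∫ x, (f x - m)^2 ∂ν := integral_nonneg (fun x => sq_nonneg _)
    have hexp : ∫ x, (f x - m)^2 ∂ν = (∫ x, f x^2 ∂ν) - m^2 := by
      have hptw : ∀ x, (f x - m)^2 = f x^2 - (2*m)*f x + m^2 := fun x => by ring
      have hA : Integrable (fun x => f x^2 - (2*m)*f x) ν := hf2_int.sub (hf_int.const_mul _)
      calc ∫ x, (f x - m)^2 ∂ν = ∫ x, (f x^2 - (2*m)*f x + m^2) ∂ν := by
            apply integral_congr_ae; filter_upwards with x; rw [hptw x]
        _ = (∫ x, f x^2 ∂ν) - (2*m)*(∫ x, f x ∂ν) + m^2 := by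
            rw [integral_add hA (integrable_const _), integral_sub hf2_int (hf_int.const_mul _),
              integral_const_mul, integral_const]
            simp
        _ = (∫ x, f x^2 ∂ν) - m^2 := by rw [← hm]; ring
    linarith
  have hm2 : ∫ x, f x^2 ∂ν ≤ C/N := by
    have heq : ∀ x, f x^2 = ((N:ℝ)⁻¹)^2 * ‖∑ i, (ψ (x i) - μ0)‖^2 := fun x => by
      rw [hfx x]; ring
    have hbig := sum_sq_bound P₀ ψ hψsm hC.le hψb N
    calc ∫ x, f x^2 ∂ν = ((N:ℝ)⁻¹)^2 * ∫ x, ‖∑ i, (ψ (x i) - μ0)‖^2 ∂ν := by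
          rw [← integral_const_mul]
          apply integral_congr_ae; filter_upwards with x; rw [heq x]
      _ ≤ ((N:ℝ)⁻¹)^2 * (N * C) := by
          apply mul_le_mul_of_nonneg_left _ (by positivity)
          exact hbig
      _ = C/N := by field_simp
  have hm_le : m ≤ Real.sqrt (C/N) := by
    rw [Real.le_sqrt hm_nonneg (by positivity)]
    exact hvar.trans hm2
  -- Chernoff
  set t : ℝ := Real.sqrt (2 * C * Real.log (1/δ) / N) with htdef
  have hlog : 0 ≤ Real.log (1/δ) := Real.log_nonneg (one_le_one_div hδ0 hδ1.le)
  have ht0 : 0 ≤ t := Real.sqrt_nonneg _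
  set lam : ℝ := t * N / C with hlam
  have hlam0 : 0 ≤ lam := by positivity
  have hmgf := mcdiarmid_mgf P₀ N f hf_sm B hB c hdiff lam
  rw [← hν, ← hm] at hmgf
  have hint_exp : Integrable (fun x => Real.exp (lam * (f x - m))) ν := by
    have hsm : AEStronglyMeasurable (fun x => Real.exp (lam * (f x - m))) ν :=
      (Real.continuous_exp.comp_stronglyMeasurable
        ((hf_sm.sub stronglyMeasurable_const).const_mul lam)).aestronglyMeasurable
    apply integrable_of_bddAE hsm (B := Real.exp (lam * (B + |m|)))
    intro x
    rw [Real.norm_eq_abs, Real.abs_exp, Real.exp_le_exp]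
    apply mul_le_mul_of_nonneg_left _ hlam0
    calc f x - m ≤ |f x| + |m| := by
          have := le_abs_self (f x); have := neg_abs_le m; linarith
      _ ≤ B + |m| := by linarith [hB x]
  have hcher := ProbabilityTheory.measure_ge_le_exp_mul_mgf
    (X := fun x => f x - m) (μ := ν) (t := lam) t hlam0 hint_exp
  have hmgf_eq : ProbabilityTheory.mgf (fun x => f x - m) ν lam
      = ∫ x, Real.exp (lam * (f x - m)) ∂ν := rfl
  rw [hmgf_eq] at hcher
  have hδeq : Real.exp (-lam * t) * Real.exp ((N:ℝ) * lam^2 * c^2 / 8) = δ := by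
    rw [← Real.exp_add]
    have ht2 : t^2 = 2 * C * Real.log (1/δ) / N := Real.sq_sqrt (by positivity)
    have hc2 : c^2 = 4 * C / (N:ℝ)^2 := by
      rw [hcdef, div_pow, mul_pow, Real.sq_sqrt hC.le]; norm_num
    have harg : -lam * t + (N:ℝ) * lam^2 * c^2 / 8 = -Real.log (1/δ) := by
      rw [hlam, hc2]
      have h1 : -(t * N / C) * t + (N:ℝ) * (t * N / C)^2 * (4 * C / (N:ℝ)^2) / 8
          = -(t^2 * N / (2*C)) := by
        field_simp
        ring
      rw [h1, ht2]
      field_simp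
    rw [harg, Real.exp_neg, Real.exp_log (by positivity), one_div, inv_inv]
  have hchain : (ν {x | t ≤ f x - m}).toReal ≤ δ := by
    calc (ν {x | t ≤ f x - m}).toReal
        ≤ Real.exp (-lam * t) * ∫ x, Real.exp (lam * (f x - m)) ∂ν := hcher
      _ ≤ Real.exp (-lam * t) * Real.exp ((N:ℝ) * lam^2 * c^2 / 8) := by
          apply mul_le_mul_of_nonneg_left hmgf (Real.exp_nonneg _)
      _ = δ := hδeq
  -- sets
  set A : Set (Fin N → Ξ) := {x | t ≤ f x - m} with hAdef
  have hAmeas : MeasurableSet A :=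
    measurableSet_le measurable_const ((hf_sm.measurable).sub measurable_const)
  set T' : Set (Fin N → Ξ) := {x | f x ≤ Real.sqrt (C/N) + t} with hT'def
  have hsubset : Aᶜ ⊆ T' := by
    intro x hx
    simp only [hAdef, Set.mem_compl_iff, Set.mem_setOf_eq, not_le] at hx
    simp only [hT'def, Set.mem_setOf_eq]
    linarith
  have h1 : 1 - δ ≤ (ν Aᶜ).toReal := by
    rw [prob_compl_eq_one_sub hAmeas, ENNReal.toReal_sub_of_le prob_le_one ENNReal.one_ne_top]
    simp only [ENNReal.toReal_one]
    linarith [hchain]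
  have h2 : (ν Aᶜ).toReal ≤ (ν T').toReal :=
    ENNReal.toReal_mono (measure_ne_top _ _) (measure_mono hsubset)
  -- identify T' with the target set a.e.
  have hco : ∀ i : Fin N, (fun x : Fin N → Ξ => ψ (x i)) =ᵐ[ν] (fun x => φ (x i)) := by
    intro i
    have hnull : P₀ {ξ | ¬ ψ ξ = φ ξ} = 0 := ae_iff.1 hψae
    have hpre : ν (Function.eval i ⁻¹' {ξ | ¬ ψ ξ = φ ξ}) = 0 :=
      Measure.pi_eval_preimage_null (fun _ : Fin N => P₀) hnull
    rw [Filter.EventuallyEq, ae_iff]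
    exact hpre
  have hall : ∀ᵐ x ∂ν, ∀ i, ψ (x i) = φ (x i) := ae_all_iff.2 hco
  have hTT : ν T' = ν {ξs : Fin N → Ξ |
      ‖(∫ ξ, φ ξ ∂P₀) - (N : ℝ)⁻¹ • ∑ i, φ (ξs i)‖
        ≤ Real.sqrt (C / N) + Real.sqrt (2 * C * Real.log (1 / δ) / N)} := by
    apply measure_congr
    filter_upwards [hall] with x hx
    have hsum : ∑ i, ψ (x i) = ∑ i, φ (x i) := Finset.sum_congr rfl (fun i _ => hx i)
    have hfx2 : f x = ‖(∫ ξ, φ ξ ∂P₀) - (N:ℝ)⁻¹ • ∑ i, φ (x i)‖ := by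
      rw [hfdef]; simp only; rw [hsum, hμeq]
    show (f x ≤ Real.sqrt (C/N) + t)
        = (‖(∫ ξ, φ ξ ∂P₀) - (N : ℝ)⁻¹ • ∑ i, φ (x i)‖
            ≤ Real.sqrt (C / N) + Real.sqrt (2 * C * Real.log (1 / δ) / N))
    rw [hfx2, htdef]
  calc 1 - δ ≤ (ν Aᶜ).toReal := h1
    _ ≤ (ν T').toReal := h2
    _ = _ := by rw [hTT]
end
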